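/- arXiv:2401.04936 — 7 statements merged into one kernel-verified Lean document; each statement's English description precedes it below -/
import Mathlib

section
/- Let k ≥ 1 be an integer and set p = 2k − 1. Fix h > 0, x̃ ∈ ℝ, and the 2k equispaced nodes y_j = x̃ + j·h for j = −k, …, k − 1. Let e : [x̃ − k·h, x̃ + (k−1)·h] → ℝ be p-times continuously differentiable, let E(x) := ∫_{x̃ − k·h}^{x} e(s) ds be its primitive, and let Q be the unique polynomial of degree at most p interpolating E at the 2k nodes y_{−k}, …, y_{k−1}. Let ε ∈ [0, 1] and set the departure point ξ̃ := x̃ − ε·h. Then there exists φ ∈ (x̃ − k·h, x̃ + (k−1)·h) such that the semi-Lagrangian numerical flux error satisfies ∫_{ξ̃}^{x̃} (Q′(x) − e(x)) dx = h^{p+1} · g_{p+1}(ε) · e^{(p)}(φ), where g_{p+1}(z) := (1/(p+1)!) · ∏_{j=−k}^{k−1} (z + j). -/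
open Set Polynomial intervalIntegral Topology

lemma rolle_step {a b : ℝ} {g : ℝ → ℝ} (hg : ContinuousOn g (Icc a b))
    {m : ℕ} (x : Fin (m + 2) → ℝ) (hmono : StrictMono x)
    (hmem : ∀ i, x i ∈ Icc a b) (hz : ∀ i, g (x i) = 0) :
    ∃ y : Fin (m + 1) → ℝ, StrictMono y ∧
      (∀ i, y i ∈ Ioo (x 0) (x (Fin.last (m + 1)))) ∧
      ∀ i, derivWithin g (Icc a b) (y i) = 0 := by
  have key : ∀ i : Fin (m + 1), ∃ c ∈ Ioo (x i.castSucc) (x i.succ), deriv g c = 0 := by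
    intro i
    refine exists_deriv_eq_zero (hmono (Fin.castSucc_lt_succ (i := i))) (hg.mono ?_)
      ((hz _).trans (hz _).symm)
    exact Icc_subset_Icc (hmem i.castSucc).1 (hmem i.succ).2
  choose c hc hc' using key
  have hI : ∀ i : Fin (m + 1), c i ∈ Ioo (x 0) (x (Fin.last (m + 1))) := by
    intro i
    refine ⟨lt_of_le_of_lt (hmono.monotone (Fin.zero_le _)) (hc i).1,
      lt_of_lt_of_le (hc i).2 (hmono.monotone (Fin.le_last _))⟩
  have hmono' : StrictMono c := by
    intro i j hij
    calc c i < x i.succ := (hc i).2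
    _ ≤ x j.castSucc := by
        apply hmono.monotone
        rw [Fin.le_def, Fin.val_succ, Fin.coe_castSucc]
        exact Fin.lt_def.mp hij
    _ < c j := (hc j).1
  refine ⟨c, hmono', hI, fun i => ?_⟩
  have hci : c i ∈ Ioo a b :=
    ⟨lt_of_le_of_lt (hmem i.castSucc).1 (hc i).1, lt_of_lt_of_le (hc i).2 (hmem i.succ).2⟩
  rw [derivWithin_of_mem_nhds (Icc_mem_nhds hci.1 hci.2)]
  exact hc' i

lemma iterated_rolle_aux : ∀ (m : ℕ) {a b : ℝ}, a < b → ∀ {g : ℝ → ℝ},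
    ContDiffOn ℝ m g (Icc a b) →
    ∀ (x : Fin (m + 1) → ℝ), StrictMono x → (∀ i, x i ∈ Icc a b) → (∀ i, g (x i) = 0) →
    ∃ c ∈ Icc (x 0) (x (Fin.last m)), iteratedDerivWithin m g (Icc a b) c = 0
  | 0, a, b, hab, g, hg, x, hmono, hmem, hz =>
      ⟨x 0, ⟨le_refl _, le_refl _⟩, by simpa using hz 0⟩
  | (m + 1), a, b, hab, g, hg, x, hmono, hmem, hz => by
      obtain ⟨y, hymono, hyI, hyz⟩ := rolle_step hg.continuousOn x hmono hmem hz
      have hymem : ∀ i, y i ∈ Icc a b := fun i =>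
        ⟨le_of_lt (lt_of_le_of_lt (hmem 0).1 (hyI i).1),
         le_of_lt (lt_of_lt_of_le (hyI i).2 (hmem _).2)⟩
      have hg' : ContDiffOn ℝ m (derivWithin g (Icc a b)) (Icc a b) := by
        refine hg.derivWithin (uniqueDiffOn_Icc hab) ?_
        exact_mod_cast le_of_eq (by push_cast; ring)
      obtain ⟨c, hcI, hc⟩ := iterated_rolle_aux m hab hg' y hymono hymem hyz
      refine ⟨c, ⟨le_of_lt (lt_of_lt_of_le (hyI 0).1 hcI.1),
        le_of_lt (lt_of_le_of_lt hcI.2 (hyI _).2)⟩, ?_⟩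
      have hcab : c ∈ Icc a b := ⟨le_trans (hymem 0).1 hcI.1, le_trans hcI.2 (hymem _).2⟩
      rw [iteratedDerivWithin_succ']
      exact hc

lemma iterated_rolle {a b : ℝ} (hab : a < b) {m : ℕ} {g : ℝ → ℝ}
    (hg : ContDiffOn ℝ (m + 1 : ℕ) g (Icc a b))
    (x : Fin (m + 2) → ℝ) (hmono : StrictMono x)
    (hmem : ∀ i, x i ∈ Icc a b) (hz : ∀ i, g (x i) = 0) :
    ∃ c ∈ Ioo a b, iteratedDerivWithin (m + 1) g (Icc a b) c = 0 := by
  obtain ⟨y, hymono, hyI, hyz⟩ := rolle_step hg.continuousOn x hmono hmem hz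
  have hymem : ∀ i, y i ∈ Icc a b := fun i =>
    ⟨le_of_lt (lt_of_le_of_lt (hmem 0).1 (hyI i).1),
     le_of_lt (lt_of_lt_of_le (hyI i).2 (hmem _).2)⟩
  have hg' : ContDiffOn ℝ m (derivWithin g (Icc a b)) (Icc a b) := by
    refine hg.derivWithin (uniqueDiffOn_Icc hab) ?_
    exact_mod_cast le_of_eq (by push_cast; ring)
  obtain ⟨c, hcI, hc⟩ := iterated_rolle_aux m hab hg' y hymono hymem hyz
  have hcIoo : c ∈ Ioo a b :=
    ⟨lt_of_le_of_lt (hmem 0).1 (lt_of_lt_of_le (hyI 0).1 hcI.1),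
     lt_of_le_of_lt hcI.2 (lt_of_lt_of_le (hyI _).2 (hmem _).2)⟩
  refine ⟨c, hcIoo, ?_⟩
  rw [iteratedDerivWithin_succ']
  exact hc

lemma poly_iteratedDerivWithin {s : Set ℝ} (hs : UniqueDiffOn ℝ s) (n : ℕ) :
    ∀ (P : ℝ[X]), ∀ x ∈ s, iteratedDerivWithin n (fun t => P.eval t) s x
      = (derivative^[n] P).eval x := by
  induction n with
  | zero => intro P x hx; simp
  | succ n IH =>
    intro P x hx
    rw [iteratedDerivWithin_succ']
    have heq : Set.EqOn (derivWithin (fun t => P.eval t) s)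
        (fun t => (derivative P).eval t) s := by
      intro y hy
      exact ((P.hasDerivAt y).hasDerivWithinAt.derivWithin (hs.uniqueDiffWithinAt hy))
    rw [iteratedDerivWithin_congr heq hx, IH (derivative P) x hx,
      ← Function.iterate_succ_apply]

lemma deriv_within_eq_e {s : Set ℝ} (hs : UniqueDiffOn ℝ s) {E e : ℝ → ℝ}
    (hE : ∀ x ∈ s, HasDerivWithinAt E (e x) s x) (n : ℕ) {x : ℝ} (hx : x ∈ s) :
    iteratedDerivWithin (n + 1) E s x = iteratedDerivWithin n e s x := by
  rw [iteratedDerivWithin_succ']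
  exact iteratedDerivWithin_congr
    (fun y hy => (hE y hy).derivWithin (hs.uniqueDiffWithinAt hy)) hx

lemma poly_contDiff (p : ℝ[X]) {n : WithTop ℕ∞} : ContDiff ℝ n fun x => p.eval x := by
  induction p using Polynomial.induction_on' with
  | add p q hp hq => simpa [eval_add] using hp.add hq
  | monomial k c => simpa [eval_monomial] using contDiff_const.mul (contDiff_id.pow k)

lemma nodePoly_iterate {ι : Type*} (c : ι → ℝ) (s : Finset ι) {n : ℕ} (hcard : s.card = n) :
    derivative^[n] (∏ j ∈ s, (X - C (c j))) = C ((Nat.factorial n) : ℝ) := by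
  set W : ℝ[X] := ∏ j ∈ s, (X - C (c j)) with hW
  have hmonic : W.Monic := monic_prod_of_monic _ _ fun j _ => monic_X_sub_C _
  have hdeg : W.natDegree = n := by
    rw [hW, natDegree_prod_of_monic _ _ fun j _ => monic_X_sub_C _]
    simp [hcard]
  have h0 : (derivative^[n] W).natDegree ≤ 0 := by
    have := natDegree_iterate_derivative W n
    omega
  rw [Polynomial.eq_C_of_natDegree_le_zero h0, coeff_iterate_derivative]
  have : W.coeff (0 + n) = 1 := by
    have := hmonic.coeff_natDegree
    rw [hdeg] at this
    rwa [zero_add]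
  rw [zero_add] at this ⊢
  rw [this]
  simp [Nat.descFactorial_self]

/-- Error of the semi-Lagrangian numerical flux: the reconstruction `Q'` is the
derivative of the polynomial interpolant of the primitive `E` of `e` at the
`2k` interfaces of a stencil of `p = 2k - 1` cells. -/
theorem semiLagrangian_flux_error
    (k : ℕ) (hk : 1 ≤ k) (h xt : ℝ) (hh : 0 < h)
    (e : ℝ → ℝ)
    (he : ContDiffOn ℝ (2 * k - 1 : ℕ) e (Icc (xt - k * h) (xt + ((k : ℝ) - 1) * h)))
    (E : ℝ → ℝ) (hE : ∀ x, E x = ∫ s in (xt - k * h)..x, e s)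
    (Q : Polynomial ℝ) (hdeg : Q.natDegree ≤ 2 * k - 1)
    (hinterp : ∀ j ∈ Finset.Icc (-(k : ℤ)) ((k : ℤ) - 1),
      Q.eval (xt + (j : ℝ) * h) = E (xt + (j : ℝ) * h))
    (ε : ℝ) (hε : ε ∈ Icc (0 : ℝ) 1) :
    ∃ φ ∈ Ioo (xt - k * h) (xt + ((k : ℝ) - 1) * h),
      (∫ x in (xt - ε * h)..xt, ((Polynomial.derivative Q).eval x - e x))
        = h ^ ((2 * k - 1 : ℕ) + 1)
          * ((1 / (Nat.factorial ((2 * k - 1) + 1) : ℝ))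
              * ∏ j ∈ Finset.Icc (-(k : ℤ)) ((k : ℤ) - 1), (ε + (j : ℝ)))
          * iteratedDerivWithin (2 * k - 1) e
              (Icc (xt - k * h) (xt + ((k : ℝ) - 1) * h)) φ := by
  have hk1 : (1 : ℝ) ≤ (k : ℝ) := by exact_mod_cast hk
  set a : ℝ := xt - k * h with ha
  set b : ℝ := xt + ((k : ℝ) - 1) * h with hb
  set S : Set ℝ := Icc a b with hS
  set ξ : ℝ := xt - ε * h with hξdef
  set J : Finset ℤ := Finset.Icc (-(k : ℤ)) ((k : ℤ) - 1) with hJ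
  set ν : ℤ → ℝ := fun j => xt + (j : ℝ) * h with hν
  have hab : a < b := by
    rw [ha, hb]; nlinarith
  have hUD : UniqueDiffOn ℝ S := uniqueDiffOn_Icc hab
  have hξS : ξ ∈ S := by
    constructor
    · rw [ha, hξdef]; nlinarith [hε.1, hε.2]
    · rw [hb, hξdef]; nlinarith [hε.1, hε.2]
  have hxtS : xt ∈ S := by
    constructor
    · rw [ha]; nlinarith
    · rw [hb]; nlinarith
  have hνS : ∀ j ∈ J, ν j ∈ S := by
    intro j hj
    rw [hJ, Finset.mem_Icc] at hj
    have h1 : -(k : ℝ) ≤ (j : ℝ) := by exact_mod_cast hj.1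
    have h2 : (j : ℝ) ≤ (k : ℝ) - 1 := by
      have : ((j : ℝ)) ≤ ((k : ℤ) - 1 : ℤ) := by exact_mod_cast hj.2
      push_cast at this; linarith
    constructor
    · show xt - (k : ℝ) * h ≤ xt + (j : ℝ) * h
      nlinarith
    · show xt + (j : ℝ) * h ≤ xt + ((k : ℝ) - 1) * h
      nlinarith
  have hecont : ContinuousOn e S := he.continuousOn
  have hEderiv : ∀ x ∈ S, HasDerivWithinAt E (e x) S x := by
    intro x hx
    haveI : Fact (x ∈ Icc a b) := ⟨hx⟩
    have hint : IntervalIntegrable e MeasureTheory.volume a x := by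
      apply ContinuousOn.intervalIntegrable
      apply hecont.mono
      rw [uIcc_of_le hx.1]
      exact Icc_subset_Icc le_rfl hx.2
    have hmeas : StronglyMeasurableAtFilter e (𝓝[S] x) MeasureTheory.volume :=
      ⟨S, self_mem_nhdsWithin, hecont.aestronglyMeasurable measurableSet_Icc⟩
    have key := intervalIntegral.integral_hasDerivWithinAt_right (s := Icc a b) (t := Icc a b)
      hint hmeas (hecont x hx)
    have hEeq : E = fun u => ∫ s in a..u, e s := funext hE
    rw [hEeq]
    exact key
  have hEdiff : DifferentiableOn ℝ E S := fun x hx =>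
    (hEderiv x hx).differentiableWithinAt
  have hderivE : Set.EqOn (derivWithin E S) e S := fun y hy =>
    (hEderiv y hy).derivWithin (hUD.uniqueDiffWithinAt hy)
  have hEcd : ContDiffOn ℝ ((2 * k - 1 : ℕ) + 1 : ℕ) E S := by
    have : ContDiffOn ℝ (((2 * k - 1 : ℕ) : WithTop ℕ∞) + 1) E S := by
      refine (contDiffOn_succ_iff_derivWithin hUD).2 ⟨hEdiff, by simp, ?_⟩
      exact he.congr fun y hy => hderivE hy
    exact_mod_cast this
  -- LHS computation
  have h0J : (0 : ℤ) ∈ J := by rw [hJ, Finset.mem_Icc]; omega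
  have hQxt : Q.eval xt = E xt := by
    have := hinterp 0 h0J
    simpa using this
  have hLHS : (∫ x in ξ..xt, ((Polynomial.derivative Q).eval x - e x))
      = E ξ - Q.eval ξ := by
    have hQint : IntervalIntegrable (fun x => (Polynomial.derivative Q).eval x)
        MeasureTheory.volume ξ xt := ((poly_contDiff _ (n := 1)).continuous).intervalIntegrable _ _
    have heint : IntervalIntegrable e MeasureTheory.volume ξ xt := by
      apply ContinuousOn.intervalIntegrable
      apply hecont.mono
      rw [uIcc_of_le (by rw [hξdef]; nlinarith [hε.1, hε.2] : ξ ≤ xt)]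
      exact Icc_subset_Icc hξS.1 hxtS.2
    rw [intervalIntegral.integral_sub hQint heint]
    have h1 : (∫ x in ξ..xt, (Polynomial.derivative Q).eval x)
        = Q.eval xt - Q.eval ξ := by
      apply intervalIntegral.integral_deriv_eq_sub' (fun x => Q.eval x)
      · funext x; exact Polynomial.deriv Q
      · intro x _; exact Q.differentiable_aeval x
      · exact ((poly_contDiff _ (n := 1)).continuous).continuousOn
    have h2 : (∫ x in ξ..xt, e x) = E xt - E ξ := by
      rw [hE, hE]
      refine (intervalIntegral.integral_interval_sub_left ?_ ?_).symm
      · apply ContinuousOn.intervalIntegrable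
        apply hecont.mono
        rw [uIcc_of_le hxtS.1]
        exact Icc_subset_Icc le_rfl hxtS.2
      · apply ContinuousOn.intervalIntegrable
        apply hecont.mono
        rw [uIcc_of_le hξS.1]
        exact Icc_subset_Icc le_rfl hξS.2
    rw [h1, h2]
    linarith [hQxt]
  have hcard : J.card = 2 * k := by
    rw [hJ, Int.card_Icc]
    omega
  by_cases hprod : (∏ j ∈ J, (ε + (j : ℝ))) = 0
  · -- the departure point is a node
    obtain ⟨j₀, hj₀J, hj₀⟩ := Finset.prod_eq_zero_iff.1 hprod
    have hξnode : ξ = ν j₀ := by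
      rw [hξdef, hν]
      have : ε = -(j₀ : ℝ) := by linarith
      rw [this]; ring
    have hFξ : E ξ - Q.eval ξ = 0 := by
      rw [hξnode]
      have := hinterp j₀ hj₀J
      rw [hν]
      simp only []
      rw [this]; ring
    refine ⟨(a + b) / 2, ⟨by linarith, by linarith⟩, ?_⟩
    rw [hLHS, hFξ, hprod]
    ring
  · -- main case: the departure point is not a node
    set W : ℝ[X] := ∏ j ∈ J, (X - C (ν j)) with hW
    have hWeval : ∀ t : ℝ, W.eval t = ∏ j ∈ J, (t - ν j) := by
      intro t; rw [hW, eval_prod]; simp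
    have hWξ : W.eval ξ = h ^ ((2 * k - 1) + 1) * ∏ j ∈ J, (ε + (j : ℝ)) := by
      rw [hWeval]
      have : ∀ j ∈ J, ξ - ν j = (-h) * (ε + (j : ℝ)) := by
        intro j _; rw [hξdef, hν]; ring
      have hcard' : J.card = (2 * k - 1) + 1 := by omega
      rw [Finset.prod_congr rfl this, Finset.prod_mul_distrib, Finset.prod_const, hcard']
      congr 1
      have h2k : (2 * k - 1) + 1 = 2 * k := by omega
      rw [h2k, (even_two_mul k).neg_pow]
    -- zeros
    set F : ℝ → ℝ := fun t => E t - Q.eval t with hF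
    set G : ℝ → ℝ := fun t => W.eval ξ * F t - F ξ * W.eval t with hG
    have hGz_node : ∀ j ∈ J, G (ν j) = 0 := by
      intro j hj
      have h1 : F (ν j) = 0 := by
        rw [hF]; simp only []
        rw [← hinterp j hj]
        rw [hν]; ring
      have h2 : W.eval (ν j) = 0 := by
        rw [hWeval]
        exact Finset.prod_eq_zero hj (by ring)
      rw [hG]; simp only []
      rw [h1, h2]; ring
    have hGξ : G ξ = 0 := by rw [hG]; ring
    -- the finset of 2k+1 zeros
    have hνinj : Set.InjOn ν ↑J := by
      intro i _ j _ hij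
      rw [hν] at hij
      simp only [] at hij
      have : (i : ℝ) = (j : ℝ) := by
        have := mul_right_cancel₀ (ne_of_gt hh) (by linarith : (i : ℝ) * h = (j : ℝ) * h)
        exact this
      exact_mod_cast this
    have hξnotnode : ξ ∉ J.image ν := by
      intro hmem
      obtain ⟨j, hjJ, hjξ⟩ := Finset.mem_image.1 hmem
      apply hprod
      refine Finset.prod_eq_zero hjJ ?_
      rw [hν] at hjξ; simp only [] at hjξ
      rw [hξdef] at hjξ
      nlinarith [hjξ]
    set Z : Finset ℝ := insert ξ (J.image ν) with hZ
    have hZcard : Z.card = (2 * k - 1) + 2 := by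
      rw [hZ, Finset.card_insert_of_notMem hξnotnode, Finset.card_image_of_injOn hνinj, hcard]
      omega
    have hZsub : ∀ z ∈ Z, z ∈ S := by
      intro z hz
      rw [hZ, Finset.mem_insert] at hz
      rcases hz with rfl | hz
      · exact hξS
      · obtain ⟨j, hjJ, rfl⟩ := Finset.mem_image.1 hz
        exact hνS j hjJ
    have hZzero : ∀ z ∈ Z, G z = 0 := by
      intro z hz
      rw [hZ, Finset.mem_insert] at hz
      rcases hz with rfl | hz
      · exact hGξ
      · obtain ⟨j, hjJ, rfl⟩ := Finset.mem_image.1 hz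
        exact hGz_node j hjJ
    -- enumerate the zeros monotonically
    set x : Fin ((2 * k - 1) + 2) → ℝ := fun i => ((Z.orderIsoOfFin hZcard i : Z) : ℝ) with hx
    have hxmono : StrictMono x := fun i j hij =>
      Subtype.coe_lt_coe.2 ((Z.orderIsoOfFin hZcard).strictMono hij)
    have hxmem : ∀ i, x i ∈ S := fun i => hZsub _ (Z.orderIsoOfFin hZcard i).2
    have hxzero : ∀ i, G (x i) = 0 := fun i => hZzero _ (Z.orderIsoOfFin hZcard i).2
    -- smoothness of G
    have hGcd : ContDiffOn ℝ (((2 * k - 1 : ℕ) + 1 : ℕ)) G S := by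
      refine ContDiffOn.sub (contDiffOn_const.mul ?_) (contDiffOn_const.mul ?_)
      · exact hEcd.sub (poly_contDiff Q).contDiffOn
      · exact (poly_contDiff W).contDiffOn
    obtain ⟨φ, hφIoo, hφ⟩ := iterated_rolle hab hGcd x hxmono hxmem hxzero
    have hφS : φ ∈ S := Ioo_subset_Icc_self hφIoo
    refine ⟨φ, hφIoo, ?_⟩
    -- expand the iterated derivative of G at φ
    set n : ℕ := (2 * k - 1) + 1 with hn
    set D : ℝ := iteratedDerivWithin (2 * k - 1) e S φ with hD
    have hFcd : ContDiffOn ℝ (n : ℕ) F S := hEcd.sub (poly_contDiff Q).contDiffOn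
    have hiterF : iteratedDerivWithin n F S φ = D := by
      have hsub : iteratedDerivWithin n (E - fun t => Q.eval t) S φ
          = iteratedDerivWithin n E S φ - iteratedDerivWithin n (fun t => Q.eval t) S φ :=
        iteratedDerivWithin_sub hφS hUD (hEcd φ hφS) ((poly_contDiff Q).contDiffOn φ hφS)
      have hQ0 : iteratedDerivWithin n (fun t => Q.eval t) S φ = 0 := by
        rw [poly_iteratedDerivWithin hUD n Q φ hφS,
          Polynomial.iterate_derivative_eq_zero (by omega : Q.natDegree < n)]
        simp
      have hEit : iteratedDerivWithin n E S φ = D := by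
        rw [hn, hD]
        exact deriv_within_eq_e hUD hEderiv (2 * k - 1) hφS
      have : F = E - fun t => Q.eval t := by funext t; rw [hF]; simp [Pi.sub_apply]
      rw [this, hsub, hQ0, hEit, sub_zero]
    have hiterW : iteratedDerivWithin n (fun t => W.eval t) S φ = (Nat.factorial n : ℝ) := by
      rw [poly_iteratedDerivWithin hUD n W φ hφS, hW,
        nodePoly_iterate ν J (by omega : J.card = n)]
      simp
    have hexpand : iteratedDerivWithin n G S φ
        = W.eval ξ * D - F ξ * (Nat.factorial n : ℝ) := by
      have hsplit : G = (fun t => W.eval ξ * F t) - (fun t => F ξ * W.eval t) := by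
        funext t; rw [hG]; simp [Pi.sub_apply]
      rw [hsplit,
        iteratedDerivWithin_sub hφS hUD (contDiffOn_const.mul hFcd φ hφS)
          (contDiffOn_const.mul (poly_contDiff W).contDiffOn φ hφS),
        iteratedDerivWithin_const_mul hφS hUD (W.eval ξ) (hFcd φ hφS),
        iteratedDerivWithin_const_mul hφS hUD (F ξ) ((poly_contDiff W).contDiffOn φ hφS),
        hiterF, hiterW]
    -- conclude
    rw [hexpand] at hφ
    have hfacne : (Nat.factorial n : ℝ) ≠ 0 := by
      exact_mod_cast Nat.factorial_ne_zero n
    have hFξ : F ξ = W.eval ξ * D / (Nat.factorial n : ℝ) := by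
      field_simp at hφ ⊢
      linarith
    have hLHS' : (∫ x in ξ..xt, ((Polynomial.derivative Q).eval x - e x)) = F ξ := by
      rw [hLHS, hF]
    rw [hLHS', hFξ, hWξ]
    rw [hn]
    field_simp
end

section
/- Let N ≥ 1, let L and E be real N×N matrices, let q ≥ 1 be an integer, and let c ∈ ℝ. For δt > 0 define the explicit Runge–Kutta time-stepping matrix Φ(δt) := Σ_{j=0}^{q} (δt)^j L^j / j! + (1/(q+1)! + c)·(δt)^{q+1} L^{q+1} (so that Φ(δt) = exp(δt·L) + c·(δt·L)^{q+1} + O((δt·L)^{q+2})). Then there exists a constant C > 0, depending only on q and c, such that for every δt > 0 with δt·(‖L‖ + ‖E‖) ≤ 1 (operator norm), the one-step truncation-error operator satisfies ‖ I − Φ(δt)·exp(−δt·(L + E)) − δt·E + c·(δt)^{q+1} L^{q+1} ‖ ≤ C·( δt²·‖E‖·(‖L‖ + ‖E‖) + δt^{q+2}·‖L‖^{q+2} ). -/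
open scoped Matrix.Norms.L2Operator
open NormedSpace

section Helpers

variable {𝔸 : Type*} [NormedRing 𝔸] [NormedAlgebra ℝ 𝔸] [CompleteSpace 𝔸]

lemma two_pow_le_succ_factorial (n : ℕ) : (2:ℝ)^n ≤ (Nat.factorial (n+1) : ℝ) := by
  have := @Nat.factorial_mul_pow_le_factorial 1 n
  simp [Nat.factorial] at this
  calc (2:ℝ)^n = ((2^n : ℕ) : ℝ) := by push_cast; ring
  _ ≤ _ := by
    have h2 : 2^n ≤ (n+1).factorial := by simpa [Nat.add_comm] using this
    exact_mod_cast h2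

lemma term_norm_le (x : 𝔸) (hx : ‖x‖ ≤ 1) (k : ℕ) (hk : 1 ≤ k) (n : ℕ) :
    ‖((Nat.factorial (n + k) : ℝ))⁻¹ • x ^ (n + k)‖ ≤ ‖x‖ ^ k * (1/2) ^ n := by
  have h0 : (0:ℝ) ≤ ‖x‖ := norm_nonneg x
  rw [norm_smul, Real.norm_eq_abs, abs_inv, abs_of_nonneg (by positivity)]
  have h1 : ‖x ^ (n + k)‖ ≤ ‖x‖ ^ (n + k) := norm_pow_le' x (by omega)
  have h2 : ‖x‖ ^ (n + k) ≤ ‖x‖ ^ k := by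
    rw [pow_add]
    nlinarith [(pow_le_one₀ h0 hx : ‖x‖^n ≤ 1), pow_nonneg h0 k, pow_nonneg h0 n]
  have h3 : ((Nat.factorial (n + k) : ℝ))⁻¹ ≤ (1/2) ^ n := by
    rw [one_div, inv_pow]
    rw [inv_le_inv₀ (by positivity) (by positivity)]
    calc (2:ℝ)^n ≤ (Nat.factorial (n+1) : ℝ) := two_pow_le_succ_factorial n
    _ ≤ _ := by exact_mod_cast Nat.factorial_le (by omega)
  calc ((Nat.factorial (n + k) : ℝ))⁻¹ * ‖x ^ (n + k)‖
      ≤ (1/2) ^ n * ‖x‖ ^ k := by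
        apply mul_le_mul h3 (h1.trans h2) (norm_nonneg _) (by positivity)
  _ = ‖x‖ ^ k * (1/2) ^ n := mul_comm _ _

lemma exp_tail_bound (x : 𝔸) (hx : ‖x‖ ≤ 1) (k : ℕ) (hk : 1 ≤ k) :
    ‖NormedSpace.exp x - ∑ j ∈ Finset.range k, ((Nat.factorial j : ℝ))⁻¹ • x ^ j‖ ≤ 2 * ‖x‖ ^ k := by
  have hsum : Summable (fun n => ((Nat.factorial n : ℝ))⁻¹ • x ^ n) := expSeries_summable' x
  have hsplit := Summable.sum_add_tsum_nat_add k hsum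
  have hexp : NormedSpace.exp x = ∑' n, ((Nat.factorial n : ℝ))⁻¹ • x ^ n := by
    rw [exp_eq_tsum (𝕂 := ℝ)]
  have heq : NormedSpace.exp x - ∑ j ∈ Finset.range k, ((Nat.factorial j : ℝ))⁻¹ • x ^ j
      = ∑' n, ((Nat.factorial (n + k) : ℝ))⁻¹ • x ^ (n + k) := by
    rw [hexp, ← hsplit]; abel
  rw [heq]
  have hgs : Summable (fun n : ℕ => ‖x‖ ^ k * (1/2) ^ n) :=
    (summable_geometric_of_lt_one (by norm_num) (by norm_num)).mul_left _
  have hns : Summable (fun n => ‖((Nat.factorial (n + k) : ℝ))⁻¹ • x ^ (n + k)‖) :=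
    Summable.of_nonneg_of_le (fun n => norm_nonneg _) (term_norm_le x hx k hk) hgs
  calc ‖∑' n, ((Nat.factorial (n + k) : ℝ))⁻¹ • x ^ (n + k)‖
      ≤ ∑' n, ‖((Nat.factorial (n + k) : ℝ))⁻¹ • x ^ (n + k)‖ := norm_tsum_le_tsum_norm hns
  _ ≤ ∑' n : ℕ, ‖x‖ ^ k * (1/2) ^ n := Summable.tsum_le_tsum (term_norm_le x hx k hk) hns hgs
  _ = ‖x‖ ^ k * 2 := by
      rw [tsum_mul_left, tsum_geometric_of_lt_one (by norm_num) (by norm_num)]; norm_num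
  _ = 2 * ‖x‖ ^ k := mul_comm _ _

end Helpers

section Helpers2
variable {𝔸 : Type*} [NormedRing 𝔸] [NormedAlgebra ℝ 𝔸] [CompleteSpace 𝔸]

omit [NormedAlgebra ℝ 𝔸] [CompleteSpace 𝔸] in
lemma pow_sub_pow_norm_le (X Y : 𝔸) (m : ℝ) (hX : ‖X‖ ≤ m) (hY : ‖Y‖ ≤ m) :
    ∀ j : ℕ, ‖Y ^ (j+1) - X ^ (j+1)‖ ≤ ((j:ℝ)+1) * ‖Y - X‖ * m ^ j := by
  intro j
  have hm0 : 0 ≤ m := le_trans (norm_nonneg X) hX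
  induction j with
  | zero => simp
  | succ j ih =>
    have key : Y ^ (j+1+1) - X ^ (j+1+1) = Y ^ (j+1) * (Y - X) + (Y ^ (j+1) - X ^ (j+1)) * X := by
      rw [pow_succ, pow_succ]
      noncomm_ring
    have h1 : ‖Y ^ (j+1) * (Y - X)‖ ≤ m ^ (j+1) * ‖Y - X‖ := by
      calc ‖Y ^ (j+1) * (Y - X)‖ ≤ ‖Y ^ (j+1)‖ * ‖Y - X‖ := norm_mul_le _ _
      _ ≤ m ^ (j+1) * ‖Y - X‖ := by
          apply mul_le_mul_of_nonneg_right _ (norm_nonneg _)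
          calc ‖Y ^ (j+1)‖ ≤ ‖Y‖ ^ (j+1) := norm_pow_le' Y (by omega)
          _ ≤ m ^ (j+1) := pow_le_pow_left₀ (norm_nonneg _) hY _
    have h2 : ‖(Y ^ (j+1) - X ^ (j+1)) * X‖ ≤ (((j:ℝ)+1) * ‖Y - X‖ * m ^ j) * m := by
      calc ‖(Y ^ (j+1) - X ^ (j+1)) * X‖ ≤ ‖Y ^ (j+1) - X ^ (j+1)‖ * ‖X‖ := norm_mul_le _ _
      _ ≤ (((j:ℝ)+1) * ‖Y - X‖ * m ^ j) * m := by
          apply mul_le_mul ih hX (norm_nonneg _)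
          positivity
    have : ‖Y ^ (j+1+1) - X ^ (j+1+1)‖ ≤ (((j:ℝ)+1)+1) * ‖Y - X‖ * m ^ (j+1) := by
      calc ‖Y ^ (j+1+1) - X ^ (j+1+1)‖ ≤ ‖Y ^ (j+1) * (Y - X)‖ + ‖(Y ^ (j+1) - X ^ (j+1)) * X‖ := by
            rw [key]; exact norm_add_le _ _
      _ ≤ m ^ (j+1) * ‖Y - X‖ + (((j:ℝ)+1) * ‖Y - X‖ * m ^ j) * m := add_le_add h1 h2
      _ = (((j:ℝ)+1)+1) * ‖Y - X‖ * m ^ (j+1) := by ring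
    convert this using 2
    push_cast
    ring

lemma exp_sub_exp_bound (X Y : 𝔸) (m : ℝ) (hX : ‖X‖ ≤ m) (hY : ‖Y‖ ≤ m) (hm : m ≤ 1) :
    ‖NormedSpace.exp Y - NormedSpace.exp X - (Y - X)‖ ≤ 2 * (‖Y - X‖ * m) := by
  have hm0 : 0 ≤ m := le_trans (norm_nonneg X) hX
  set g : ℕ → 𝔸 := fun n => ((Nat.factorial n : ℝ))⁻¹ • (Y ^ n - X ^ n) with hg
  have hgsumm : Summable g := by
    have := (expSeries_summable' (𝕂 := ℝ) Y).sub (expSeries_summable' (𝕂 := ℝ) X)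
    simpa [g, smul_sub] using this
  have hdiff : NormedSpace.exp Y - NormedSpace.exp X = ∑' n, g n := by
    simp only [exp_eq_tsum (𝕂 := ℝ)]
    rw [← Summable.tsum_sub (expSeries_summable' (𝕂 := ℝ) Y) (expSeries_summable' (𝕂 := ℝ) X)]
    simp [g, smul_sub]
  have hsplit := Summable.sum_add_tsum_nat_add 2 hgsumm
  have hsum2 : ∑ i ∈ Finset.range 2, g i = Y - X := by
    simp [g, Finset.sum_range_succ]
  have heq : NormedSpace.exp Y - NormedSpace.exp X - (Y - X) = ∑' n, g (n + 2) := by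
    rw [hdiff, ← hsplit, hsum2]; abel
  have hterm : ∀ n : ℕ, ‖g (n + 2)‖ ≤ (‖Y - X‖ * m) * (1/2)^n := by
    intro n
    have hp := pow_sub_pow_norm_le X Y m hX hY (n+1)
    have hfac : ((Nat.factorial (n+2) : ℝ)) = ((n:ℝ)+2) * (Nat.factorial (n+1) : ℝ) := by
      rw [Nat.factorial_succ]; push_cast; ring
    have hfpos : (0:ℝ) < (Nat.factorial (n+2) : ℝ) := by positivity
    have h1 : ‖g (n+2)‖ = ((Nat.factorial (n+2) : ℝ))⁻¹ * ‖Y ^ (n+2) - X ^ (n+2)‖ := by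
      rw [hg]; simp [norm_smul, abs_of_nonneg (le_of_lt (inv_pos.mpr hfpos))]
    have h2 : ‖g (n+2)‖ ≤ ((Nat.factorial (n+2) : ℝ))⁻¹ * (((n:ℝ)+2) * ‖Y - X‖ * m ^ (n+1)) := by
      rw [h1]
      apply mul_le_mul_of_nonneg_left _ (le_of_lt (inv_pos.mpr hfpos))
      convert hp using 3
      · rfl
      · push_cast; ring
    have h3 : ((Nat.factorial (n+2) : ℝ))⁻¹ * (((n:ℝ)+2) * ‖Y - X‖ * m ^ (n+1))
        = ((Nat.factorial (n+1) : ℝ))⁻¹ * ‖Y - X‖ * m ^ (n+1) := by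
      rw [hfac]
      have : (0:ℝ) < (Nat.factorial (n+1) : ℝ) := by positivity
      field_simp
    have h4 : ((Nat.factorial (n+1) : ℝ))⁻¹ * ‖Y - X‖ * m ^ (n+1)
        ≤ (‖Y - X‖ * m) * (1/2)^n := by
      have hi : ((Nat.factorial (n+1) : ℝ))⁻¹ ≤ (1/2)^n := by
        rw [one_div, inv_pow, inv_le_inv₀ (by positivity) (by positivity)]
        exact two_pow_le_succ_factorial n
      have hmp : m ^ (n+1) ≤ m := by
        rw [pow_succ]
        nlinarith [pow_le_one₀ hm0 hm (n:=n), pow_nonneg hm0 n]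
      calc ((Nat.factorial (n+1) : ℝ))⁻¹ * ‖Y - X‖ * m ^ (n+1)
          ≤ (1/2)^n * ‖Y - X‖ * m := by
            apply mul_le_mul _ hmp (by positivity) (by positivity)
            exact mul_le_mul_of_nonneg_right hi (norm_nonneg _)
      _ = (‖Y - X‖ * m) * (1/2)^n := by ring
    linarith [h2, h3.le, h3.ge]
  rw [heq]
  have hgs : Summable (fun n : ℕ => (‖Y - X‖ * m) * (1/2)^n) :=
    (summable_geometric_of_lt_one (by norm_num) (by norm_num)).mul_left _
  have hns : Summable (fun n => ‖g (n + 2)‖) :=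
    Summable.of_nonneg_of_le (fun n => norm_nonneg _) hterm hgs
  calc ‖∑' n, g (n + 2)‖ ≤ ∑' n, ‖g (n + 2)‖ := norm_tsum_le_tsum_norm hns
  _ ≤ ∑' n : ℕ, (‖Y - X‖ * m) * (1/2)^n := Summable.tsum_le_tsum hterm hns hgs
  _ = 2 * (‖Y - X‖ * m) := by
      rw [tsum_mul_left, tsum_geometric_of_lt_one (by norm_num) (by norm_num)]; ring

end Helpers2

section Helpers3
variable {𝔸 : Type*} [NormedRing 𝔸] [NormedAlgebra ℝ 𝔸] [CompleteSpace 𝔸]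

lemma norm_exp_sub_one_le (x : 𝔸) (hx : ‖x‖ ≤ 1) : ‖NormedSpace.exp x - 1‖ ≤ 2 * ‖x‖ := by
  have h := exp_tail_bound x hx 1 le_rfl
  simpa using h

lemma norm_mul_exp_le (W x : 𝔸) (hx : ‖x‖ ≤ 1) : ‖W * NormedSpace.exp x‖ ≤ 3 * ‖W‖ := by
  have h : W * NormedSpace.exp x = W * (NormedSpace.exp x - 1) + W := by noncomm_ring
  rw [h]
  calc ‖W * (NormedSpace.exp x - 1) + W‖ ≤ ‖W * (NormedSpace.exp x - 1)‖ + ‖W‖ := norm_add_le _ _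
  _ ≤ ‖W‖ * ‖NormedSpace.exp x - 1‖ + ‖W‖ := by gcongr; exact norm_mul_le _ _
  _ ≤ ‖W‖ * (2 * ‖x‖) + ‖W‖ := by gcongr; exact norm_exp_sub_one_le x hx
  _ ≤ ‖W‖ * 2 + ‖W‖ := by nlinarith [norm_nonneg W, norm_nonneg x]
  _ = 3 * ‖W‖ := by ring

lemma norm_exp_mul_le (x W : 𝔸) (hx : ‖x‖ ≤ 1) : ‖NormedSpace.exp x * W‖ ≤ 3 * ‖W‖ := by
  have h : NormedSpace.exp x * W = (NormedSpace.exp x - 1) * W + W := by noncomm_ring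
  rw [h]
  calc ‖(NormedSpace.exp x - 1) * W + W‖ ≤ ‖(NormedSpace.exp x - 1) * W‖ + ‖W‖ := norm_add_le _ _
  _ ≤ ‖NormedSpace.exp x - 1‖ * ‖W‖ + ‖W‖ := by gcongr; exact norm_mul_le _ _
  _ ≤ (2 * ‖x‖) * ‖W‖ + ‖W‖ := by gcongr; exact norm_exp_sub_one_le x hx
  _ ≤ 2 * ‖W‖ + ‖W‖ := by nlinarith [norm_nonneg W, norm_nonneg x]
  _ = 3 * ‖W‖ := by ring

end Helpers3

/-- One-step truncation-error bound for an explicit Runge–Kutta method whose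
stability polynomial matches the exponential to order `q` with error constant `c`,
applied to the semi-discrete system generated by `L + E`.  The constant `C`
depends only on `q` and `c`. -/
theorem runge_kutta_truncation_error_bound (q : ℕ) (hq : 1 ≤ q) (c : ℝ) :
    ∃ C : ℝ, 0 < C ∧
      ∀ (N : ℕ), 1 ≤ N → ∀ (L E : Matrix (Fin N) (Fin N) ℝ), ∀ δt : ℝ, 0 < δt →
        δt * (‖L‖ + ‖E‖) ≤ 1 →
        ‖(1 : Matrix (Fin N) (Fin N) ℝ)
            - (∑ j ∈ Finset.range (q + 1), ((δt ^ j / (Nat.factorial j : ℝ)) • L ^ j)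
                + ((1 / (Nat.factorial (q + 1) : ℝ) + c) * δt ^ (q + 1)) • L ^ (q + 1))
              * NormedSpace.exp (-(δt • (L + E)))
            - δt • E + (c * δt ^ (q + 1)) • L ^ (q + 1)‖
          ≤ C * (δt ^ 2 * ‖E‖ * (‖L‖ + ‖E‖) + δt ^ (q + 2) * ‖L‖ ^ (q + 2)) := by
  refine ⟨8 + 2 * |c|, by positivity, ?_⟩
  intro N hN L E δt hδt hbound
  set A : Matrix (Fin N) (Fin N) ℝ := δt • L with hA
  set B : Matrix (Fin N) (Fin N) ℝ := δt • E with hB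
  have ha : ‖A‖ = δt * ‖L‖ := by rw [hA, norm_smul, Real.norm_eq_abs, abs_of_pos hδt]
  have hb : ‖B‖ = δt * ‖E‖ := by rw [hB, norm_smul, Real.norm_eq_abs, abs_of_pos hδt]
  have hab : ‖A‖ + ‖B‖ ≤ 1 := by rw [ha, hb]; linarith [hbound, mul_add δt ‖L‖ ‖E‖]
  have ha0 : 0 ≤ ‖A‖ := norm_nonneg A
  have hb0 : 0 ≤ ‖B‖ := norm_nonneg B
  have ha1 : ‖A‖ ≤ 1 := by linarith
  have hS : δt • (L + E) = A + B := by rw [hA, hB, smul_add]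
  have hSab : ‖A + B‖ ≤ ‖A‖ + ‖B‖ := norm_add_le _ _
  set P : Matrix (Fin N) (Fin N) ℝ :=
    ∑ j ∈ Finset.range (q + 2), ((Nat.factorial j : ℝ))⁻¹ • A ^ j with hP
  set M : Matrix (Fin N) (Fin N) ℝ := c • A ^ (q + 1) with hM
  set X : Matrix (Fin N) (Fin N) ℝ := NormedSpace.exp A with hX
  set Y : Matrix (Fin N) (Fin N) ℝ := NormedSpace.exp (-(A + B)) with hY
  set Z : Matrix (Fin N) (Fin N) ℝ := NormedSpace.exp (-A) with hZ
  -- rewrite the Runge–Kutta operator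
  have hΦ : (∑ j ∈ Finset.range (q + 1), ((δt ^ j / (Nat.factorial j : ℝ)) • L ^ j)
      + ((1 / (Nat.factorial (q + 1) : ℝ) + c) * δt ^ (q + 1)) • L ^ (q + 1)) = P + M := by
    rw [hP, hM]
    conv_rhs => rw [Finset.sum_range_succ, add_assoc]
    congr 1
    · apply Finset.sum_congr rfl
      intro j _
      rw [hA, smul_pow, smul_smul]
      congr 1
      rw [div_eq_mul_inv]; ring
    · rw [hA, smul_pow, smul_smul, smul_smul, ← add_smul]
      congr 1
      rw [one_div]; ring
  have hMc : (c * δt ^ (q + 1)) • L ^ (q + 1) = M := by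
    rw [hM, hA, smul_pow, smul_smul]
  rw [hΦ, hS, hMc, ← hY]
  -- key algebraic identity
  have hXZ : X * Z = 1 := by
    rw [hX, hZ, ← Matrix.exp_add_of_commute A (-A) ((Commute.refl A).neg_right), add_neg_cancel, exp_zero]
  have key : (1 : Matrix (Fin N) (Fin N) ℝ) - (P + M) * Y - B + M
      = (X - P) * Y - X * (Y - Z + B) + (X - 1) * B + M * (1 - Y) := by
    have h := hXZ
    simp only [mul_sub, sub_mul, mul_add, add_mul, mul_one, one_mul, h]
    abel
  rw [key]
  -- component bounds
  have hnegAB : ‖-(A + B)‖ ≤ 1 := by rw [norm_neg]; exact hSab.trans hab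
  have hnegA : ‖-A‖ ≤ ‖A‖ + ‖B‖ := by rw [norm_neg]; linarith
  have hnegAB' : ‖-(A + B)‖ ≤ ‖A‖ + ‖B‖ := by rw [norm_neg]; exact hSab
  have t1 : ‖(X - P) * Y‖ ≤ 3 * (2 * ‖A‖ ^ (q + 2)) := by
    have h := norm_mul_exp_le (X - P) (-(A + B)) hnegAB
    have h2 : ‖X - P‖ ≤ 2 * ‖A‖ ^ (q + 2) := by
      rw [hX, hP]
      exact exp_tail_bound A ha1 (q + 2) (by omega)
    calc ‖(X - P) * Y‖ ≤ 3 * ‖X - P‖ := h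
    _ ≤ 3 * (2 * ‖A‖ ^ (q + 2)) := by linarith
  have t2 : ‖X * (Y - Z + B)‖ ≤ 3 * (2 * (‖B‖ * (‖A‖ + ‖B‖))) := by
    have h := norm_exp_mul_le A (Y - Z + B) ha1
    have hf : ‖Y - Z + B‖ ≤ 2 * (‖B‖ * (‖A‖ + ‖B‖)) := by
      have he := exp_sub_exp_bound (-A) (-(A + B)) (‖A‖ + ‖B‖) hnegA hnegAB' hab
      have heq : Y - Z + B = NormedSpace.exp (-(A + B)) - NormedSpace.exp (-A) - (-(A + B) - -A) := by
        rw [hY, hZ]; abel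
      rw [heq]
      have hnb : ‖-(A + B) - -A‖ = ‖B‖ := by rw [show -(A + B) - -A = -B by abel, norm_neg]
      calc ‖NormedSpace.exp (-(A + B)) - NormedSpace.exp (-A) - (-(A + B) - -A)‖
          ≤ 2 * (‖-(A + B) - -A‖ * (‖A‖ + ‖B‖)) := he
      _ = 2 * (‖B‖ * (‖A‖ + ‖B‖)) := by rw [hnb]
    calc ‖X * (Y - Z + B)‖ ≤ 3 * ‖Y - Z + B‖ := by rw [hX]; exact h
    _ ≤ 3 * (2 * (‖B‖ * (‖A‖ + ‖B‖))) := by linarith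
  have t3 : ‖(X - 1) * B‖ ≤ (2 * ‖A‖) * ‖B‖ := by
    calc ‖(X - 1) * B‖ ≤ ‖X - 1‖ * ‖B‖ := norm_mul_le _ _
    _ ≤ (2 * ‖A‖) * ‖B‖ := by
        apply mul_le_mul_of_nonneg_right _ hb0
        rw [hX]; exact norm_exp_sub_one_le A ha1
  have t4 : ‖M * (1 - Y)‖ ≤ (|c| * ‖A‖ ^ (q + 1)) * (2 * (‖A‖ + ‖B‖)) := by
    have hM1 : ‖M‖ ≤ |c| * ‖A‖ ^ (q + 1) := by
      rw [hM, norm_smul, Real.norm_eq_abs]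
      apply mul_le_mul_of_nonneg_left _ (abs_nonneg c)
      exact norm_pow_le' A (by omega)
    have h1Y : ‖(1 : Matrix (Fin N) (Fin N) ℝ) - Y‖ ≤ 2 * (‖A‖ + ‖B‖) := by
      rw [show (1 : Matrix (Fin N) (Fin N) ℝ) - Y = -(Y - 1) by abel, norm_neg, hY]
      calc ‖NormedSpace.exp (-(A + B)) - 1‖ ≤ 2 * ‖-(A + B)‖ := norm_exp_sub_one_le _ hnegAB
      _ ≤ 2 * (‖A‖ + ‖B‖) := by linarith
    calc ‖M * (1 - Y)‖ ≤ ‖M‖ * ‖1 - Y‖ := norm_mul_le _ _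
    _ ≤ (|c| * ‖A‖ ^ (q + 1)) * (2 * (‖A‖ + ‖B‖)) := by
        apply mul_le_mul hM1 h1Y (norm_nonneg _) (by positivity)
  -- combine
  have htotal : ‖(X - P) * Y - X * (Y - Z + B) + (X - 1) * B + M * (1 - Y)‖
      ≤ 3 * (2 * ‖A‖ ^ (q + 2)) + 3 * (2 * (‖B‖ * (‖A‖ + ‖B‖)))
        + (2 * ‖A‖) * ‖B‖ + (|c| * ‖A‖ ^ (q + 1)) * (2 * (‖A‖ + ‖B‖)) := by
    calc ‖(X - P) * Y - X * (Y - Z + B) + (X - 1) * B + M * (1 - Y)‖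
        ≤ ‖(X - P) * Y - X * (Y - Z + B) + (X - 1) * B‖ + ‖M * (1 - Y)‖ := norm_add_le _ _
    _ ≤ ‖(X - P) * Y - X * (Y - Z + B)‖ + ‖(X - 1) * B‖ + ‖M * (1 - Y)‖ := by
        gcongr; exact norm_add_le _ _
    _ ≤ ‖(X - P) * Y‖ + ‖X * (Y - Z + B)‖ + ‖(X - 1) * B‖ + ‖M * (1 - Y)‖ := by
        gcongr; exact norm_sub_le _ _
    _ ≤ _ := by gcongr
  -- final arithmetic
  have hrw1 : ‖A‖ ^ (q + 2) = δt ^ (q + 2) * ‖L‖ ^ (q + 2) := by rw [ha, mul_pow]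
  have hrw2 : ‖B‖ * (‖A‖ + ‖B‖) = δt ^ 2 * ‖E‖ * (‖L‖ + ‖E‖) := by
    rw [ha, hb]; ring
  have hpow1 : ‖A‖ ^ (q + 1) ≤ ‖A‖ := by
    apply pow_le_of_le_one ha0 ha1 (by omega)
  have hpsucc : ‖A‖ ^ (q + 1) * ‖A‖ = ‖A‖ ^ (q + 2) := by rw [← pow_succ]
  have hfin : 3 * (2 * ‖A‖ ^ (q + 2)) + 3 * (2 * (‖B‖ * (‖A‖ + ‖B‖)))
        + (2 * ‖A‖) * ‖B‖ + (|c| * ‖A‖ ^ (q + 1)) * (2 * (‖A‖ + ‖B‖))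
      ≤ (8 + 2 * |c|) * (‖B‖ * (‖A‖ + ‖B‖) + ‖A‖ ^ (q + 2)) := by
    have h5 : ‖A‖ ^ (q + 1) * ‖B‖ ≤ ‖A‖ * ‖B‖ := mul_le_mul_of_nonneg_right hpow1 hb0
    have h8 : |c| * (‖A‖ ^ (q + 1) * ‖B‖) ≤ |c| * (‖A‖ * ‖B‖) :=
      mul_le_mul_of_nonneg_left h5 (abs_nonneg c)
    have h9 : |c| * (‖A‖ ^ (q + 1) * ‖A‖) = |c| * ‖A‖ ^ (q + 2) := by rw [hpsucc]
    linarith [h8, h9, mul_nonneg hb0 hb0, hpsucc, pow_nonneg ha0 (q+2),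
      mul_nonneg (abs_nonneg c) (mul_nonneg hb0 hb0)]
  calc ‖(X - P) * Y - X * (Y - Z + B) + (X - 1) * B + M * (1 - Y)‖
      ≤ (8 + 2 * |c|) * (‖B‖ * (‖A‖ + ‖B‖) + ‖A‖ ^ (q + 2)) := htotal.trans hfin
  _ = (8 + 2 * |c|) * (δt ^ 2 * ‖E‖ * (‖L‖ + ‖E‖) + δt ^ (q + 2) * ‖L‖ ^ (q + 2)) := by
      rw [hrw1, hrw2]
end

section
/- Let k ≥ 1 be an integer, ℓ ∈ {0, …, k−1}, h > 0, and a ∈ ℝ. Consider the cell I = [a, a+h] and the left-shifted stencil of k contiguous cells with interfaces y_j = a − ℓ·h + j·h for j = 0, …, k, covering [a − ℓ·h, a + (k−ℓ)·h]. Let u : [a − ℓ·h, a + (k−ℓ)·h] → ℝ be (k+1)-times continuously differentiable, and let q be the reconstruction polynomial of u on this stencil. Then there exist points ξ̃, ξ ∈ (a − ℓ·h, a + (k−ℓ)·h) such that the reconstructions at the left and right interfaces of I satisfy q(a) = u(a) − ((−h)^k · ζ̃ / (k+1)!) · u^{(k)}(ξ̃) with ζ̃ = (−1)^ℓ · ℓ!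 · (k−ℓ)!, and q(a+h) = u(a+h) − ((−h)^k · ζ / (k+1)!) · u^{(k)}(ξ) with ζ = (−1)^{ℓ+1} · (ℓ+1)! · (k−ℓ−1)!. -/
open Set Polynomial intervalIntegral

private lemma contDiff_polyeval (p : ℝ[X]) (n : ℕ∞) : ContDiff ℝ n fun x : ℝ => p.eval x := by
  induction p using Polynomial.induction_on with
  | C a => simpa using contDiff_const
  | add p q hp hq => simpa [Polynomial.eval_add] using hp.add hq
  | monomial m a _ =>
    simp only [eval_mul, eval_C, eval_pow, eval_X]
    exact contDiff_const.mul (contDiff_id.pow _)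

private lemma poly_iteratedDerivWithin_s6 {A B : ℝ} (hAB : A < B) :
    ∀ (n : ℕ) (p : ℝ[X]), ∀ x ∈ Icc A B,
      iteratedDerivWithin n (fun y => p.eval y) (Icc A B) x = (derivative^[n] p).eval x := by
  intro n
  induction n with
  | zero => intro p x hx; simp
  | succ n IH =>
    intro p x hx
    rw [iteratedDerivWithin_succ']
    have heq : EqOn (derivWithin (fun y => p.eval y) (Icc A B))
        (fun y => (derivative p).eval y) (Icc A B) := by
      intro y hy
      exact ((p.hasDerivAt y).hasDerivWithinAt).derivWithin ((uniqueDiffOn_Icc hAB) y hy)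
    rw [iteratedDerivWithin_congr heq hx, IH (derivative p) x hx,
      ← Function.iterate_succ_apply]

private lemma iterated_rolle_s6 {A B : ℝ} (hAB : A < B) :
    ∀ n : ℕ, 1 ≤ n → ∀ f : ℝ → ℝ, ContDiffOn ℝ n f (Icc A B) →
    ∀ t : ℕ → ℝ, (∀ i j, i < j → j ≤ n → t i < t j) →
    (∀ j, j ≤ n → t j ∈ Icc A B) → (∀ j, j ≤ n → f (t j) = 0) →
    ∃ ξ ∈ Ioo A B, iteratedDerivWithin n f (Icc A B) ξ = 0 := by
  intro n
  induction n with
  | zero => omega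
  | succ n IH =>
    intro _ f hf t hmono hmem hz
    -- Rolle points
    have hcont : ContinuousOn f (Icc A B) := hf.continuousOn
    have key : ∀ j, ∃ c, j ≤ n → c ∈ Ioo (t j) (t (j + 1)) ∧ deriv f c = 0 := by
      intro j
      by_cases hj : j ≤ n
      · obtain ⟨c, hc1, hc2⟩ := exists_deriv_eq_zero
          (hmono j (j + 1) (by omega) (by omega))
          (hcont.mono (Icc_subset_Icc (hmem j (by omega)).1 (hmem (j + 1) (by omega)).2))
          (by rw [hz j (by omega), hz (j + 1) (by omega)])
        exact ⟨c, fun _ => ⟨hc1, hc2⟩⟩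
      · exact ⟨0, fun h => absurd h hj⟩
    choose c hc using key
    have hcIoo : ∀ j, j ≤ n → c j ∈ Ioo A B := by
      intro j hj
      have h1 := (hc j hj).1
      exact ⟨lt_of_le_of_lt (hmem j (by omega)).1 h1.1,
        lt_of_lt_of_le h1.2 (hmem (j + 1) (by omega)).2⟩
    have hczero : ∀ j, j ≤ n → derivWithin f (Icc A B) (c j) = 0 := by
      intro j hj
      rw [derivWithin_of_mem_nhds (Icc_mem_nhds (hcIoo j hj).1 (hcIoo j hj).2)]
      exact (hc j hj).2
    rcases Nat.eq_zero_or_pos n with hn | hn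
    · subst hn
      refine ⟨c 0, hcIoo 0 le_rfl, ?_⟩
      rw [iteratedDerivWithin_one]
      exact hczero 0 le_rfl
    · have hg : ContDiffOn ℝ n (derivWithin f (Icc A B)) (Icc A B) := by
        apply hf.derivWithin (uniqueDiffOn_Icc hAB)
        exact_mod_cast le_refl ((n : ℕ∞) + 1)
      have cmono : ∀ i j, i < j → j ≤ n → c i < c j := by
        intro i j hij hj
        have h1 : c i < t (i + 1) := (hc i (by omega)).1.2
        have h2 : t j < c j := (hc j hj).1.1
        rcases Nat.lt_or_ge (i + 1) j with hlt | hge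
        · exact h1.trans ((hmono (i + 1) j hlt (by omega)).trans h2)
        · have : i + 1 = j := by omega
          subst this; exact h1.trans h2
      obtain ⟨ξ, hξ1, hξ2⟩ := IH hn (derivWithin f (Icc A B)) hg c cmono
        (fun j hj => Ioo_subset_Icc_self (hcIoo j hj)) hczero
      refine ⟨ξ, hξ1, ?_⟩
      rw [iteratedDerivWithin_succ']
      exact hξ2

private lemma prod_range_real_factorial (n : ℕ) :
    ∏ i ∈ Finset.range n, ((i : ℝ) + 1) = n.factorial := by
  induction n with
  | zero => simp
  | succ n IH => rw [Finset.prod_range_succ, IH, Nat.factorial_succ]; push_cast; ring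

private lemma prod_range_sub_factorial (m : ℕ) :
    ∏ j ∈ Finset.range m, ((m : ℝ) - j) = m.factorial := by
  induction m with
  | zero => simp
  | succ m IH =>
    rw [Finset.prod_range_succ']
    have h1 : ∏ j ∈ Finset.range m, ((m + 1 : ℝ) - ((j : ℕ) + 1 : ℕ))
        = ∏ j ∈ Finset.range m, ((m : ℝ) - j) := by
      apply Finset.prod_congr rfl; intro j _; push_cast; ring
    push_cast at h1 ⊢
    rw [h1, IH, Nat.factorial_succ]
    push_cast; ring

private lemma prod_int_sub (k m : ℕ) (hm : m ≤ k) :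
    ∏ j ∈ (Finset.range (k + 1)).erase m, ((m : ℝ) - j)
      = (-1) ^ (k - m) * m.factorial * (k - m).factorial := by
  have hsplit : (Finset.range (k + 1)).erase m
      = Finset.range m ∪ Finset.Ico (m + 1) (k + 1) := by
    ext j
    simp only [Finset.mem_erase, Finset.mem_range, Finset.mem_union, Finset.mem_Ico]
    omega
  have hdisj : Disjoint (Finset.range m) (Finset.Ico (m + 1) (k + 1)) := by
    simp only [Finset.disjoint_left, Finset.mem_range, Finset.mem_Ico]
    omega
  rw [hsplit, Finset.prod_union hdisj, prod_range_sub_factorial]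
  have h2 : ∏ j ∈ Finset.Ico (m + 1) (k + 1), ((m : ℝ) - j)
      = (-1) ^ (k - m) * (k - m).factorial := by
    rw [Finset.prod_Ico_eq_prod_range]
    have hkm : k + 1 - (m + 1) = k - m := by omega
    rw [hkm]
    have : (fun i => ((m : ℝ) - (m + 1 + i))) = fun i => (-1) * ((i : ℝ) + 1) := by
      funext i; push_cast; ring
    calc ∏ i ∈ Finset.range (k - m), ((m : ℝ) - ↑(m + 1 + i))
        = ∏ i ∈ Finset.range (k - m), (-1) * ((i : ℝ) + 1) := by
          apply Finset.prod_congr rfl; intro i _; push_cast; ring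
      _ = (-1) ^ (k - m) * (k - m).factorial := by
          rw [Finset.prod_mul_distrib, Finset.prod_const, prod_range_real_factorial,
            Finset.card_range]
  rw [h2]; ring


private lemma key_node (k : ℕ) (hk : 1 ≤ k) (h A B : ℝ) (hh : 0 < h)
    (hB : B = A + k * h)
    (u U : ℝ → ℝ)
    (hu : ContDiffOn ℝ (k + 1) u (Icc A B))
    (hU : ∀ x, U x = ∫ s in A..x, u s)
    (Q : ℝ[X]) (hdeg : Q.natDegree ≤ k)
    (hinterp : ∀ j, j ≤ k → Q.eval (A + j * h) = U (A + j * h))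
    (m : ℕ) (hm : m ≤ k) :
    ∃ ξ ∈ Ioo A B,
      (derivative Q).eval (A + m * h)
        = u (A + m * h)
          - ((∏ j ∈ (Finset.range (k + 1)).erase m, ((m : ℝ) - j)) * h ^ k
              / (Nat.factorial (k + 1))) * iteratedDerivWithin k u (Icc A B) ξ := by
  have hAB : A < B := by
    rw [hB]; nlinarith [Nat.one_le_cast (α := ℝ) |>.mpr hk, hh]
  set y : ℕ → ℝ := fun j => A + j * h with hy
  have hy_mono : ∀ i j : ℕ, i < j → y i < y j := by
    intro i j hij
    simp only [hy]
    have : (i : ℝ) < j := by exact_mod_cast hij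
    nlinarith
  have hy_le : ∀ i j : ℕ, i ≤ j → y i ≤ y j := by
    intro i j hij
    rcases eq_or_lt_of_le hij with rfl | hlt
    exacts [le_rfl, (hy_mono i j hlt).le]
  have hy0 : y 0 = A := by simp [hy]
  have hyk : y k = B := by simp [hy, hB]
  have hy_mem : ∀ j, j ≤ k → y j ∈ Icc A B := by
    intro j hj
    constructor
    · rw [← hy0]; exact hy_le 0 j (by omega)
    · rw [← hyk]; exact hy_le j k hj
  -- the nodal polynomial
  classical
  set W : ℝ[X] := Lagrange.nodal (Finset.range (k + 1)) y with hW
  have hmmem : m ∈ Finset.range (k + 1) := Finset.mem_range.mpr (by omega)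
  have hWdeg : W.natDegree = k + 1 := by
    rw [hW, Lagrange.natDegree_nodal, Finset.card_range]
  have hWmonic : W.Monic := Lagrange.nodal_monic
  have hωeq : (derivative W).eval (y m)
      = (∏ j ∈ (Finset.range (k + 1)).erase m, ((m : ℝ) - j)) * h ^ k := by
    rw [hW, Lagrange.eval_nodal_derivative_eval_node_eq hmmem, Lagrange.eval_nodal]
    have : ∀ j ∈ (Finset.range (k + 1)).erase m, y m - y j = ((m : ℝ) - j) * h := by
      intro j _; simp only [hy]; ring
    rw [Finset.prod_congr rfl this, Finset.prod_mul_distrib, Finset.prod_const,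
      Finset.card_erase_of_mem hmmem, Finset.card_range]
    norm_num
  have hωne : (derivative W).eval (y m) ≠ 0 := by
    rw [hωeq]
    apply mul_ne_zero
    · rw [Finset.prod_ne_zero_iff]
      intro j hj
      have : j ≠ m := (Finset.mem_erase.mp hj).1
      rw [sub_ne_zero]
      exact_mod_cast fun hmj => this (by exact_mod_cast hmj.symm)
    · exact pow_ne_zero _ hh.ne'
  set K : ℝ := (u (y m) - (derivative Q).eval (y m)) / (derivative W).eval (y m) with hK
  set G : ℝ → ℝ := fun x => u x - (derivative Q).eval x - K * (derivative W).eval x with hG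
  have hGm : G (y m) = 0 := by
    simp only [hG, hK]
    field_simp
    ring
  -- continuity / FTC facts
  have ucont : ContinuousOn u (Icc A B) := hu.continuousOn
  have uint : MeasureTheory.IntegrableOn u (Icc A B) := ucont.integrableOn_Icc
  have hUcont : ContinuousOn U (Icc A B) := by
    have h1 := intervalIntegral.continuousOn_primitive_interval
      (f := u) (μ := MeasureTheory.volume) (a := A) (b := B)
      (by rw [uIcc_of_le hAB.le]; exact uint)
    rw [uIcc_of_le hAB.le] at h1
    exact h1.congr fun x _ => hU x
  have hUD : ∀ x ∈ Ioo A B, HasDerivAt U (u x) x := by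
    intro x hx
    have hInt : IntervalIntegrable u MeasureTheory.volume A x :=
      (ucont.mono (Icc_subset_Icc le_rfl hx.2.le)).intervalIntegrable_of_Icc hx.1.le
    have hmeas := ContinuousOn.stronglyMeasurableAtFilter
      (μ := MeasureTheory.volume) isOpen_Ioo (ucont.mono Ioo_subset_Icc_self) x hx
    have hcAt : ContinuousAt u x := ucont.continuousAt (Icc_mem_nhds hx.1 hx.2)
    have h2 := intervalIntegral.integral_hasDerivAt_right hInt hmeas hcAt
    have hUeq : U = fun z => ∫ s in A..z, u s := funext hU
    rw [hUeq]
    exact h2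
  set φ : ℝ → ℝ := fun x => U x - Q.eval x - K * W.eval x with hφ
  have hφcont : ContinuousOn φ (Icc A B) :=
    (hUcont.sub (Q.continuous_aeval.continuousOn)).sub
      ((continuous_const.mul W.continuous_aeval).continuousOn)
  have hφzero : ∀ j, j ≤ k → φ (y j) = 0 := by
    intro j hj
    have hWz : W.eval (y j) = 0 :=
      Lagrange.eval_nodal_at_node (Finset.mem_range.mpr (by omega))
    simp only [hφ, hWz, mul_zero, sub_zero]
    rw [hinterp j hj]
    ring
  have hφD : ∀ x ∈ Ioo A B, HasDerivAt φ (G x) x := by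
    intro x hx
    exact ((hUD x hx).sub (Q.hasDerivAt x)).sub ((W.hasDerivAt x).const_mul K)
  -- Rolle points
  have hroll : ∀ j, ∃ c, j < k → c ∈ Ioo (y j) (y (j + 1)) ∧ G c = 0 := by
    intro j
    by_cases hj : j < k
    · have hsub : Icc (y j) (y (j + 1)) ⊆ Icc A B :=
        Icc_subset_Icc (hy_mem j (by omega)).1 (hy_mem (j + 1) (by omega)).2
      have hsub' : Ioo (y j) (y (j + 1)) ⊆ Ioo A B :=
        Ioo_subset_Ioo (hy_mem j (by omega)).1 (hy_mem (j + 1) (by omega)).2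
      obtain ⟨c, hc1, hc2⟩ := exists_hasDerivAt_eq_zero (f := φ) (f' := G)
        (hy_mono j (j + 1) (by omega)) (hφcont.mono hsub)
        (by rw [hφzero j (by omega), hφzero (j + 1) (by omega)])
        (fun x hx => hφD x (hsub' hx))
      exact ⟨c, fun _ => ⟨hc1, hc2⟩⟩
    · exact ⟨0, fun hcon => absurd hcon hj⟩
  choose c hc using hroll
  have hcI : ∀ j, j < k → c j ∈ Ioo A B := by
    intro j hj
    exact Ioo_subset_Ioo (hy_mem j (by omega)).1 (hy_mem (j + 1) (by omega)).2 (hc j hj).1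
  -- the k+1 zeros of G, sorted
  set t : ℕ → ℝ := fun j => if j < m then c j else if j = m then y m else c (j - 1) with ht
  have hcm : ∀ i j, i < j → j < k → c i < c j := by
    intro i j hij hj
    calc c i < y (i + 1) := (hc i (by omega)).1.2
      _ ≤ y j := hy_le (i + 1) j (by omega)
      _ < c j := (hc j hj).1.1
  have htmono : ∀ i j, i < j → j ≤ k → t i < t j := by
    intro i j hij hj
    simp only [ht]
    rcases Nat.lt_trichotomy j m with hjm | rfl | hjm
    · rw [if_pos (show j < m by omega), if_pos (show i < m by omega)]
      exact hcm i j hij (by omega)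
    · rw [if_pos (show i < j by omega), if_neg (show ¬ j < j by omega),
        if_pos (show j = j from rfl)]
      calc c i < y (i + 1) := (hc i (by omega)).1.2
        _ ≤ y j := hy_le (i + 1) j (by omega)
    · rw [if_neg (show ¬ j < m by omega), if_neg (show ¬ j = m by omega)]
      rcases Nat.lt_trichotomy i m with him | rfl | him
      · rw [if_pos (show i < m by omega)]
        exact hcm i (j - 1) (by omega) (by omega)
      · rw [if_neg (show ¬ i < i by omega), if_pos (show i = i from rfl)]
        calc y i ≤ y (j - 1) := hy_le i (j - 1) (by omega)
          _ < c (j - 1) := (hc (j - 1) (by omega)).1.1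
      · rw [if_neg (show ¬ i < m by omega), if_neg (show ¬ i = m by omega)]
        exact hcm (i - 1) (j - 1) (by omega) (by omega)
  have htmem : ∀ j, j ≤ k → t j ∈ Icc A B := by
    intro j hj
    simp only [ht]
    split_ifs with h1 h2
    · exact Ioo_subset_Icc_self (hcI j (by omega))
    · exact hy_mem m hm
    · exact Ioo_subset_Icc_self (hcI (j - 1) (by omega))
  have htzero : ∀ j, j ≤ k → G (t j) = 0 := by
    intro j hj
    simp only [ht]
    split_ifs with h1 h2
    · exact (hc j (by omega)).2
    · exact hGm
    · exact (hc (j - 1) (by omega)).2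
  -- smoothness of G
  have hu' : ContDiffOn ℝ k u (Icc A B) := hu.of_le (by exact_mod_cast Nat.le_succ k)
  have hGcd : ContDiffOn ℝ k G (Icc A B) := by
    apply ContDiffOn.sub
    · exact hu'.sub ((contDiff_polyeval (derivative Q) k).contDiffOn)
    · exact (contDiff_const.mul (contDiff_polyeval (derivative W) k)).contDiffOn
  obtain ⟨ξ, hξ, hG0⟩ := iterated_rolle_s6 hAB k hk G hGcd t htmono htmem htzero
  have hξI : ξ ∈ Icc A B := Ioo_subset_Icc_self hξ
  -- decompose the iterated derivative of G
  have hud : UniqueDiffOn ℝ (Icc A B) := uniqueDiffOn_Icc hAB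
  have hdecomp : iteratedDerivWithin k G (Icc A B) ξ
      = iteratedDerivWithin k u (Icc A B) ξ - (Nat.factorial (k + 1) : ℝ) * K := by
    have e1 : iteratedDerivWithin k G (Icc A B) ξ
        = iteratedDerivWithin k (fun x => u x - (derivative Q).eval x) (Icc A B) ξ
          - iteratedDerivWithin k (fun x => K * (derivative W).eval x) (Icc A B) ξ := by
      exact iteratedDerivWithin_sub hξI hud
        ((hu'.sub ((contDiff_polyeval (derivative Q) k).contDiffOn)).contDiffWithinAt hξI)
        ((contDiff_const.mul (contDiff_polyeval (derivative W) k)).contDiffOn.contDiffWithinAt hξI)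
    have e2 : iteratedDerivWithin k (fun x => u x - (derivative Q).eval x) (Icc A B) ξ
        = iteratedDerivWithin k u (Icc A B) ξ
          - iteratedDerivWithin k (fun x => (derivative Q).eval x) (Icc A B) ξ :=
      iteratedDerivWithin_sub hξI hud (hu'.contDiffWithinAt hξI) ((contDiff_polyeval (derivative Q) k).contDiffOn.contDiffWithinAt hξI)
    have e3 : iteratedDerivWithin k (fun x => (derivative Q).eval x) (Icc A B) ξ = 0 := by
      rw [poly_iteratedDerivWithin_s6 hAB k (derivative Q) ξ hξI,
        ← Function.iterate_succ_apply, iterate_derivative_eq_zero (by omega)]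
      simp
    have e4 : iteratedDerivWithin k (fun x => K * (derivative W).eval x) (Icc A B) ξ
        = K * (Nat.factorial (k + 1) : ℝ) := by
      rw [iteratedDerivWithin_const_mul hξI hud K
        ((contDiff_polyeval (derivative W) k).contDiffOn.contDiffWithinAt hξI)]
      rw [poly_iteratedDerivWithin_s6 hAB k (derivative W) ξ hξI, ← Function.iterate_succ_apply]
      have hdd : derivative^[k + 1] W = C ((Nat.factorial (k + 1) : ℝ)) := by
        have hnd : (derivative^[k + 1] W).natDegree ≤ 0 := by
          have := natDegree_iterate_derivative W (k + 1)
          omega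
        rw [eq_C_of_natDegree_le_zero hnd, coeff_iterate_derivative, zero_add,
          Nat.descFactorial_self]
        have : W.coeff (k + 1) = 1 := by
          have := hWmonic.coeff_natDegree
          rwa [hWdeg] at this
        simp [this]
      rw [hdd, eval_C]
    rw [e1, e2, e3, e4]; ring
  rw [hdecomp] at hG0
  refine ⟨ξ, hξ, ?_⟩
  have hKval : K = iteratedDerivWithin k u (Icc A B) ξ / (Nat.factorial (k + 1) : ℝ) := by
    have hfac : (Nat.factorial (k + 1) : ℝ) ≠ 0 := by
      exact_mod_cast (Nat.factorial_pos (k + 1)).ne'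
    field_simp at hG0 ⊢
    linarith
  have hmain : (derivative Q).eval (y m) = u (y m) - K * (derivative W).eval (y m) := by
    have := hGm
    simp only [hG] at this
    linarith
  show (derivative Q).eval (y m) = u (y m) - _ * iteratedDerivWithin k u (Icc A B) ξ
  rw [hmain, hKval, hωeq]
  ring

/-- Error estimates at the two interfaces of cell `[a, a+h]` for the
finite-volume reconstruction polynomial on a left-shifted stencil of `k` cells. -/
theorem shifted_reconstruction_error
    (k : ℕ) (hk : 1 ≤ k) (ℓ : ℕ) (hℓ : ℓ < k) (h a : ℝ) (hh : 0 < h)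
    (u : ℝ → ℝ)
    (hu : ContDiffOn ℝ (k + 1) u (Icc (a - ℓ * h) (a + ((k : ℝ) - ℓ) * h)))
    (U : ℝ → ℝ) (hU : ∀ x, U x = ∫ s in (a - ℓ * h)..x, u s)
    (Q : Polynomial ℝ) (hdeg : Q.natDegree ≤ k)
    (hinterp : ∀ j ∈ Finset.range (k + 1),
      Q.eval (a - ℓ * h + j * h) = U (a - ℓ * h + j * h)) :
    (∃ ξt ∈ Ioo (a - ℓ * h) (a + ((k : ℝ) - ℓ) * h),
      (Polynomial.derivative Q).eval a
        = u a - ((-h) ^ k * ((-1 : ℝ) ^ ℓ * (Nat.factorial ℓ) * (Nat.factorial (k - ℓ)))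
            / (Nat.factorial (k + 1) : ℝ))
          * iteratedDerivWithin k u (Icc (a - ℓ * h) (a + ((k : ℝ) - ℓ) * h)) ξt) ∧
    (∃ ξ ∈ Ioo (a - ℓ * h) (a + ((k : ℝ) - ℓ) * h),
      (Polynomial.derivative Q).eval (a + h)
        = u (a + h) - ((-h) ^ k * ((-1 : ℝ) ^ (ℓ + 1) * (Nat.factorial (ℓ + 1))
              * (Nat.factorial (k - ℓ - 1)))
            / (Nat.factorial (k + 1) : ℝ))
          * iteratedDerivWithin k u (Icc (a - ℓ * h) (a + ((k : ℝ) - ℓ) * h)) ξ) := by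
  have hB : a + ((k : ℝ) - ℓ) * h = (a - ℓ * h) + k * h := by ring
  have hinterp' : ∀ j, j ≤ k → Q.eval (a - ℓ * h + j * h) = U (a - ℓ * h + j * h) :=
    fun j hj => hinterp j (Finset.mem_range.mpr (by omega))
  have hsign : ∀ m : ℕ, m ≤ k → (-1 : ℝ) ^ (k - m) = (-1) ^ k * (-1) ^ m := by
    intro m hm
    have hkm : k - m + 2 * m = k + m := by omega
    calc (-1 : ℝ) ^ (k - m) = (-1) ^ (k - m) * ((-1) ^ 2) ^ m := by norm_num
      _ = (-1) ^ (k - m + 2 * m) := by rw [← pow_mul, ← pow_add]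
      _ = (-1) ^ k * (-1) ^ m := by rw [hkm, pow_add]
  constructor
  · obtain ⟨ξ, hξ, heq⟩ := key_node k hk h (a - ℓ * h) (a + ((k : ℝ) - ℓ) * h) hh hB
      u U hu hU Q hdeg hinterp' ℓ hℓ.le
    have ha : a - (ℓ : ℝ) * h + (ℓ : ℝ) * h = a := by ring
    rw [ha] at heq
    refine ⟨ξ, hξ, ?_⟩
    rw [heq, prod_int_sub k ℓ hℓ.le, hsign ℓ hℓ.le, neg_pow]
    ring
  · obtain ⟨ξ, hξ, heq⟩ := key_node k hk h (a - ℓ * h) (a + ((k : ℝ) - ℓ) * h) hh hB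
      u U hu hU Q hdeg hinterp' (ℓ + 1) (by omega)
    have ha : a - (ℓ : ℝ) * h + ((ℓ : ℕ) + 1 : ℕ) * h = a + h := by push_cast; ring
    rw [ha] at heq
    refine ⟨ξ, hξ, ?_⟩
    have hk1 : k - (ℓ + 1) = k - ℓ - 1 := by omega
    rw [heq, prod_int_sub k (ℓ + 1) (by omega), hsign (ℓ + 1) (by omega), neg_pow, hk1]
    ring
end

section
/- Let k ≥ 1 be an integer, h > 0, and a ∈ ℝ. Consider the cell I = [a, a+h] and the central stencil of 2k−1 contiguous cells with interfaces y_j = a − (k−1)·h + j·h for j = 0, …, 2k−1, covering [a − (k−1)·h, a + k·h]. Let e : [a − (k−1)·h, a + k·h] → ℝ be 2k-times continuously differentiable, and let q be the reconstruction polynomial of e on this stencil. Then there exist points ξ₁, ξ₂ ∈ (a − (k−1)·h, a + k·h) such that q(a) = e(a) − (−1)^k · h^{2k−1} · (k!·(k−1)!/(2k)!) · e^{(2k−1)}(ξ₁) and q(a+h) = e(a+h) − (−1)^{k+1} · h^{2k−1} · (k!·(k−1)!/(2k)!) · e^{(2k−1)}(ξ₂). -/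
open Set Polynomial intervalIntegral


private lemma polyEval_contDiff (P : Polynomial ℝ) {n : WithTop ℕ∞} :
    ContDiff ℝ n fun x : ℝ => P.eval x := by
  induction P using Polynomial.induction_on' with
  | add p q hp hq => simpa [Polynomial.eval_add] using hp.add hq
  | monomial m c =>
      simp only [Polynomial.eval_monomial]
      exact contDiff_const.mul (contDiff_id.pow m)

private lemma iteratedDerivWithin_polyEval (P : Polynomial ℝ) {s : Set ℝ}
    (hs : UniqueDiffOn ℝ s) (n : ℕ) {x : ℝ} (hx : x ∈ s) :
    iteratedDerivWithin n (fun y : ℝ => P.eval y) s x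
      = (Polynomial.derivative^[n] P).eval x := by
  induction n generalizing x with
  | zero => simp
  | succ n ih =>
      rw [iteratedDerivWithin_succ]
      have h1 : derivWithin (iteratedDerivWithin n (fun y : ℝ => P.eval y) s) s x
          = derivWithin (fun y : ℝ => (Polynomial.derivative^[n] P).eval y) s x :=
        derivWithin_congr (fun y hy => ih hy) (ih hx)
      rw [h1, ((Polynomial.hasDerivAt (Polynomial.derivative^[n] P) x).hasDerivWithinAt).derivWithin
        (hs x hx), Function.iterate_succ_apply']

private lemma rolle_pair {c d : ℝ} (f : ℝ → ℝ)
    (hc : ContinuousOn f (Icc c d)) (hdiff : DifferentiableOn ℝ f (Icc c d))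
    {x y : ℝ} (hx : x ∈ Icc c d) (hy : y ∈ Icc c d) (hxy : x < y)
    (h0x : f x = 0) (h0y : f y = 0) :
    ∃ ρ ∈ Ioo x y, derivWithin f (Icc c d) ρ = 0 := by
  refine exists_hasDerivAt_eq_zero hxy (hc.mono (Icc_subset_Icc hx.1 hy.2))
    (h0x.trans h0y.symm) (fun z hz => ?_)
  have hzmem : Icc c d ∈ nhds z :=
    Icc_mem_nhds (lt_of_le_of_lt hx.1 hz.1) (lt_of_lt_of_le hz.2 hy.2)
  have hda : DifferentiableAt ℝ f z :=
    (hdiff z (mem_of_mem_nhds hzmem)).differentiableAt hzmem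
  rw [derivWithin_of_mem_nhds hzmem]
  exact hda.hasDerivAt

private lemma gen_rolle : ∀ (m : ℕ) (f : ℝ → ℝ) (c d : ℝ), c < d →
    ContDiffOn ℝ (m + 1 : ℕ) f (Icc c d) →
    ∀ t : Finset ℝ, (↑t : Set ℝ) ⊆ Icc c d → t.card = m + 2 →
    (∀ x ∈ t, f x = 0) →
    ∃ ξ ∈ Ioo c d, iteratedDerivWithin (m + 1) f (Icc c d) ξ = 0 := by
  intro m
  induction m with
  | zero =>
      intro f c d hcd hf t ht hcard h0
      obtain ⟨x, hxt, y, hyt, hxy⟩ := Finset.one_lt_card.mp (by omega : 1 < t.card)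
      rcases lt_or_gt_of_ne hxy with hlt | hlt
      · obtain ⟨ρ, hρ, hρ0⟩ := rolle_pair f hf.continuousOn
          (hf.differentiableOn (by norm_cast)) (ht hxt) (ht hyt) hlt (h0 x hxt) (h0 y hyt)
        refine ⟨ρ, ?_, ?_⟩
        · exact ⟨lt_of_le_of_lt (ht hxt).1 hρ.1, lt_of_lt_of_le hρ.2 (ht hyt).2⟩
        · rw [iteratedDerivWithin_one]
          exact hρ0
      · obtain ⟨ρ, hρ, hρ0⟩ := rolle_pair f hf.continuousOn
          (hf.differentiableOn (by norm_cast)) (ht hyt) (ht hxt) hlt (h0 y hyt) (h0 x hxt)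
        refine ⟨ρ, ?_, ?_⟩
        · exact ⟨lt_of_le_of_lt (ht hyt).1 hρ.1, lt_of_lt_of_le hρ.2 (ht hxt).2⟩
        · rw [iteratedDerivWithin_one]
          exact hρ0
  | succ m IH =>
      intro f c d hcd hf t ht hcard h0
      have hz := t.orderIsoOfFin hcard
      set z : Fin (m + 3) → ℝ := fun l => ((t.orderIsoOfFin hcard) l : ℝ) with hzdef
      have hzmono : StrictMono z := fun l l' hll' => (t.orderIsoOfFin hcard).lt_iff_lt.mpr hll'
      have hzt : ∀ l, z l ∈ t := fun l => ((t.orderIsoOfFin hcard) l).2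
      have hzmem : ∀ l, z l ∈ Icc c d := fun l => ht (hzt l)
      have H : ∀ l : Fin (m + 2), ∃ ρ ∈ Ioo (z l.castSucc) (z l.succ),
          derivWithin f (Icc c d) ρ = 0 := by
        intro l
        exact rolle_pair f hf.continuousOn (hf.differentiableOn (by norm_cast))
          (hzmem _) (hzmem _) (hzmono Fin.castSucc_lt_succ)
          (h0 _ (hzt _)) (h0 _ (hzt _))
      choose ρ hρ hρ0 using H
      have hρmono : StrictMono ρ := by
        intro l l' hll'
        calc ρ l < z l.succ := (hρ l).2
          _ ≤ z l'.castSucc := hzmono.monotone (by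
              simp only [Fin.le_def, Fin.val_succ, Fin.coe_castSucc]
              exact hll')
          _ < ρ l' := (hρ l').1
      have hρmem : ∀ l, ρ l ∈ Icc c d := fun l =>
        ⟨le_trans (hzmem l.castSucc).1 (le_of_lt (hρ l).1),
         le_trans (le_of_lt (hρ l).2) (hzmem l.succ).2⟩
      obtain ⟨ξ, hξ, hξ0⟩ := IH (derivWithin f (Icc c d)) c d hcd
        (hf.derivWithin (uniqueDiffOn_Icc hcd) (by norm_cast))
        (Finset.image ρ Finset.univ)
        (by
          intro x hx
          simp only [Finset.coe_image, Finset.coe_univ, Set.image_univ] at hx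
          obtain ⟨l, rfl⟩ := hx
          exact hρmem l)
        (by rw [Finset.card_image_of_injective _ hρmono.injective]; simp)
        (by
          intro x hx
          simp only [Finset.mem_image, Finset.mem_univ, true_and] at hx
          obtain ⟨l, rfl⟩ := hx
          exact hρ0 l)
      refine ⟨ξ, hξ, ?_⟩
      rw [iteratedDerivWithin_succ']
      exact hξ0


private lemma prod_range_sub_cast (i : ℕ) :
    ∏ j ∈ Finset.range i, ((i : ℝ) - j) = (Nat.factorial i : ℝ) := by
  rw [← Finset.prod_range_reflect]
  have h : ∀ j ∈ Finset.range i, ((i : ℝ) - ((i - 1 - j : ℕ) : ℝ)) = ((j + 1 : ℕ) : ℝ) := by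
    intro j hj
    rw [Finset.mem_range] at hj
    have : ((i - 1 - j : ℕ) : ℝ) = (i : ℝ) - (1 + j) := by
      rw [Nat.sub_sub]
      push_cast [Nat.cast_sub (by omega : 1 + j ≤ i)]
      ring
    rw [this]; push_cast; ring
  rw [Finset.prod_congr rfl h, ← Nat.cast_prod]
  rw [Finset.prod_range_add_one_eq_factorial]

private lemma prod_Ico_sub_cast (n i : ℕ) (hi : i < n) :
    ∏ j ∈ Finset.Ico (i + 1) n, ((i : ℝ) - j)
      = (-1 : ℝ) ^ (n - 1 - i) * (Nat.factorial (n - 1 - i) : ℝ) := by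
  rw [Finset.prod_Ico_eq_prod_range]
  have h : ∀ t ∈ Finset.range (n - (i + 1)), ((i : ℝ) - (i + 1 + t : ℕ)) = (-1) * ((t + 1 : ℕ) : ℝ) := by
    intro t _; push_cast; ring
  rw [Finset.prod_congr rfl h, Finset.prod_mul_distrib, Finset.prod_const, Finset.card_range,
    ← Nat.cast_prod, Finset.prod_range_add_one_eq_factorial]
  have : n - (i+1) = n - 1 - i := by omega
  rw [this]

private lemma prod_erase_sub_cast (n i : ℕ) (hi : i < n) :
    ∏ j ∈ (Finset.range n).erase i, ((i : ℝ) - j)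
      = (-1 : ℝ) ^ (n - 1 - i) * (Nat.factorial i : ℝ) * (Nat.factorial (n - 1 - i) : ℝ) := by
  have hset : (Finset.range n).erase i = Finset.range i ∪ Finset.Ico (i + 1) n := by
    ext j
    simp only [Finset.mem_erase, Finset.mem_range, Finset.mem_union, Finset.mem_Ico]
    omega
  have hdisj : Disjoint (Finset.range i) (Finset.Ico (i + 1) n) := by
    rw [Finset.disjoint_left]
    intro j hj hj'
    simp only [Finset.mem_range] at hj
    simp only [Finset.mem_Ico] at hj'
    omega
  rw [hset, Finset.prod_union hdisj, prod_range_sub_cast, prod_Ico_sub_cast n i hi]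
  ring

private lemma iterate_derivative_add' (n : ℕ) (p q : Polynomial ℝ) :
    Polynomial.derivative^[n] (p + q)
      = Polynomial.derivative^[n] p + Polynomial.derivative^[n] q := by
  induction n generalizing p q with
  | zero => simp
  | succ n ih => simp [Function.iterate_succ_apply, derivative_add, ih]

private lemma node_error (m : ℕ) (hm : 1 ≤ m) (y0 h : ℝ) (hh : 0 < h)
    (e U : ℝ → ℝ)
    (he : ContDiffOn ℝ m e (Icc y0 (y0 + m * h)))
    (hU : ∀ x, U x = ∫ s in y0..x, e s)
    (Q : Polynomial ℝ) (hdeg : Q.natDegree ≤ m)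
    (hinterp : ∀ j ∈ Finset.range (m + 1), Q.eval (y0 + j * h) = U (y0 + j * h))
    (i : ℕ) (hi : i ≤ m) :
    ∃ ξ ∈ Ioo y0 (y0 + m * h),
      (Polynomial.derivative Q).eval (y0 + i * h)
        = e (y0 + i * h) - (∏ j ∈ (Finset.range (m + 1)).erase i, ((i : ℝ) - j)) * h ^ m
            / (Nat.factorial (m + 1) : ℝ)
            * iteratedDerivWithin m e (Icc y0 (y0 + m * h)) ξ := by
  obtain ⟨μ, rfl⟩ : ∃ μ, m = μ + 1 := ⟨m - 1, by omega⟩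
  set m := μ + 1 with hmdef
  set ν : ℕ → ℝ := fun j => y0 + j * h with hνdef
  set d : ℝ := y0 + m * h with hddef
  have hcd : y0 < d := by
    have : (0 : ℝ) < m * h := by positivity
    simp only [hddef]; linarith
  have hνle : ∀ {j j' : ℕ}, j ≤ j' → ν j ≤ ν j' := by
    intro j j' hjj'
    have : (j : ℝ) ≤ j' := by exact_mod_cast hjj'
    simp only [hνdef]
    nlinarith
  have hνlt : ∀ {j j' : ℕ}, j < j' → ν j < ν j' := by
    intro j j' hjj'
    have : (j : ℝ) < j' := by exact_mod_cast hjj'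
    simp only [hνdef]
    nlinarith
  have hν0 : ν 0 = y0 := by simp [hνdef]
  have hνm : ν m = d := by simp [hνdef, hddef]
  have hνmem : ∀ {j : ℕ}, j ≤ m → ν j ∈ Icc y0 d := by
    intro j hj
    exact ⟨hν0 ▸ hνle (Nat.zero_le j), hνm ▸ hνle hj⟩
  set s : Set ℝ := Icc y0 d with hsdef
  set w : Polynomial ℝ := Lagrange.nodal (Finset.range (m + 1)) ν with hwdef
  set D : ℝ := (Polynomial.derivative w).eval (ν i) with hDdef
  have himem : i ∈ Finset.range (m + 1) := Finset.mem_range.mpr (by omega)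
  have hD : D = (∏ j ∈ (Finset.range (m + 1)).erase i, ((i : ℝ) - j)) * h ^ m := by
    rw [hDdef, hwdef, Lagrange.eval_nodal_derivative_eval_node_eq himem, Lagrange.eval_nodal]
    have hcongr : ∀ j ∈ (Finset.range (m + 1)).erase i, ν i - ν j = ((i : ℝ) - j) * h := by
      intro j _; simp only [hνdef]; ring
    rw [Finset.prod_congr rfl hcongr, Finset.prod_mul_distrib, Finset.prod_const,
      Finset.card_erase_of_mem himem, Finset.card_range]
    simp
  have hD0 : D ≠ 0 := by
    rw [hD]
    apply mul_ne_zero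
    · rw [Finset.prod_ne_zero_iff]
      intro j hj
      have hji : j ≠ i := (Finset.mem_erase.mp hj).1
      have : (i : ℝ) ≠ (j : ℝ) := by exact_mod_cast (Ne.symm hji)
      exact sub_ne_zero.mpr this
    · positivity
  set K : ℝ := (e (ν i) - (Polynomial.derivative Q).eval (ν i)) / D with hKdef
  set R : Polynomial ℝ := Polynomial.derivative Q + Polynomial.C K * Polynomial.derivative w
    with hRdef
  set φ : ℝ → ℝ := fun x => e x - R.eval x with hφdef
  have hφval : ∀ x, φ x = e x - ((Polynomial.derivative Q).eval x
      + K * (Polynomial.derivative w).eval x) := by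
    intro x; simp [hφdef, hRdef]
  set G : ℝ → ℝ := fun x => U x - Q.eval x - K * w.eval x with hGdef
  have hecont : ContinuousOn e s := he.continuousOn
  have huicc : uIcc y0 d = Icc y0 d := uIcc_of_le hcd.le
  have hUc : ContinuousOn U s := by
    have hUeq : U = fun x => ∫ t in y0..x, e t := funext hU
    rw [hUeq, hsdef]
    have hint : MeasureTheory.IntegrableOn e (uIcc y0 d) MeasureTheory.volume := by
      rw [huicc]; exact hecont.integrableOn_Icc
    have := continuousOn_primitive_interval hint
    rwa [huicc] at this
  have hGcont : ContinuousOn G s :=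
    (hUc.sub (Polynomial.continuous Q).continuousOn).sub
      ((continuous_const.mul (Polynomial.continuous w)).continuousOn)
  have hG0 : ∀ j ≤ m, G (ν j) = 0 := by
    intro j hj
    have h1 : Q.eval (ν j) = U (ν j) := hinterp j (Finset.mem_range.mpr (by omega))
    have h2 : w.eval (ν j) = 0 :=
      Lagrange.eval_nodal_at_node (Finset.mem_range.mpr (by omega))
    simp [hGdef, h1, h2]
  have hGderiv : ∀ x ∈ Ioo y0 d, HasDerivAt G (φ x) x := by
    intro x hx
    have hxs : x ∈ s := Ioo_subset_Icc_self hx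
    have hint : IntervalIntegrable e MeasureTheory.volume y0 x := by
      apply ContinuousOn.intervalIntegrable
      rw [uIcc_of_le hx.1.le]
      exact hecont.mono (Icc_subset_Icc le_rfl hx.2.le)
    have hmeas : StronglyMeasurableAtFilter e (nhds x) MeasureTheory.volume :=
      (hecont.mono Ioo_subset_Icc_self).stronglyMeasurableAtFilter isOpen_Ioo x hx
    have hca : ContinuousAt e x := hecont.continuousAt (Icc_mem_nhds hx.1 hx.2)
    have hU' : HasDerivAt U (e x) x := by
      have := intervalIntegral.integral_hasDerivAt_right hint hmeas hca
      have hUeq : U = fun u => ∫ t in y0..u, e t := funext hU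
      rw [hUeq]
      exact this
    have := (hU'.sub (Q.hasDerivAt x)).sub ((w.hasDerivAt x).const_mul K)
    rw [hφval]
    exact this.congr_deriv (by ring)
  have H : ∀ l : Fin m, ∃ ρ ∈ Ioo (ν l) (ν (l + 1)), φ ρ = 0 := by
    intro l
    have hl1 : (l : ℕ) + 1 ≤ m := l.2
    have hsub : Ioo (ν l) (ν (l + 1)) ⊆ Ioo y0 d := by
      intro x hx
      exact ⟨lt_of_le_of_lt (hνmem (by omega)).1 hx.1,
        lt_of_lt_of_le hx.2 (hνmem hl1).2⟩
    exact exists_hasDerivAt_eq_zero (hνlt (Nat.lt_succ_self _))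
      (hGcont.mono (Icc_subset_Icc (hνmem (by omega)).1 (hνmem hl1).2))
      ((hG0 _ (by omega)).trans (hG0 _ hl1).symm)
      (fun x hx => hGderiv x (hsub hx))
  choose ρ hρ hρ0 using H
  have hρmono : StrictMono ρ := by
    intro l l' hll'
    calc ρ l < ν (l + 1) := (hρ l).2
      _ ≤ ν l' := hνle (by exact_mod_cast hll')
      _ < ρ l' := (hρ l').1
  have hρmem : ∀ l : Fin m, ρ l ∈ s := fun l =>
    ⟨le_trans (hνmem (by omega : (l : ℕ) ≤ m)).1 (hρ l).1.le,
     le_trans (hρ l).2.le (hνmem l.2).2⟩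
  have hrhone : ∀ l : Fin m, ρ l ≠ ν i := by
    intro l
    rcases lt_or_ge (l : ℕ) i with hl | hl
    · exact ne_of_lt (lt_of_lt_of_le (hρ l).2 (hνle (by omega)))
    · exact ne_of_gt (lt_of_le_of_lt (hνle hl) (hρ l).1)
  set T : Finset ℝ := insert (ν i) (Finset.image ρ Finset.univ) with hTdef
  have hTcard : T.card = μ + 2 := by
    rw [hTdef, Finset.card_insert_of_notMem, Finset.card_image_of_injective _ hρmono.injective]
    · simp [hmdef]
    · simp only [Finset.mem_image, Finset.mem_univ, true_and, not_exists]
      exact hrhone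
  have hφcd : ContDiffOn ℝ (m : ℕ) φ s := by
    exact he.sub ((polyEval_contDiff R).contDiffOn)
  obtain ⟨ξ, hξ, hξ0⟩ := gen_rolle μ φ y0 d hcd hφcd T
    (by
      intro x hx
      simp only [hTdef, Finset.coe_insert, Set.mem_insert_iff, Finset.coe_image,
        Finset.coe_univ, Set.image_univ, Set.mem_range] at hx
      rcases hx with rfl | ⟨l, rfl⟩
      · exact hνmem hi
      · exact hρmem l)
    hTcard
    (by
      intro x hx
      simp only [hTdef, Finset.mem_insert, Finset.mem_image, Finset.mem_univ, true_and] at hx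
      rcases hx with rfl | ⟨l, rfl⟩
      · rw [hφval]
        simp only [hKdef]
        field_simp
        rw [← hDdef]; ring
      · exact hρ0 l)
  have hξs : ξ ∈ s := Ioo_subset_Icc_self hξ
  -- compute the iterated derivative of φ
  have hwdeg : w.natDegree = m + 1 := by
    rw [hwdef, Lagrange.natDegree_nodal, Finset.card_range]
  have hwiter : Polynomial.derivative^[m + 1] w = Polynomial.C ((Nat.factorial (m + 1) : ℝ)) := by
    have h0 : (Polynomial.derivative^[m + 1] w).natDegree = 0 := by
      have := natDegree_iterate_derivative w (m + 1)
      omega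
    rw [Polynomial.eq_C_of_natDegree_eq_zero h0]
    congr 1
    rw [Polynomial.coeff_iterate_derivative]
    simp only [zero_add, Nat.descFactorial_self]
    rw [← hwdeg]
    rw [(Lagrange.nodal_monic).coeff_natDegree]
    simp
  have hRiter : Polynomial.derivative^[m] R
      = Polynomial.C (K * (Nat.factorial (m + 1) : ℝ)) := by
    rw [hRdef, iterate_derivative_add']
    have h1 : Polynomial.derivative^[m] (Polynomial.derivative Q) = 0 := by
      rw [← Function.iterate_succ_apply]
      exact Polynomial.iterate_derivative_eq_zero (by omega)
    have h2 : Polynomial.derivative^[m] (Polynomial.C K * Polynomial.derivative w)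
        = Polynomial.C K * Polynomial.derivative^[m + 1] w := by
      rw [Polynomial.iterate_derivative_C_mul, ← Function.iterate_succ_apply]
    rw [h1, h2, hwiter, zero_add, ← Polynomial.C_mul]
  have hφiter : iteratedDerivWithin m φ s ξ
      = iteratedDerivWithin m e s ξ - K * (Nat.factorial (m + 1) : ℝ) := by
    have hsub : iteratedDerivWithin m (e - fun x => R.eval x) s ξ
        = iteratedDerivWithin m e s ξ - iteratedDerivWithin m (fun x => R.eval x) s ξ :=
      iteratedDerivWithin_sub hξs (uniqueDiffOn_Icc hcd) (he.contDiffWithinAt hξs)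
        ((polyEval_contDiff R).contDiffWithinAt)
    have hφeq : φ = e - fun x => R.eval x := rfl
    rw [hφeq, hsub, iteratedDerivWithin_polyEval R (uniqueDiffOn_Icc hcd) m hξs, hRiter]
    simp
  have hK : iteratedDerivWithin m e s ξ = K * (Nat.factorial (m + 1) : ℝ) := by
    have : iteratedDerivWithin m φ s ξ = 0 := hξ0
    rw [hφiter] at this
    linarith
  refine ⟨ξ, hξ, ?_⟩
  have hνi : ν i = y0 + i * h := rfl
  rw [← hνi]
  have hKD : K * D = e (ν i) - (Polynomial.derivative Q).eval (ν i) := by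
    rw [hKdef]; field_simp
  have hfact : (Nat.factorial (m + 1) : ℝ) ≠ 0 := by positivity
  rw [← hD]
  have : (Polynomial.derivative Q).eval (ν i) = e (ν i) - K * D := by linarith
  rw [this, hK]
  field_simp


/-- Error estimates at the two interfaces of cell `[a, a+h]` for the
finite-volume reconstruction polynomial on the central stencil of `2k-1` cells. -/
theorem central_reconstruction_error
    (k : ℕ) (hk : 1 ≤ k) (h a : ℝ) (hh : 0 < h)
    (e : ℝ → ℝ)
    (he : ContDiffOn ℝ (2 * k) e (Icc (a - ((k : ℝ) - 1) * h) (a + k * h)))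
    (U : ℝ → ℝ) (hU : ∀ x, U x = ∫ s in (a - ((k : ℝ) - 1) * h)..x, e s)
    (Q : Polynomial ℝ) (hdeg : Q.natDegree ≤ 2 * k - 1)
    (hinterp : ∀ j ∈ Finset.range (2 * k),
      Q.eval (a - ((k : ℝ) - 1) * h + j * h) = U (a - ((k : ℝ) - 1) * h + j * h)) :
    (∃ ξ₁ ∈ Ioo (a - ((k : ℝ) - 1) * h) (a + k * h),
      (Polynomial.derivative Q).eval a
        = e a - (-1 : ℝ) ^ k * h ^ (2 * k - 1)
            * ((Nat.factorial k : ℝ) * (Nat.factorial (k - 1)) / (Nat.factorial (2 * k)))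
            * iteratedDerivWithin (2 * k - 1) e (Icc (a - ((k : ℝ) - 1) * h) (a + k * h)) ξ₁) ∧
    (∃ ξ₂ ∈ Ioo (a - ((k : ℝ) - 1) * h) (a + k * h),
      (Polynomial.derivative Q).eval (a + h)
        = e (a + h) - (-1 : ℝ) ^ (k + 1) * h ^ (2 * k - 1)
            * ((Nat.factorial k : ℝ) * (Nat.factorial (k - 1)) / (Nat.factorial (2 * k)))
            * iteratedDerivWithin (2 * k - 1) e (Icc (a - ((k : ℝ) - 1) * h) (a + k * h)) ξ₂) := by
  obtain ⟨κ, rfl⟩ : ∃ κ, k = κ + 1 := ⟨k - 1, by omega⟩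
  have hsub1 : 2 * (κ + 1) - 1 = 2 * κ + 1 := by omega
  have hsub2 : (κ + 1) - 1 = κ := by omega
  rw [hsub1, hsub2]
  set y0 : ℝ := a - ((↑(κ + 1) : ℝ) - 1) * h with hy0def
  have hend : y0 + ((2 * κ + 1 : ℕ) : ℝ) * h = a + ((κ + 1 : ℕ) : ℝ) * h := by
    rw [hy0def]; push_cast; ring
  have hIcc : Icc y0 (y0 + ((2 * κ + 1 : ℕ) : ℝ) * h)
      = Icc (a - ((↑(κ + 1) : ℝ) - 1) * h) (a + ((κ + 1 : ℕ) : ℝ) * h) := by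
    rw [hend]
  have he' : ContDiffOn ℝ (2 * κ + 1 : ℕ) e (Icc y0 (y0 + ((2 * κ + 1 : ℕ) : ℝ) * h)) := by
    rw [hIcc]
    exact he.of_le (by norm_cast; omega)
  have hdeg' : Q.natDegree ≤ 2 * κ + 1 := by omega
  have hinterp' : ∀ j ∈ Finset.range (2 * κ + 1 + 1),
      Q.eval (y0 + j * h) = U (y0 + j * h) := by
    intro j hj
    apply hinterp
    rw [Finset.mem_range] at hj ⊢
    omega
  have hfact2 : 2 * (κ + 1) = 2 * κ + 2 := by omega
  have hrange : 2 * κ + 1 + 1 = 2 * κ + 2 := by omega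
  constructor
  · obtain ⟨ξ, hξ, heq⟩ := node_error (2 * κ + 1) (by omega) y0 h hh e U he' hU Q hdeg'
      hinterp' κ (by omega)
    rw [hend] at hξ heq
    have hnode : y0 + (κ : ℝ) * h = a := by rw [hy0def]; push_cast; ring
    rw [hnode] at heq
    have hprod := prod_erase_sub_cast (2 * κ + 2) κ (by omega)
    have hs : 2 * κ + 2 - 1 - κ = κ + 1 := by omega
    rw [hs] at hprod
    rw [hrange] at heq
    rw [hprod] at heq
    refine ⟨ξ, hξ, ?_⟩
    rw [heq, hfact2, hrange]
    ring
  · obtain ⟨ξ, hξ, heq⟩ := node_error (2 * κ + 1) (by omega) y0 h hh e U he' hU Q hdeg'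
      hinterp' (κ + 1) (by omega)
    rw [hend] at hξ heq
    have hnode : y0 + ((κ + 1 : ℕ) : ℝ) * h = a + h := by rw [hy0def]; push_cast; ring
    rw [hnode] at heq
    have hprod := prod_erase_sub_cast (2 * κ + 2) (κ + 1) (by omega)
    have hs : 2 * κ + 2 - 1 - (κ + 1) = κ := by omega
    rw [hs] at hprod
    rw [hrange] at heq
    rw [hprod] at heq
    refine ⟨ξ, hξ, ?_⟩
    rw [heq, hfact2, hrange]
    ring
end

section
/- Let k ≥ 1 be an integer, h > 0, and a ∈ ℝ. For each ℓ ∈ {0, …, k−1} consider the stencil of k contiguous cells with left-shift ℓ relative to the cell I = [a, a+h] (interfaces a − ℓ·h + j·h, j = 0, …, k), and let q_ℓ be the reconstruction polynomial of u on that stencil. Let b̃_0, …, b̃_{k−1} and b_0, …, b_{k−1} be real weights that are consistent: Σ_{ℓ=0}^{k−1} b̃_ℓ = 1 and Σ_{ℓ=0}^{k−1} b_ℓ = 1. Assume u : [a − (k−1)·h, a + k·h] → ℝ is (k+1)-times continuously differentiable. Then there exist points ξ̃_0, …, ξ̃_{k−1} and ξ_0, …, ξ_{k−1}, with ξ̃_ℓ,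 ξ_ℓ in the open stencil interval (a − ℓ·h, a + (k−ℓ)·h), such that Σ_ℓ b̃_ℓ · q_ℓ(a) = u(a) − ((−h)^k/(k+1)!) · Σ_ℓ b̃_ℓ · ζ̃^ℓ · u^{(k)}(ξ̃_ℓ) with ζ̃^ℓ = (−1)^ℓ · ℓ! · (k−ℓ)!, and Σ_ℓ b_ℓ · q_ℓ(a+h) = u(a+h) − ((−h)^k/(k+1)!) · Σ_ℓ b_ℓ · ζ^ℓ · u^{(k)}(ξ_ℓ) with ζ^ℓ = (−1)^{ℓ+1} · (ℓ+1)! · (k−ℓ−1)!. -/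
open Set Polynomial intervalIntegral

private lemma chain_mono {x : ℕ → ℝ} {n : ℕ} (h : ∀ i, i ≤ n → x i < x (i + 1)) :
    ∀ q, q ≤ n + 1 → ∀ p, p ≤ q → x p ≤ x q := by
  intro q
  induction q with
  | zero => intro _ p hp; interval_cases p; rfl
  | succ m ih =>
    intro hm p hp
    rcases Nat.lt_succ_iff_lt_or_eq.mp (Nat.lt_succ_of_le hp) with hp' | rfl
    · exact le_trans (ih (by omega) p (by omega)) (h m (by omega)).le
    · rfl

private lemma rolle_iter (n : ℕ) (f : ℕ → ℝ → ℝ) (α β : ℝ) (x : ℕ → ℝ)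
    (hmono : ∀ i, i ≤ n → x i < x (i + 1))
    (hmem : ∀ j, j ≤ n + 1 → x j ∈ Icc α β)
    (hcont : ContinuousOn (f 0) (Icc α β))
    (hderiv : ∀ j, j ≤ n → ∀ t ∈ Ioo α β, HasDerivAt (f j) (f (j + 1) t) t)
    (hzero : ∀ j, j ≤ n + 1 → f 0 (x j) = 0) :
    ∃ ξ ∈ Ioo α β, f (n + 1) ξ = 0 := by
  induction n generalizing f α β x with
  | zero =>
    have h01 := hmono 0 le_rfl
    obtain ⟨ξ, hξ, hd⟩ := exists_hasDerivAt_eq_zero h01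
      (hcont.mono (Icc_subset_Icc (hmem 0 (by omega)).1 (hmem 1 (by omega)).2))
      ((hzero 0 (by omega)).trans (hzero 1 (by omega)).symm)
      (fun t ht => hderiv 0 le_rfl t ⟨lt_of_le_of_lt (hmem 0 (by omega)).1 ht.1,
        lt_of_lt_of_le ht.2 (hmem 1 (by omega)).2⟩)
    exact ⟨ξ, ⟨lt_of_le_of_lt (hmem 0 (by omega)).1 hξ.1,
      lt_of_lt_of_le hξ.2 (hmem 1 (by omega)).2⟩, hd⟩
  | succ n ih =>
    -- Rolle on each consecutive pair of zeros
    have hz : ∀ j : ℕ, ∃ z, j ≤ n + 1 → z ∈ Ioo (x j) (x (j + 1)) ∧ f 1 z = 0 := by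
      intro j
      by_cases hj : j ≤ n + 1
      · obtain ⟨z, hz1, hz2⟩ := exists_hasDerivAt_eq_zero (hmono j hj)
          (hcont.mono (Icc_subset_Icc (hmem j (by omega)).1 (hmem (j+1) (by omega)).2))
          ((hzero j (by omega)).trans (hzero (j+1) (by omega)).symm)
          (fun t ht => hderiv 0 (by omega) t ⟨lt_of_le_of_lt (hmem j (by omega)).1 ht.1,
            lt_of_lt_of_le ht.2 (hmem (j+1) (by omega)).2⟩)
        exact ⟨z, fun _ => ⟨hz1, hz2⟩⟩
      · exact ⟨0, fun h => absurd h hj⟩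
    choose z hzp using hz
    have hzIoo : ∀ j, j ≤ n + 1 → z j ∈ Ioo α β := fun j hj =>
      ⟨lt_of_le_of_lt (hmem j (by omega)).1 (hzp j hj).1.1,
        lt_of_lt_of_le (hzp j hj).1.2 (hmem (j+1) (by omega)).2⟩
    have hzmono : ∀ i, i ≤ n → z i < z (i + 1) := fun i hi =>
      lt_trans (hzp i (by omega)).1.2 (hzp (i+1) (by omega)).1.1
    have hsub : Icc (z 0) (z (n + 1)) ⊆ Ioo α β := fun t ht =>
      ⟨lt_of_lt_of_le (hzIoo 0 (by omega)).1 ht.1, lt_of_le_of_lt ht.2 (hzIoo (n+1) (by omega)).2⟩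
    have hf1cont : ContinuousOn (f 1) (Icc (z 0) (z (n + 1))) := fun t ht =>
      ((hderiv 1 (by omega) t (hsub ht)).continuousAt).continuousWithinAt
    obtain ⟨ξ, hξ, hfξ⟩ := ih (fun j => f (j + 1)) (z 0) (z (n + 1)) z hzmono
      (fun j hj => ⟨chain_mono hzmono j hj 0 (Nat.zero_le _),
        chain_mono hzmono (n+1) le_rfl j hj⟩)
      hf1cont
      (fun j hj t ht => hderiv (j + 1) (by omega) t
        (⟨lt_trans (hzIoo 0 (by omega)).1 ht.1, lt_trans ht.2 (hzIoo (n+1) (by omega)).2⟩))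
      (fun j hj => (hzp j hj).2)
    exact ⟨ξ, ⟨lt_trans (hzIoo 0 (by omega)).1 hξ.1, lt_trans hξ.2 (hzIoo (n+1) (by omega)).2⟩, hfξ⟩

private lemma prod_range_fac (i : ℕ) :
    ∏ j ∈ Finset.range i, ((i : ℝ) - j) = i.factorial := by
  have := Finset.prod_range_reflect (fun j => ((i : ℝ) - j)) i
  rw [← this]
  have : ∀ j ∈ Finset.range i, ((i : ℝ) - ((i - 1 - j : ℕ) : ℝ)) = ((j + 1 : ℕ) : ℝ) := by
    intro j hj
    have hj' : j < i := Finset.mem_range.mp hj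
    have h1 : i - 1 - j = i - (1 + j) := by omega
    rw [h1, Nat.cast_sub (by omega : 1 + j ≤ i)]
    push_cast
    ring
  rw [Finset.prod_congr rfl this]
  rw [← Nat.cast_prod]
  norm_cast
  exact Finset.prod_range_add_one_eq_factorial i

private lemma prod_Ico_fac (i k : ℕ) (hik : i ≤ k) :
    ∏ j ∈ Finset.Ico (i + 1) (k + 1), ((i : ℝ) - j) =
      (-1 : ℝ) ^ (k - i) * (k - i).factorial := by
  rw [Finset.prod_Ico_eq_prod_range]
  have hlen : k + 1 - (i + 1) = k - i := by omega
  rw [hlen]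
  have : ∀ j ∈ Finset.range (k - i), ((i : ℝ) - ((i + 1 + j : ℕ) : ℝ)) = (-1) * ((j + 1 : ℕ) : ℝ) := by
    intro j hj; push_cast; ring
  rw [Finset.prod_congr rfl this, Finset.prod_mul_distrib, Finset.prod_const,
    Finset.card_range, ← Nat.cast_prod, Finset.prod_range_add_one_eq_factorial]

private lemma prod_erase_fac (i k : ℕ) (hik : i ≤ k) :
    ∏ j ∈ (Finset.range (k + 1)).erase i, ((i : ℝ) - j) =
      (-1 : ℝ) ^ (k - i) * i.factorial * (k - i).factorial := by
  have hsplit : (Finset.range (k + 1)).erase i =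
      Finset.range i ∪ Finset.Ico (i + 1) (k + 1) := by
    ext j
    simp only [Finset.mem_erase, Finset.mem_range, Finset.mem_union, Finset.mem_Ico]
    omega
  have hdisj : Disjoint (Finset.range i) (Finset.Ico (i + 1) (k + 1)) := by
    rw [Finset.disjoint_left]
    intro j hj hj'
    simp only [Finset.mem_range] at hj
    simp only [Finset.mem_Ico] at hj'
    omega
  rw [hsplit, Finset.prod_union hdisj, prod_range_fac, prod_Ico_fac i k hik]
  ring

private lemma eqon_iteratedDerivWithin_of_isOpen (u : ℝ → ℝ) (n : ℕ) {s : Set ℝ}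
    (hs : IsOpen s) : Set.EqOn (iteratedDerivWithin n u s) (iteratedDeriv n u) s := by
  intro x hx
  simp only [iteratedDerivWithin, iteratedDeriv]
  rw [iteratedFDerivWithin_of_isOpen n hs hx]

private lemma hasDerivAt_iteratedDeriv_open {s : Set ℝ} (hs : IsOpen s) {u : ℝ → ℝ}
    {n m : ℕ} (hu : ContDiffOn ℝ n u s) (hm : m < n) {x : ℝ} (hx : x ∈ s) :
    HasDerivAt (iteratedDeriv m u) (iteratedDeriv (m + 1) u x) x := by
  have hdo : DifferentiableOn ℝ (iteratedDerivWithin m u s) s :=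
    hu.differentiableOn_iteratedDerivWithin (by exact_mod_cast hm) hs.uniqueDiffOn
  have h1 : DifferentiableAt ℝ (iteratedDerivWithin m u s) x :=
    (hdo x hx).differentiableAt (hs.mem_nhds hx)
  have heq : iteratedDerivWithin m u s =ᶠ[nhds x] iteratedDeriv m u :=
    Filter.eventuallyEq_of_mem (hs.mem_nhds hx) (eqon_iteratedDerivWithin_of_isOpen u m hs)
  have h2 : DifferentiableAt ℝ (iteratedDeriv m u) x := by
    rw [← Filter.EventuallyEq.differentiableAt_iff heq]; exact h1
  rw [iteratedDeriv_succ]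
  exact h2.hasDerivAt

private lemma iteratedDerivWithin_eq_iteratedDeriv_open {D s : Set ℝ} (hs : IsOpen s)
    (hsub : s ⊆ D) {x : ℝ} (hx : x ∈ s) (u : ℝ → ℝ) (n : ℕ) :
    iteratedDerivWithin n u D x = iteratedDeriv n u x := by
  have h1 : iteratedFDerivWithin ℝ n u (D ∩ s) x = iteratedFDerivWithin ℝ n u D x :=
    iteratedFDerivWithin_inter_open hs hx
  rw [Set.inter_eq_self_of_subset_right hsub] at h1
  simp only [iteratedDerivWithin, iteratedDeriv, ← h1]
  rw [iteratedFDerivWithin_of_isOpen n hs hx]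

private def nd (a h : ℝ) (ℓ j : ℕ) : ℝ := a - ℓ * h + j * h

private lemma key_lemma (k : ℕ) (hk : 1 ≤ k) (h a : ℝ) (hh : 0 < h) (u : ℝ → ℝ)
    (hu : ContDiffOn ℝ (k + 1) u (Icc (a - ((k : ℝ) - 1) * h) (a + k * h)))
    (ℓ : ℕ) (hℓ : ℓ < k) (i : ℕ) (hik : i ≤ k)
    (P : Polynomial ℝ) (hdeg : P.natDegree ≤ k)
    (hP : ∀ j ∈ Finset.range (k + 1),
      P.eval (nd a h ℓ j) = ∫ s in (a - ℓ * h)..(nd a h ℓ j), u s) :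
    ∃ ξ ∈ Ioo (a - ℓ * h) (a + ((k : ℝ) - ℓ) * h),
      (Polynomial.derivative P).eval (nd a h ℓ i) =
        u (nd a h ℓ i) -
          (-1 : ℝ) ^ (k - i) * (i.factorial : ℝ) * ((k - i).factorial : ℝ) * h ^ k
            / ((k + 1).factorial : ℝ)
            * iteratedDerivWithin k u (Icc (a - ((k : ℝ) - 1) * h) (a + k * h)) ξ := by
  have hkR : (1 : ℝ) ≤ k := by exact_mod_cast hk
  have hℓR : (ℓ : ℝ) + 1 ≤ k := by exact_mod_cast hℓ
  set lo := a - ((k : ℝ) - 1) * h with hlo_def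
  set hi := a + k * h with hhi_def
  set D := Icc lo hi with hD_def
  set O := Ioo lo hi with hO_def
  have hO_open : IsOpen O := isOpen_Ioo
  have hOD : O ⊆ D := Ioo_subset_Icc_self
  -- nodes
  have hymono : ∀ p q : ℕ, p < q → nd a h ℓ p < nd a h ℓ q := by
    intro p q hpq
    have : (p : ℝ) < q := by exact_mod_cast hpq
    simp only [nd]
    nlinarith
  have hymono' : ∀ p q : ℕ, p ≤ q → nd a h ℓ p ≤ nd a h ℓ q := by
    intro p q hpq
    rcases eq_or_lt_of_le hpq with rfl | hlt
    · rfl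
    · exact (hymono p q hlt).le
  have hnd0 : nd a h ℓ 0 = a - ℓ * h := by simp [nd]
  have hndk : nd a h ℓ k = a + ((k : ℝ) - ℓ) * h := by simp only [nd]; ring
  have hlo0 : lo ≤ nd a h ℓ 0 := by rw [hnd0, hlo_def]; nlinarith
  have hykhi : nd a h ℓ k ≤ hi := by rw [hndk, hhi_def]; nlinarith [Nat.cast_nonneg (α := ℝ) ℓ]
  have hIccD : Icc (nd a h ℓ 0) (nd a h ℓ k) ⊆ D := Icc_subset_Icc hlo0 hykhi
  have hIooO : Ioo (nd a h ℓ 0) (nd a h ℓ k) ⊆ O := Ioo_subset_Ioo hlo0 hykhi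
  have hucD : ContinuousOn u D := hu.continuousOn
  have huO : ContDiffOn ℝ ((k + 1 : ℕ)) u O := by
    have := hu.mono hOD
    exact_mod_cast this
  -- the node polynomial
  set w : Polynomial ℝ := ∏ j ∈ Finset.range (k + 1), (X - C (nd a h ℓ j)) with hw_def
  set wr : Polynomial ℝ :=
    ∏ j ∈ (Finset.range (k + 1)).erase i, (X - C (nd a h ℓ j)) with hwr_def
  have hi_mem : i ∈ Finset.range (k + 1) := Finset.mem_range.mpr (by omega)
  have hw_fact : w = (X - C (nd a h ℓ i)) * wr := (Finset.mul_prod_erase _ _ hi_mem).symm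
  set W : ℝ := wr.eval (nd a h ℓ i) with hW_def
  have hW_eval : (derivative w).eval (nd a h ℓ i) = W := by
    rw [hw_fact, derivative_mul]
    simp [hW_def]
  have hW_val : W = (-1 : ℝ) ^ (k - i) * (i.factorial : ℝ) * ((k - i).factorial : ℝ) * h ^ k := by
    rw [hW_def, hwr_def, eval_prod]
    have hterm : ∀ j ∈ (Finset.range (k + 1)).erase i,
        (X - C (nd a h ℓ j)).eval (nd a h ℓ i) = ((i : ℝ) - j) * h := by
      intro j _
      simp only [eval_sub, eval_X, eval_C, nd]
      ring
    rw [Finset.prod_congr rfl hterm, Finset.prod_mul_distrib, Finset.prod_const,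
      Finset.card_erase_of_mem hi_mem, Finset.card_range]
    have hc : k + 1 - 1 = k := by omega
    rw [hc, prod_erase_fac i k hik]
  have hW_ne : W ≠ 0 := by
    rw [hW_val]
    have h1 : ((-1 : ℝ)) ^ (k - i) ≠ 0 := by
      apply pow_ne_zero; norm_num
    have h2 : (i.factorial : ℝ) ≠ 0 := by exact_mod_cast i.factorial_ne_zero
    have h3 : (((k - i).factorial : ℕ) : ℝ) ≠ 0 := by exact_mod_cast (k - i).factorial_ne_zero
    have h4 : h ^ k ≠ 0 := pow_ne_zero _ hh.ne'
    exact mul_ne_zero (mul_ne_zero (mul_ne_zero h1 h2) h3) h4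
  set lam : ℝ := (u (nd a h ℓ i) - (derivative P).eval (nd a h ℓ i)) / W with hlam_def
  set g : ℝ → ℝ :=
    fun x => (∫ s in (nd a h ℓ 0)..x, u s) - P.eval x - lam * w.eval x with hg_def
  -- interval integrability
  have hy0yk : nd a h ℓ 0 ≤ nd a h ℓ k := hymono' 0 k (by omega)
  have hint : ∀ x ∈ Icc (nd a h ℓ 0) (nd a h ℓ k), IntervalIntegrable u
      MeasureTheory.volume (nd a h ℓ 0) x := by
    intro x hx
    apply ContinuousOn.intervalIntegrable
    apply hucD.mono
    rw [uIcc_of_le hx.1]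
    exact (Icc_subset_Icc le_rfl hx.2).trans hIccD
  -- continuity of g
  have hgcont : ContinuousOn g (Icc (nd a h ℓ 0) (nd a h ℓ k)) := by
    have hprim : ContinuousOn (fun x => ∫ s in (nd a h ℓ 0)..x, u s)
        (Icc (nd a h ℓ 0) (nd a h ℓ k)) := by
      have := intervalIntegral.continuousOn_primitive_interval'
        (hint (nd a h ℓ k) ⟨hy0yk, le_rfl⟩) left_mem_uIcc
      rwa [uIcc_of_le hy0yk] at this
    simp only [hg_def]
    exact (hprim.sub (Polynomial.continuous P).continuousOn).sub
      (continuousOn_const.mul (Polynomial.continuous w).continuousOn)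
  -- g vanishes at the nodes
  have hgzero : ∀ j, j ≤ k → g (nd a h ℓ j) = 0 := by
    intro j hj
    have hwz : w.eval (nd a h ℓ j) = 0 := by
      rw [hw_def, eval_prod]
      apply Finset.prod_eq_zero (Finset.mem_range.mpr (by omega : j < k + 1))
      simp
    have hPj := hP j (Finset.mem_range.mpr (by omega))
    simp [hg_def, hwz, hnd0, hPj]
  -- derivative of g
  set phi : ℝ → ℝ :=
    fun x => u x - (derivative P).eval x - lam * (derivative w).eval x with hphi_def
  have hgderiv : ∀ t ∈ Ioo (nd a h ℓ 0) (nd a h ℓ k), HasDerivAt g (phi t) t := by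
    intro t ht
    have htO : t ∈ O := hIooO ht
    have hDnhds : D ∈ nhds t := by
      rw [hD_def]
      exact Icc_mem_nhds htO.1 htO.2
    have h1 : HasDerivAt (fun x => ∫ s in (nd a h ℓ 0)..x, u s) (u t) t := by
      apply intervalIntegral.integral_hasDerivAt_right (hint t ⟨ht.1.le, ht.2.le⟩)
      · exact (hucD.mono hOD).stronglyMeasurableAtFilter hO_open t htO
      · exact hucD.continuousAt hDnhds
    have h2 := Polynomial.hasDerivAt P t
    have h3 := (Polynomial.hasDerivAt w t).const_mul lam
    simp only [hg_def, hphi_def]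
    exact (h1.sub h2).sub h3
  -- phi vanishes at the evaluation node
  have hphinode : phi (nd a h ℓ i) = 0 := by
    simp only [hphi_def]
    rw [hW_eval, hlam_def]
    field_simp
    ring
  -- Rolle points
  have hr : ∀ j : ℕ, ∃ r, j < k → r ∈ Ioo (nd a h ℓ j) (nd a h ℓ (j + 1)) ∧ phi r = 0 := by
    intro j
    by_cases hj : j < k
    · obtain ⟨r, hr1, hr2⟩ := exists_hasDerivAt_eq_zero (hymono j (j + 1) (by omega))
        (hgcont.mono (Icc_subset_Icc (hymono' 0 j (by omega)) (hymono' (j + 1) k (by omega))))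
        ((hgzero j (by omega)).trans (hgzero (j + 1) (by omega)).symm)
        (fun t ht => hgderiv t ⟨lt_of_le_of_lt (hymono' 0 j (by omega)) ht.1,
          lt_of_lt_of_le ht.2 (hymono' (j + 1) k (by omega))⟩)
      exact ⟨r, fun _ => ⟨hr1, hr2⟩⟩
    · exact ⟨0, fun hc => absurd hc hj⟩
  choose r hrp using hr
  have hrIoo : ∀ j, j < k → r j ∈ Ioo (nd a h ℓ j) (nd a h ℓ (j + 1)) :=
    fun j hj => (hrp j hj).1
  -- merged zero sequence
  set z : ℕ → ℝ := fun j => if j < i then r j else if j = i then nd a h ℓ i else r (j - 1)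
    with hz_def
  have hzval : ∀ j, j ≤ k → phi (z j) = 0 := by
    intro j hj
    simp only [hz_def]
    by_cases h1 : j < i
    · rw [if_pos h1]
      exact (hrp j (by omega)).2
    · by_cases h2 : j = i
      · rw [if_neg h1, if_pos h2]
        exact hphinode
      · rw [if_neg h1, if_neg h2]
        exact (hrp (j - 1) (by omega)).2
  have hzmem : ∀ j, j ≤ k → z j ∈ Icc (nd a h ℓ 0) (nd a h ℓ k) := by
    intro j hj
    simp only [hz_def]
    by_cases h1 : j < i
    · have := hrIoo j (by omega)
      rw [if_pos h1]
      exact ⟨(hymono' 0 j (by omega)).trans this.1.le,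
        this.2.le.trans (hymono' (j + 1) k (by omega))⟩
    · by_cases h2 : j = i
      · rw [if_neg h1, if_pos h2]
        exact ⟨hymono' 0 i (by omega), hymono' i k (by omega)⟩
      · have := hrIoo (j - 1) (by omega)
        rw [if_neg h1, if_neg h2]
        exact ⟨(hymono' 0 (j - 1) (by omega)).trans this.1.le,
          this.2.le.trans (hymono' (j - 1 + 1) k (by omega))⟩
  have hzmono : ∀ j, j ≤ k - 1 → z j < z (j + 1) := by
    intro j hj
    simp only [hz_def]
    by_cases h1 : j + 1 < i
    · rw [if_pos (by omega : j < i), if_pos h1]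
      exact (hrIoo j (by omega)).2.trans (hrIoo (j + 1) (by omega)).1
    · by_cases h2 : j + 1 = i
      · rw [if_pos (by omega : j < i), if_neg (by omega : ¬ j + 1 < i), if_pos h2, ← h2]
        exact (hrIoo j (by omega)).2
      · by_cases h3 : j = i
        · rw [if_neg (by omega : ¬ j < i), if_pos h3,
            if_neg (by omega : ¬ j + 1 < i), if_neg (by omega : ¬ j + 1 = i)]
          have he : j + 1 - 1 = j := by omega
          rw [he, ← h3]
          exact (hrIoo j (by omega)).1
        · rw [if_neg (by omega : ¬ j < i), if_neg h3,
            if_neg (by omega : ¬ j + 1 < i), if_neg (by omega : ¬ j + 1 = i)]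
          have he : j + 1 - 1 = j := by omega
          have he2 : j - 1 + 1 = j := by omega
          rw [he]
          calc r (j - 1) < nd a h ℓ (j - 1 + 1) := (hrIoo (j - 1) (by omega)).2
            _ = nd a h ℓ j := by rw [he2]
            _ < r j := (hrIoo j (by omega)).1
  -- the derivative chain
  set F : ℕ → ℝ → ℝ := fun j x => iteratedDeriv j u x
      - (derivative^[j] (derivative P)).eval x
      - lam * (derivative^[j] (derivative w)).eval x with hF_def
  have hF0 : F 0 = phi := by
    funext x
    simp [hF_def, hphi_def, iteratedDeriv_zero]
  have hFcont : ContinuousOn (F 0) (Icc (nd a h ℓ 0) (nd a h ℓ k)) := by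
    rw [hF0]
    simp only [hphi_def]
    exact (((hucD.mono hIccD).sub (Polynomial.continuous _).continuousOn).sub
      (continuousOn_const.mul (Polynomial.continuous _).continuousOn))
  have hFderiv : ∀ j, j ≤ k - 1 → ∀ t ∈ Ioo (nd a h ℓ 0) (nd a h ℓ k),
      HasDerivAt (F j) (F (j + 1) t) t := by
    intro j hj t ht
    have h1 : HasDerivAt (iteratedDeriv j u) (iteratedDeriv (j + 1) u t) t :=
      hasDerivAt_iteratedDeriv_open hO_open huO (by omega) (hIooO ht)
    have h2 := Polynomial.hasDerivAt (derivative^[j] (derivative P)) t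
    have h3 := (Polynomial.hasDerivAt (derivative^[j] (derivative w)) t).const_mul lam
    have hcomb := (h1.sub h2).sub h3
    simp only [hF_def, Function.iterate_succ_apply']
    exact hcomb
  -- iterated Rolle
  have hkk : k - 1 + 1 = k := Nat.sub_add_cancel hk
  obtain ⟨ξ, hξIoo, hξ0⟩ := rolle_iter (k - 1) F (nd a h ℓ 0) (nd a h ℓ k) z
    hzmono (fun j hj => hzmem j (by omega)) hFcont hFderiv
    (fun j hj => by rw [hF0]; exact hzval j (by omega))
  rw [hkk] at hξ0
  -- compute top derivatives of the polynomials
  have hQtop : derivative^[k] (derivative P) = 0 := by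
    rw [← Function.iterate_succ_apply]
    exact iterate_derivative_eq_zero (by omega)
  have hwmonic : w.Monic := monic_prod_of_monic _ _ (fun j _ => monic_X_sub_C _)
  have hwdeg : w.natDegree = k + 1 := by
    rw [hw_def, natDegree_prod _ _ (fun j _ => X_sub_C_ne_zero (nd a h ℓ j))]
    simp [natDegree_X_sub_C]
  have hwtop : derivative^[k] (derivative w) = C (((k + 1).factorial : ℕ) : ℝ) := by
    rw [← Function.iterate_succ_apply]
    have hXw : derivative^[k + 1] w
        = derivative^[k + 1] ((X : Polynomial ℝ) ^ (k + 1))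
          - derivative^[k + 1] ((X : Polynomial ℝ) ^ (k + 1) - w) := by
      rw [← iterate_derivative_sub]
      congr 1
      ring
    have hzero : derivative^[k + 1] ((X : Polynomial ℝ) ^ (k + 1) - w) = 0 := by
      by_cases hz : (X : Polynomial ℝ) ^ (k + 1) - w = 0
      · rw [hz, iterate_derivative_zero]
      · apply iterate_derivative_eq_zero
        have hdw : w.degree = ((k + 1 : ℕ) : WithBot ℕ) := by
          rw [degree_eq_natDegree hwmonic.ne_zero, hwdeg]
        have hlt := degree_sub_lt (p := (X : Polynomial ℝ) ^ (k + 1)) (q := w)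
          (by rw [degree_X_pow, hdw])
          (show (X : Polynomial ℝ) ^ (k + 1) ≠ 0 from pow_ne_zero _ X_ne_zero)
          (by simp [leadingCoeff_X_pow, hwmonic.leadingCoeff])
        rw [degree_X_pow] at hlt
        exact (natDegree_lt_iff_degree_lt hz).mpr (by exact_mod_cast hlt)
    rw [hXw, hzero, sub_zero, iterate_derivative_X_pow_eq_C_mul]
    have hdf : (k + 1).descFactorial (k + 1) = (k + 1).factorial := Nat.descFactorial_self _
    have hdf2 : (k + 1).descFactorial k = (k + 1).factorial := by
      have h1 := Nat.descFactorial_succ (k + 1) k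
      have h2 : k + 1 - k = 1 := by omega
      rw [h2, one_mul] at h1
      rw [← h1]
      exact hdf
    simp [hdf, hdf2]
  -- extract the value of lam
  have hfac_ne : (((k + 1).factorial : ℕ) : ℝ) ≠ 0 := by
    exact_mod_cast (k + 1).factorial_ne_zero
  have hfinal : iteratedDeriv k u ξ = lam * (((k + 1).factorial : ℕ) : ℝ) := by
    have hh0 := hξ0
    simp only [hF_def, hQtop, hwtop, eval_zero, eval_C] at hh0
    linarith
  have hlamW : u (nd a h ℓ i) - (derivative P).eval (nd a h ℓ i) = lam * W := by
    rw [hlam_def]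
    field_simp
  -- conclusion
  refine ⟨ξ, ?_, ?_⟩
  · rw [← hnd0, ← hndk]
    exact hξIoo
  · have hV : iteratedDerivWithin k u D ξ = iteratedDeriv k u ξ :=
      iteratedDerivWithin_eq_iteratedDeriv_open hO_open hOD (hIooO hξIoo) u k
    have hc2 : (-1 : ℝ) ^ (k - i) * (i.factorial : ℝ) * ((k - i).factorial : ℝ) * h ^ k
        / ((k + 1).factorial : ℝ) * iteratedDerivWithin k u D ξ = lam * W := by
      rw [hV, hfinal, hW_val]
      field_simp
    linear_combination hc2 - hlamW

/-- Error estimate for weighted (WENO-type) finite-volume reconstructions built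
from the `k` left-shifted stencils of `k` cells around the cell `[a, a+h]`,
with consistent weights. -/
theorem weighted_reconstruction_error
    (k : ℕ) (hk : 1 ≤ k) (h a : ℝ) (hh : 0 < h)
    (u : ℝ → ℝ)
    (hu : ContDiffOn ℝ (k + 1) u (Icc (a - ((k : ℝ) - 1) * h) (a + k * h)))
    (Q : ℕ → Polynomial ℝ)
    (hdeg : ∀ ℓ < k, (Q ℓ).natDegree ≤ k)
    (hinterp : ∀ ℓ < k, ∀ j ∈ Finset.range (k + 1),
      (Q ℓ).eval (a - ℓ * h + j * h) = ∫ s in (a - ℓ * h)..(a - ℓ * h + j * h), u s)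
    (bt b : ℕ → ℝ)
    (hbt : ∑ ℓ ∈ Finset.range k, bt ℓ = 1)
    (hb : ∑ ℓ ∈ Finset.range k, b ℓ = 1) :
    ∃ ξt ξ : ℕ → ℝ,
      (∀ ℓ < k, ξt ℓ ∈ Ioo (a - ℓ * h) (a + ((k : ℝ) - ℓ) * h)
          ∧ ξ ℓ ∈ Ioo (a - ℓ * h) (a + ((k : ℝ) - ℓ) * h)) ∧
      (∑ ℓ ∈ Finset.range k, bt ℓ * (Polynomial.derivative (Q ℓ)).eval a)
        = u a - ((-h) ^ k / (Nat.factorial (k + 1) : ℝ))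
            * ∑ ℓ ∈ Finset.range k,
                bt ℓ * ((-1 : ℝ) ^ ℓ * (Nat.factorial ℓ) * (Nat.factorial (k - ℓ)))
                  * iteratedDerivWithin k u (Icc (a - ((k : ℝ) - 1) * h) (a + k * h)) (ξt ℓ) ∧
      (∑ ℓ ∈ Finset.range k, b ℓ * (Polynomial.derivative (Q ℓ)).eval (a + h))
        = u (a + h) - ((-h) ^ k / (Nat.factorial (k + 1) : ℝ))
            * ∑ ℓ ∈ Finset.range k,
                b ℓ * ((-1 : ℝ) ^ (ℓ + 1) * (Nat.factorial (ℓ + 1)) * (Nat.factorial (k - ℓ - 1)))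
                  * iteratedDerivWithin k u (Icc (a - ((k : ℝ) - 1) * h) (a + k * h)) (ξ ℓ) := by
  set D := Icc (a - ((k : ℝ) - 1) * h) (a + k * h) with hD_def
  have hsign : ∀ m : ℕ, m ≤ k → (-1 : ℝ) ^ (k - m) * h ^ k = (-h) ^ k * (-1) ^ m := by
    intro m hm
    have h2 : (-1 : ℝ) ^ k = (-1) ^ (k - m) * (-1) ^ m := by
      rw [← pow_add]
      congr 1
      omega
    have h3 : (-1 : ℝ) ^ m * (-1) ^ m = 1 := by
      rw [← pow_add, ← two_mul, pow_mul]
      norm_num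
    conv_rhs => rw [neg_pow, h2]
    calc (-1 : ℝ) ^ (k - m) * h ^ k
        = (-1) ^ (k - m) * ((-1) ^ m * (-1) ^ m) * h ^ k := by rw [h3]; ring
      _ = (-1) ^ (k - m) * (-1) ^ m * h ^ k * (-1) ^ m := by ring
  have Hmain : ∀ ℓ : ℕ, ∃ pt : ℝ × ℝ, ℓ < k →
      (pt.1 ∈ Ioo (a - ℓ * h) (a + ((k : ℝ) - ℓ) * h) ∧
        (Polynomial.derivative (Q ℓ)).eval a =
          u a - (-1 : ℝ) ^ (k - ℓ) * (ℓ.factorial : ℝ) * ((k - ℓ).factorial : ℝ) * h ^ k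
            / ((k + 1).factorial : ℝ) * iteratedDerivWithin k u D pt.1) ∧
      (pt.2 ∈ Ioo (a - ℓ * h) (a + ((k : ℝ) - ℓ) * h) ∧
        (Polynomial.derivative (Q ℓ)).eval (a + h) =
          u (a + h) - (-1 : ℝ) ^ (k - (ℓ + 1)) * ((ℓ + 1).factorial : ℝ)
            * ((k - (ℓ + 1)).factorial : ℝ) * h ^ k
            / ((k + 1).factorial : ℝ) * iteratedDerivWithin k u D pt.2) := by
    intro ℓ
    by_cases hℓ : ℓ < k
    · obtain ⟨ξ1, hm1, he1⟩ := key_lemma k hk h a hh u hu ℓ hℓ ℓ (le_of_lt hℓ)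
        (Q ℓ) (hdeg ℓ hℓ) (hinterp ℓ hℓ)
      obtain ⟨ξ2, hm2, he2⟩ := key_lemma k hk h a hh u hu ℓ hℓ (ℓ + 1) (by omega)
        (Q ℓ) (hdeg ℓ hℓ) (hinterp ℓ hℓ)
      have hnda : nd a h ℓ ℓ = a := by simp only [nd]; ring
      have hndb : nd a h ℓ (ℓ + 1) = a + h := by simp only [nd]; push_cast; ring
      rw [hnda] at he1
      rw [hndb] at he2
      exact ⟨(ξ1, ξ2), fun _ => ⟨⟨hm1, he1⟩, ⟨hm2, he2⟩⟩⟩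
    · exact ⟨(0, 0), fun hc => absurd hc hℓ⟩
  choose pt hpt using Hmain
  refine ⟨fun ℓ => (pt ℓ).1, fun ℓ => (pt ℓ).2,
    fun ℓ hℓ => ⟨((hpt ℓ hℓ).1).1, ((hpt ℓ hℓ).2).1⟩, ?_, ?_⟩
  · have hsum1 : ∑ ℓ ∈ Finset.range k, bt ℓ * (Polynomial.derivative (Q ℓ)).eval a
        = ∑ ℓ ∈ Finset.range k, (bt ℓ * u a
            - ((-h) ^ k / ((k + 1).factorial : ℝ))
              * (bt ℓ * ((-1 : ℝ) ^ ℓ * (ℓ.factorial : ℝ) * ((k - ℓ).factorial : ℝ))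
                * iteratedDerivWithin k u D ((pt ℓ).1))) := by
      apply Finset.sum_congr rfl
      intro ℓ hℓ'
      have hℓ : ℓ < k := Finset.mem_range.mp hℓ'
      have heq := ((hpt ℓ hℓ).1).2
      have hs := hsign ℓ (le_of_lt hℓ)
      have hfac_ne : (((k + 1).factorial : ℕ) : ℝ) ≠ 0 := by
        exact_mod_cast (k + 1).factorial_ne_zero
      rw [heq]
      linear_combination (-(bt ℓ * iteratedDerivWithin k u D ((pt ℓ).1)
        * (ℓ.factorial : ℝ) * ((k - ℓ).factorial : ℝ) / ((k + 1).factorial : ℝ))) * hs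
    rw [hsum1, Finset.sum_sub_distrib, ← Finset.sum_mul, hbt, one_mul, ← Finset.mul_sum]
  · have hsum2 : ∑ ℓ ∈ Finset.range k, b ℓ * (Polynomial.derivative (Q ℓ)).eval (a + h)
        = ∑ ℓ ∈ Finset.range k, (b ℓ * u (a + h)
            - ((-h) ^ k / ((k + 1).factorial : ℝ))
              * (b ℓ * ((-1 : ℝ) ^ (ℓ + 1) * ((ℓ + 1).factorial : ℝ)
                  * ((k - ℓ - 1).factorial : ℝ))
                * iteratedDerivWithin k u D ((pt ℓ).2))) := by
      apply Finset.sum_congr rfl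
      intro ℓ hℓ'
      have hℓ : ℓ < k := Finset.mem_range.mp hℓ'
      have heq := ((hpt ℓ hℓ).2).2
      have hs := hsign (ℓ + 1) (by omega)
      have hfac_ne : (((k + 1).factorial : ℕ) : ℝ) ≠ 0 := by
        exact_mod_cast (k + 1).factorial_ne_zero
      have hix : k - (ℓ + 1) = k - ℓ - 1 := by omega
      rw [hix] at heq hs
      rw [heq]
      linear_combination (-(b ℓ * iteratedDerivWithin k u D ((pt ℓ).2)
        * ((ℓ + 1).factorial : ℝ) * ((k - ℓ - 1).factorial : ℝ) / ((k + 1).factorial : ℝ))) * hs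
    rw [hsum2, Finset.sum_sub_distrib, ← Finset.sum_mul, hb, one_mul, ← Finset.mul_sum]
end

section
/- Let k ≥ 1 be an integer, h > 0, and a ∈ ℝ. Denote the interface x* = a + h between the two adjacent cells I_i = [a, a+h] and I_{i+1} = [a+h, a+2h]. Let e : [a − (k−1)·h, a + (k+1)·h] → ℝ be 2k-times continuously differentiable. Let e⁻ be the value at x* of the reconstruction polynomial of e on the central stencil of 2k−1 cells centered on I_i (covering [a − (k−1)·h, a + k·h]), and let e⁺ be the value at x* of the reconstruction polynomial of e on the central stencil of 2k−1 cells centered on I_{i+1} (covering [a − (k−2)·h, a + (k+1)·h]). Then there exist ξ in the open interior of the first stencil interval, ξ′ in the open interior of the second stencil interval, and c strictly between ξ and ξ′ (if ξ ≠ ξ′), such that: (i) e⁻ − e⁺ = (−1)^k · h^{2k−1} · (k!·(k−1)!/(2k)!) · ( e^{(2k−1)}(ξ) + e^{(2k−1)}(ξ′) ), and (ii) e⁻ + e⁺ − 2·e(x*) = (−1)^{k+1} · h^{2k−1} · (k!·(k−1)!/(2k)!) · e^{(2k)}(c) · (ξ′ − ξ); in particular |e⁻ + e⁺ − 2·e(x*)|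 ≤ 2k · h^{2k} · (k!·(k−1)!/(2k)!) · sup_{[a−(k−1)h, a+(k+1)h]} |e^{(2k)}|. -/
open Set Polynomial intervalIntegral Topology
open Finset

lemma contDiff_polyEval (n : WithTop ℕ∞) (p : Polynomial ℝ) :
    ContDiff ℝ n fun x => p.eval x := by
  have : (fun x : ℝ => p.eval x)
      = fun x => ∑ i ∈ Finset.range (p.natDegree + 1), p.coeff i * x ^ i := by
    funext x; rw [Polynomial.eval_eq_sum_range]
  rw [this]
  exact ContDiff.sum fun i _ => contDiff_const.mul (contDiff_id.pow i)

lemma rolle_step_s9 {lo hi : ℝ} (hlt : lo < hi) {F : ℝ → ℝ} {N : ℕ}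
    (hF : ContDiffOn ℝ N F (Set.Icc lo hi)) {m : ℕ} (hm : m < N) {α β : ℝ}
    (hα : α ∈ Set.Icc lo hi) (hβ : β ∈ Set.Icc lo hi) (hab : α < β)
    (h0 : iteratedDerivWithin m F (Set.Icc lo hi) α = 0)
    (h0' : iteratedDerivWithin m F (Set.Icc lo hi) β = 0) :
    ∃ γ ∈ Set.Ioo α β, iteratedDerivWithin (m + 1) F (Set.Icc lo hi) γ = 0 := by
  have hu : UniqueDiffOn ℝ (Set.Icc lo hi) := uniqueDiffOn_Icc hlt
  have hcont : ContinuousOn (iteratedDerivWithin m F (Set.Icc lo hi)) (Set.Icc lo hi) :=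
    hF.continuousOn_iteratedDerivWithin (by exact_mod_cast hm.le) hu
  obtain ⟨γ, hγ, hγ0⟩ := exists_deriv_eq_zero hab
    (hcont.mono (Set.Icc_subset_Icc hα.1 hβ.2)) (h0.trans h0'.symm)
  have hγS : γ ∈ Set.Icc lo hi := ⟨hα.1.trans hγ.1.le, hγ.2.le.trans hβ.2⟩
  have hnhds : Set.Icc lo hi ∈ 𝓝 γ :=
    Icc_mem_nhds (lt_of_le_of_lt hα.1 hγ.1) (lt_of_lt_of_le hγ.2 hβ.2)
  refine ⟨γ, hγ, ?_⟩
  rw [iteratedDerivWithin_succ, derivWithin_of_mem_nhds hnhds, hγ0]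

lemma iterated_rolle_s9 {lo hi : ℝ} (hlt : lo < hi) {F : ℝ → ℝ} {N : ℕ}
    (hF : ContDiffOn ℝ N F (Set.Icc lo hi)) :
    ∀ (c m : ℕ), m + c < N → ∀ z : Fin (c + 2) → ℝ, StrictMono z →
      (∀ i, z i ∈ Set.Icc lo hi) →
      (∀ i, iteratedDerivWithin m F (Set.Icc lo hi) (z i) = 0) →
      ∃ ξ ∈ Set.Ioo (z 0) (z (Fin.last (c + 1))),
        iteratedDerivWithin (m + c + 1) F (Set.Icc lo hi) ξ = 0 := by
  intro c
  induction c with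
  | zero =>
    intro m hm z hz hzS hz0
    have h01 : (0 : Fin 2) < Fin.last 1 := by decide
    obtain ⟨γ, hγ, hG⟩ := rolle_step_s9 hlt hF (by omega : m < N) (hzS 0) (hzS (Fin.last 1))
      (hz h01) (hz0 0) (hz0 _)
    exact ⟨γ, hγ, hG⟩
  | succ c ih =>
    intro m hm z hz hzS hz0
    have step : ∀ i : Fin (c + 2), ∃ γ ∈ Set.Ioo (z i.castSucc) (z i.succ),
        iteratedDerivWithin (m + 1) F (Set.Icc lo hi) γ = 0 := fun i =>
      rolle_step_s9 hlt hF (by omega) (hzS _) (hzS _) (hz (Fin.castSucc_lt_succ : i.castSucc < i.succ))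
        (hz0 _) (hz0 _)
    choose w hw hw0 using step
    have hwS : ∀ i, w i ∈ Set.Icc lo hi := fun i =>
      ⟨(hzS i.castSucc).1.trans (hw i).1.le, (hw i).2.le.trans (hzS i.succ).2⟩
    have hwmono : StrictMono w := by
      rw [Fin.strictMono_iff_lt_succ]
      intro i
      calc w i.castSucc < z i.castSucc.succ := (hw i.castSucc).2
        _ = z i.succ.castSucc := by rw [Fin.succ_castSucc]
        _ < w i.succ := (hw i.succ).1
    obtain ⟨ξ, hξ, hξ0⟩ := ih (m + 1) (by omega) w hwmono hwS hw0
    refine ⟨ξ, ⟨?_, ?_⟩, ?_⟩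
    · calc z 0 = z (Fin.castSucc 0) := by norm_num
        _ < w 0 := (hw 0).1
        _ < ξ := hξ.1
    · calc ξ < w (Fin.last (c + 1)) := hξ.2
        _ < z (Fin.last (c + 1)).succ := (hw _).2
        _ = z (Fin.last (c + 2)) := by rw [Fin.succ_last]
    · rw [show m + (c + 1) + 1 = m + 1 + c + 1 by omega]
      exact hξ0
lemma nodal_prod_eval (n j : ℕ) (hj : j < n) (b h : ℝ) :
    ∏ i ∈ (Finset.range n).erase j, ((b + (j : ℝ) * h) - (b + (i : ℝ) * h))
      = (-1 : ℝ) ^ (n - 1 - j) * j.factorial * (n - 1 - j).factorial * h ^ (n - 1) := by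
  have hsplit : (Finset.range n).erase j = Finset.range j ∪ Finset.Ico (j + 1) n := by
    ext i
    simp only [Finset.mem_erase, Finset.mem_range, Finset.mem_union, Finset.mem_Ico]
    omega
  have hterm : ∀ i, (b + (j : ℝ) * h) - (b + (i : ℝ) * h) = ((j : ℝ) - i) * h := by
    intro i; ring
  calc ∏ i ∈ (Finset.range n).erase j, ((b + (j : ℝ) * h) - (b + (i : ℝ) * h))
      = ∏ i ∈ (Finset.range n).erase j, (((j : ℝ) - i) * h) :=
        Finset.prod_congr rfl fun i _ => hterm i
    _ = (∏ i ∈ (Finset.range n).erase j, ((j : ℝ) - i)) * h ^ (n - 1) := by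
        rw [Finset.prod_mul_distrib, Finset.prod_const,
          Finset.card_erase_of_mem (Finset.mem_range.mpr hj), Finset.card_range]
    _ = ((∏ i ∈ Finset.range j, ((j : ℝ) - i)) * ∏ i ∈ Finset.Ico (j + 1) n, ((j : ℝ) - i))
          * h ^ (n - 1) := by
        rw [hsplit, Finset.prod_union (by
          simp only [Finset.disjoint_left, Finset.mem_range, Finset.mem_Ico]
          omega)]
    _ = (-1 : ℝ) ^ (n - 1 - j) * j.factorial * (n - 1 - j).factorial * h ^ (n - 1) := by
        have h1 : (∏ i ∈ Finset.range j, ((j : ℝ) - i)) = j.factorial := by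
          rw [show ((j.factorial : ℝ)) = ((∏ i ∈ Finset.range j, (i + 1) : ℕ) : ℝ) by
            rw [Finset.prod_range_add_one_eq_factorial]]
          push_cast
          rw [← Finset.prod_range_reflect]
          refine Finset.prod_congr rfl fun i hi => ?_
          rw [Finset.mem_range] at hi
          rw [← Nat.cast_sub (by omega : j - 1 - i ≤ j),
            show j - (j - 1 - i) = i + 1 by omega]
          push_cast; ring
        have h2 : (∏ i ∈ Finset.Ico (j + 1) n, ((j : ℝ) - i))
            = (-1 : ℝ) ^ (n - 1 - j) * (n - 1 - j).factorial := by
          rw [Finset.prod_Ico_eq_prod_range]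
          have hterm2 : ∀ i ∈ Finset.range (n - (j + 1)), ((j : ℝ) - ((j + 1 + i : ℕ) : ℝ))
              = (-1) * ((i : ℝ) + 1) := by
            intro i _; push_cast; ring
          rw [Finset.prod_congr rfl hterm2, Finset.prod_mul_distrib, Finset.prod_const,
            Finset.card_range, show n - (j + 1) = n - 1 - j by omega]
          congr 1
          rw [show (((n - 1 - j).factorial : ℝ))
              = ((∏ i ∈ Finset.range (n - 1 - j), (i + 1) : ℕ) : ℝ) by
            rw [Finset.prod_range_add_one_eq_factorial]]
          push_cast
          rfl
        rw [h1, h2]; ring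

lemma core_reconstruction
    {n j : ℕ} (hn : 2 ≤ n) (hj : j < n) {h lo hi b : ℝ} (hh : 0 < h) (hlt : lo < hi)
    (hlob : lo ≤ b) (hbhi : b + ((n : ℝ) - 1) * h ≤ hi)
    {e : ℝ → ℝ} (he : ContDiffOn ℝ n e (Set.Icc lo hi))
    {Q : Polynomial ℝ} (hdeg : Q.natDegree ≤ n - 1)
    (hinterp : ∀ i < n, Q.eval (b + (i : ℝ) * h) = ∫ s in b..(b + (i : ℝ) * h), e s) :
    ∃ ξ ∈ Set.Ioo b (b + ((n : ℝ) - 1) * h),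
      e (b + (j : ℝ) * h) - (derivative Q).eval (b + (j : ℝ) * h)
        = iteratedDerivWithin (n - 1) e (Set.Icc lo hi) ξ
          * ((-1 : ℝ) ^ (n - 1 - j) * j.factorial * (n - 1 - j).factorial * h ^ (n - 1)
              / n.factorial) := by
  classical
  obtain ⟨m, rfl⟩ : ∃ m, n = m + 2 := ⟨n - 2, by omega⟩
  have hle : lo ≤ hi := hlt.le
  set S := Set.Icc lo hi with hSdef
  have hu : UniqueDiffOn ℝ S := uniqueDiffOn_Icc hlt
  set y : ℕ → ℝ := fun i => b + (i : ℝ) * h with hydef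
  have hbhi' : b + ((m : ℝ) + 1) * h ≤ hi := by push_cast at hbhi; linarith
  have hymono : ∀ {p q : ℕ}, p < q → y p < y q := by
    intro p q hpq
    have hc : (p : ℝ) < q := by exact_mod_cast hpq
    simp only [hydef]
    nlinarith
  have hyS : ∀ i, i ≤ m + 1 → y i ∈ S := by
    intro i hi
    have hc : (i : ℝ) ≤ (m : ℝ) + 1 := by exact_mod_cast hi
    constructor
    · have : (0 : ℝ) ≤ (i : ℝ) * h := by positivity
      simp only [hydef]; linarith
    · simp only [hydef]; nlinarith
  -- continuous extension of e and the primitive U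
  set ebar : ℝ → ℝ := Set.IccExtend hle (S.restrict e) with hebardef
  have hebarcont : Continuous ebar :=
    (continuousOn_iff_continuous_restrict.mp he.continuousOn).Icc_extend'
  have hebar_eq : ∀ x ∈ S, ebar x = e x := fun x hx => Set.IccExtend_of_mem hle _ hx
  set U : ℝ → ℝ := fun x => ∫ s in b..x, ebar s with hUdef
  have hUderiv : ∀ x, HasDerivAt U (ebar x) x := fun x =>
    (hebarcont.integral_hasStrictDerivAt b x).hasDerivAt
  have hbS : b ∈ S := by
    refine ⟨hlob, ?_⟩
    have : (0 : ℝ) ≤ ((m : ℝ) + 1) * h := by positivity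
    linarith
  have hUQ : ∀ i, i ≤ m + 1 → U (y i) = Q.eval (y i) := by
    intro i hi
    have hby : b ≤ y i := by
      have : (0 : ℝ) ≤ (i : ℝ) * h := by positivity
      simp only [hydef]; linarith
    have hsub : Set.uIcc b (y i) ⊆ S := by
      rw [Set.uIcc_of_le hby]
      exact Set.Icc_subset_Icc hbS.1 (hyS i hi).2
    have : U (y i) = ∫ s in b..(y i), e s :=
      intervalIntegral.integral_congr fun x hx => hebar_eq x (hsub hx)
    rw [this, hinterp i (by omega)]
  -- U is C^(m+2) on S
  have hUc : ContDiffOn ℝ (m + 2 : ℕ) U S := by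
    have hcast : ((m + 2 : ℕ) : WithTop ℕ∞) = ((m + 1 : ℕ) : WithTop ℕ∞) + 1 := by
      norm_cast
    rw [hcast, contDiffOn_succ_iff_derivWithin hu]
    refine ⟨fun x hx => (hUderiv x).differentiableAt.differentiableWithinAt, ?_, ?_⟩
    · intro hc; simp at hc
    · have heq : Set.EqOn (derivWithin U S) e S := fun x hx => by
        rw [(hUderiv x).hasDerivWithinAt.derivWithin (hu x hx), hebar_eq x hx]
      exact (he.of_le (by exact_mod_cast Nat.le_succ (m + 1))).congr heq
  -- nodal polynomial
  set w0 : Polynomial ℝ := Lagrange.nodal (Finset.range (m + 2)) y with hwdef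
  have hωdeg : w0.natDegree = m + 2 := by
    rw [Lagrange.natDegree_nodal, Finset.card_range]
  have hωmonic : w0.Monic := Lagrange.nodal_monic
  have hωroot : ∀ i < m + 2, w0.eval (y i) = 0 := fun i hi =>
    Lagrange.eval_nodal_at_node (Finset.mem_range.mpr hi)
  set d : ℝ := (derivative w0).eval (y j) with hddef
  have hdval : d = (-1 : ℝ) ^ (m + 1 - j) * j.factorial * (m + 1 - j).factorial * h ^ (m + 1) := by
    rw [hddef, hwdef, Lagrange.eval_nodal_derivative_eval_node_eq (Finset.mem_range.mpr hj),
      Lagrange.eval_nodal]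
    have := nodal_prod_eval (m + 2) j hj b h
    rw [show m + 2 - 1 - j = m + 1 - j by omega, show m + 2 - 1 = m + 1 by omega] at this
    exact this
  have hdne : d ≠ 0 := by
    rw [hdval]
    refine mul_ne_zero (mul_ne_zero (mul_ne_zero (pow_ne_zero _ (by norm_num)) ?_) ?_)
      (pow_ne_zero _ hh.ne')
    · exact_mod_cast j.factorial_ne_zero
    · exact_mod_cast (m + 1 - j).factorial_ne_zero
  set c₀ : ℝ := (e (y j) - (derivative Q).eval (y j)) / d with hc₀def
  set P : Polynomial ℝ := Q + Polynomial.C c₀ * w0 with hPdef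
  set F : ℝ → ℝ := fun x => U x - P.eval x with hFdef
  have hFc : ContDiffOn ℝ (m + 2 : ℕ) F S :=
    hUc.sub ((contDiff_polyEval _ P).contDiffOn)
  have hFzero : ∀ i < m + 2, F (y i) = 0 := by
    intro i hi
    simp only [hFdef, hPdef, eval_add, eval_mul, eval_C]
    rw [hωroot i hi, hUQ i (by omega)]
    ring
  -- first derivative formula
  have hG1 : ∀ x ∈ S, iteratedDerivWithin 1 F S x = e x - (derivative P).eval x := by
    intro x hx
    have hd : HasDerivWithinAt F (ebar x - (derivative P).eval x) S x :=
      ((hUderiv x).sub (P.hasDerivAt x)).hasDerivWithinAt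
    rw [iteratedDerivWithin_one, hd.derivWithin (hu x hx), hebar_eq x hx]
  -- iterated derivative formula
  have hGm : ∀ p : ℕ, p + 1 ≤ m + 2 → ∀ x ∈ S, iteratedDerivWithin (p + 1) F S x
      = iteratedDerivWithin p e S x - (derivative^[p + 1] P).eval x := by
    intro p
    induction p with
    | zero =>
      intro _ x hx
      rw [hG1 x hx]
      simp [iteratedDerivWithin_zero]
    | succ p ih =>
      intro hp x hx
      have hIH : ∀ t ∈ S, iteratedDerivWithin (p + 1) F S t
          = iteratedDerivWithin p e S t - (derivative^[p + 1] P).eval t := ih (by omega)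
      have hdiff₁ : DifferentiableWithinAt ℝ (iteratedDerivWithin p e S) S x :=
        (he.differentiableOn_iteratedDerivWithin (by exact_mod_cast (by omega : p < m + 2)) hu)
          x hx
      have hdiff₂ : DifferentiableWithinAt ℝ (fun t => ((derivative^[p + 1] P).eval t)) S x :=
        ((derivative^[p + 1] P).differentiable.differentiableAt).differentiableWithinAt
      rw [iteratedDerivWithin_succ,
        derivWithin_congr (fun t ht => hIH t ht) (hIH x hx),
        derivWithin_fun_sub hdiff₁ hdiff₂]
      congr 1
      · rw [iteratedDerivWithin_succ]
      · rw [((derivative^[p + 1] P).hasDerivAt x).hasDerivWithinAt.derivWithin (hu x hx),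
          ← Function.iterate_succ_apply' derivative]
  -- Rolle between consecutive nodes
  have hstep : ∀ i : Fin (m + 1), ∃ γ ∈ Set.Ioo (y (i : ℕ)) (y ((i : ℕ) + 1)),
      iteratedDerivWithin 1 F S γ = 0 := by
    intro i
    have h0 : iteratedDerivWithin 0 F S (y (i : ℕ)) = 0 := by
      rw [iteratedDerivWithin_zero]; exact hFzero _ (by omega)
    have h0' : iteratedDerivWithin 0 F S (y ((i : ℕ) + 1)) = 0 := by
      rw [iteratedDerivWithin_zero]; exact hFzero _ (by omega)
    exact rolle_step_s9 hlt hFc (by omega) (hyS _ (by omega)) (hyS _ (by omega))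
      (hymono (by omega)) h0 h0'
  choose w hw hw0 using hstep
  have hG1j : iteratedDerivWithin 1 F S (y j) = 0 := by
    rw [hG1 (y j) (hyS j (by omega))]
    simp only [hPdef, derivative_add, derivative_C_mul, eval_add, eval_mul, eval_C]
    rw [← hddef, hc₀def, div_mul_cancel₀ _ hdne]
    ring
  -- insert y j into the w family
  set v : Fin (m + 2) → ℝ := fun i =>
    if hc : (i : ℕ) < j then w ⟨(i : ℕ), by omega⟩
    else if (i : ℕ) = j then y j
    else w ⟨(i : ℕ) - 1, by omega⟩ with hvdef
  have hwb : ∀ q (hq : q < m + 1), y q < w ⟨q, hq⟩ ∧ w ⟨q, hq⟩ < y (q + 1) := by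
    intro q hq; exact ⟨(hw ⟨q, hq⟩).1, (hw ⟨q, hq⟩).2⟩
  have hvmono : StrictMono v := by
    rw [Fin.strictMono_iff_lt_succ]
    intro i
    have hpm : (i : ℕ) < m + 1 := i.isLt
    simp only [hvdef, Fin.coe_castSucc, Fin.val_succ]
    rcases lt_trichotomy ((i : ℕ) + 1) j with hc | hc | hc
    · rw [dif_pos (by omega), dif_pos (by omega)]
      calc w ⟨(i : ℕ), by omega⟩ < y ((i : ℕ) + 1) := (hwb _ _).2
        _ < w ⟨(i : ℕ) + 1, by omega⟩ := (hwb _ _).1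
    · rw [dif_pos (by omega), dif_neg (by omega), if_pos (by omega)]
      exact lt_of_lt_of_eq (hwb (i : ℕ) (by omega)).2 (congrArg y hc)
    · rcases Nat.lt_or_ge (i : ℕ) j with hc2 | hc2
      · exact (by omega : False).elim
      · rcases Nat.eq_or_lt_of_le hc2 with hc3 | hc3
        · rw [dif_neg (by omega), if_pos (by omega), dif_neg (by omega), if_neg (by omega)]
          exact lt_of_le_of_lt (le_of_eq (congrArg y hc3)) (hwb ((i : ℕ) + 1 - 1) (by omega)).1
        · rw [dif_neg (by omega), if_neg (by omega), dif_neg (by omega), if_neg (by omega)]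
          calc w ⟨(i : ℕ) - 1, by omega⟩ < y ((i : ℕ) - 1 + 1) := (hwb _ _).2
            _ = y (i : ℕ) := congrArg y (by omega)
            _ < w ⟨(i : ℕ) + 1 - 1, by omega⟩ := (hwb ((i : ℕ) + 1 - 1) (by omega)).1
  have hvS : ∀ i, v i ∈ S := by
    intro i
    have hpm : (i : ℕ) < m + 2 := i.isLt
    simp only [hvdef]
    split_ifs with h1 h2
    · exact ⟨(hyS _ (by omega)).1.trans (hwb _ _).1.le, (hwb _ _).2.le.trans (hyS _ (by omega)).2⟩
    · exact hyS j (by omega)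
    · exact ⟨(hyS _ (by omega)).1.trans (hwb _ _).1.le, (hwb _ _).2.le.trans
        (hyS ((i : ℕ) - 1 + 1) (by omega)).2⟩
  have hv0 : ∀ i, iteratedDerivWithin 1 F S (v i) = 0 := by
    intro i
    simp only [hvdef]
    split_ifs with h1 h2
    · exact hw0 _
    · exact hG1j
    · exact hw0 _
  obtain ⟨ξ, hξmem, hξ0⟩ := iterated_rolle_s9 hlt hFc m 1 (by omega) v hvmono hvS hv0
  have hv0low : y 0 ≤ v 0 := by
    simp only [hvdef]
    by_cases h1 : 0 < j
    · rw [dif_pos (show ((0 : Fin (m + 2)) : ℕ) < j by rw [Fin.val_zero]; exact h1)]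
      exact (hwb 0 (by omega)).1.le
    · have h2 : 0 = j := by omega
      rw [dif_neg (show ¬ ((0 : Fin (m + 2)) : ℕ) < j by rw [Fin.val_zero]; exact h1),
        if_pos (show ((0 : Fin (m + 2)) : ℕ) = j by rw [Fin.val_zero]; exact h2)]
      exact le_of_eq (congrArg y h2)
  have hvlast : v (Fin.last (m + 1)) ≤ y (m + 1) := by
    simp only [hvdef, Fin.val_last]
    split_ifs with h1 h2
    · exfalso; omega
    · exact le_of_eq (congrArg y h2.symm)
    · exact (hwb (m + 1 - 1) (by omega)).2.le
  have hξIoo : ξ ∈ Set.Ioo (y 0) (y (m + 1)) :=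
    ⟨lt_of_le_of_lt hv0low hξmem.1, lt_of_lt_of_le hξmem.2 hvlast⟩
  have hξS : ξ ∈ S := ⟨(hyS 0 (by omega)).1.trans hξIoo.1.le, hξIoo.2.le.trans (hyS _ le_rfl).2⟩
  -- compute the top derivative of P
  have hPiter : (derivative^[m + 2] P).eval ξ = (m + 2).factorial * c₀ := by
    have hadd : ∀ (k : ℕ) (p q : Polynomial ℝ),
        derivative^[k] (p + q) = derivative^[k] p + derivative^[k] q := by
      intro k
      induction k with
      | zero => intro p q; simp
      | succ k ih =>
        intro p q
        rw [Function.iterate_succ_apply, derivative_add, ih,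
          ← Function.iterate_succ_apply, ← Function.iterate_succ_apply]
    have hQ0 : derivative^[m + 2] Q = 0 :=
      Polynomial.iterate_derivative_eq_zero (by omega : Q.natDegree < m + 2)
    have hω2 : derivative^[m + 2] w0 = Polynomial.C ((m + 2).factorial : ℝ) := by
      have hdeg0 : (derivative^[m + 2] w0).natDegree ≤ 0 := by
        have := Polynomial.natDegree_iterate_derivative w0 (m + 2)
        omega
      have hC := Polynomial.eq_C_of_natDegree_le_zero hdeg0
      rw [hC, Polynomial.coeff_iterate_derivative]
      rw [show (0 + (m + 2)) = m + 2 from by omega, Nat.descFactorial_self]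
      have hcoeff : w0.coeff (m + 2) = 1 := by
        have := hωmonic.coeff_natDegree
        rwa [hωdeg] at this
      rw [hcoeff, nsmul_eq_mul, mul_one]
    rw [hPdef, hadd, Polynomial.iterate_derivative_C_mul, hQ0, hω2]
    simp [mul_comm]
  have hval := hGm (m + 1) le_rfl ξ hξS
  rw [show 1 + m + 1 = m + 2 by omega] at hξ0
  rw [show (m + 1) + 1 = m + 2 from rfl, hξ0] at hval
  have hc₀val : c₀ = iteratedDerivWithin (m + 1) e S ξ / (m + 2).factorial := by
    have h2 : (0 : ℝ) = iteratedDerivWithin (m + 1) e S ξ - (m + 2).factorial * c₀ := by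
      rw [← hPiter, ← hval]
    have hfact : ((m + 2).factorial : ℝ) ≠ 0 := by exact_mod_cast (m + 2).factorial_ne_zero
    field_simp
    linarith
  refine ⟨ξ, ?_, ?_⟩
  · constructor
    · have hb0 : y 0 = b := by simp [hydef]
      rw [← hb0]; exact hξIoo.1
    · have h2 := hξIoo.2
      simp only [hydef] at h2
      push_cast at h2 ⊢
      linarith
  · have hmain : e (y j) - (derivative Q).eval (y j) = c₀ * d := by
      rw [hc₀def, div_mul_cancel₀ _ hdne]
    rw [show (b + (j : ℝ) * h) = y j from rfl, hmain, hc₀val, hdval]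
    rw [show m + 2 - 1 - j = m + 1 - j from by omega, show m + 2 - 1 = m + 1 from by omega]
    field_simp

/-- Leading error of the two interface reconstructions `e⁻, e⁺` entering the
Lax–Friedrichs flux at the interface `x* = a + h` between two adjacent cells,
each obtained from a central stencil of `2k - 1` cells. -/
theorem interface_reconstruction_difference_and_sum_error
    (k : ℕ) (hk : 1 ≤ k) (h a : ℝ) (hh : 0 < h)
    (e : ℝ → ℝ)
    (he : ContDiffOn ℝ (2 * k) e (Icc (a - ((k : ℝ) - 1) * h) (a + ((k : ℝ) + 1) * h)))
    (Q₁ Q₂ : Polynomial ℝ)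
    (hdeg₁ : Q₁.natDegree ≤ 2 * k - 1) (hdeg₂ : Q₂.natDegree ≤ 2 * k - 1)
    (hinterp₁ : ∀ j ∈ Finset.range (2 * k),
      Q₁.eval (a - ((k : ℝ) - 1) * h + j * h)
        = ∫ s in (a - ((k : ℝ) - 1) * h)..(a - ((k : ℝ) - 1) * h + j * h), e s)
    (hinterp₂ : ∀ j ∈ Finset.range (2 * k),
      Q₂.eval (a - ((k : ℝ) - 2) * h + j * h)
        = ∫ s in (a - ((k : ℝ) - 2) * h)..(a - ((k : ℝ) - 2) * h + j * h), e s) :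
    ∃ ξ ∈ Ioo (a - ((k : ℝ) - 1) * h) (a + k * h),
    ∃ ξ' ∈ Ioo (a - ((k : ℝ) - 2) * h) (a + ((k : ℝ) + 1) * h),
    ∃ c : ℝ,
      (ξ ≠ ξ' → c ∈ Ioo (min ξ ξ') (max ξ ξ')) ∧
      (Polynomial.derivative Q₁).eval (a + h) - (Polynomial.derivative Q₂).eval (a + h)
        = (-1 : ℝ) ^ k * h ^ (2 * k - 1)
            * ((Nat.factorial k : ℝ) * (Nat.factorial (k - 1)) / (Nat.factorial (2 * k)))
            * (iteratedDerivWithin (2 * k - 1) e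
                  (Icc (a - ((k : ℝ) - 1) * h) (a + ((k : ℝ) + 1) * h)) ξ
                + iteratedDerivWithin (2 * k - 1) e
                  (Icc (a - ((k : ℝ) - 1) * h) (a + ((k : ℝ) + 1) * h)) ξ') ∧
      (Polynomial.derivative Q₁).eval (a + h) + (Polynomial.derivative Q₂).eval (a + h)
          - 2 * e (a + h)
        = (-1 : ℝ) ^ (k + 1) * h ^ (2 * k - 1)
            * ((Nat.factorial k : ℝ) * (Nat.factorial (k - 1)) / (Nat.factorial (2 * k)))
            * iteratedDerivWithin (2 * k) e
                (Icc (a - ((k : ℝ) - 1) * h) (a + ((k : ℝ) + 1) * h)) c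
            * (ξ' - ξ) ∧
      |(Polynomial.derivative Q₁).eval (a + h) + (Polynomial.derivative Q₂).eval (a + h)
          - 2 * e (a + h)|
        ≤ 2 * k * h ^ (2 * k)
            * ((Nat.factorial k : ℝ) * (Nat.factorial (k - 1)) / (Nat.factorial (2 * k)))
            * sSup ((fun x => |iteratedDerivWithin (2 * k) e
                (Icc (a - ((k : ℝ) - 1) * h) (a + ((k : ℝ) + 1) * h)) x|) ''
                Icc (a - ((k : ℝ) - 1) * h) (a + ((k : ℝ) + 1) * h)) := by
  have hk1 : (1 : ℝ) ≤ (k : ℝ) := by exact_mod_cast hk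
  set lo : ℝ := a - ((k : ℝ) - 1) * h with hlodef
  set hi : ℝ := a + ((k : ℝ) + 1) * h with hhidef
  set S := Icc lo hi with hSdef
  have hu : UniqueDiffOn ℝ S := uniqueDiffOn_Icc (by nlinarith)
  have hlt : lo < hi := by simp only [hlodef, hhidef]; nlinarith
  set D : ℝ → ℝ := iteratedDerivWithin (2 * k - 1) e S with hDdef
  set D₂ : ℝ → ℝ := iteratedDerivWithin (2 * k) e S with hD2def
  -- stencil 1
  obtain ⟨ξ, hξmem, hEq1⟩ := core_reconstruction (n := 2 * k) (j := k) (by omega) (by omega)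
    hh hlt le_rfl (by push_cast; nlinarith) he hdeg₁
    (fun i hi2 => hinterp₁ i (Finset.mem_range.mpr hi2))
  -- stencil 2
  obtain ⟨ξ', hξ'mem, hEq2⟩ := core_reconstruction (n := 2 * k) (j := k - 1) (by omega)
    (by omega) hh hlt (by simp only [hlodef]; nlinarith) (by push_cast; nlinarith) he hdeg₂
    (fun i hi2 => hinterp₂ i (Finset.mem_range.mpr hi2))
  -- clean up the statements
  rw [show (2 * k - 1 - k) = k - 1 by omega] at hEq1
  rw [show (2 * k - 1 - (k - 1)) = k by omega] at hEq2
  rw [show lo + (k : ℝ) * h = a + h by simp only [hlodef]; ring] at hEq1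
  rw [show a - ((k : ℝ) - 2) * h + ((k - 1 : ℕ) : ℝ) * h = a + h by
    rw [Nat.cast_sub hk]; push_cast; ring] at hEq2
  rw [show lo + (((2 * k : ℕ) : ℝ) - 1) * h = a + (k : ℝ) * h by
    simp only [hlodef]; push_cast; ring] at hξmem
  rw [show a - ((k : ℝ) - 2) * h + (((2 * k : ℕ) : ℝ) - 1) * h = hi by
    simp only [hhidef]; push_cast; ring] at hξ'mem
  have hξS : ξ ∈ S := ⟨hξmem.1.le, by
    have := hξmem.2
    simp only [hhidef] at *
    nlinarith⟩
  have hξ'S : ξ' ∈ S := ⟨by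
      have := hξ'mem.1
      simp only [hlodef] at *
      nlinarith, hξ'mem.2.le⟩
  -- derivative of D in the interior
  have hDderiv : ∀ x ∈ Ioo lo hi, HasDerivAt D (D₂ x) x := by
    intro x hx
    have hnh : S ∈ 𝓝 x := Icc_mem_nhds hx.1 hx.2
    have hdw : DifferentiableWithinAt ℝ D S x :=
      (he.differentiableOn_iteratedDerivWithin
        (by exact_mod_cast (by omega : 2 * k - 1 < 2 * k)) hu) x (Ioo_subset_Icc_self hx)
    have hda := (hdw.differentiableAt hnh).hasDerivAt
    have hval : deriv D x = D₂ x := by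
      rw [← derivWithin_of_mem_nhds hnh, hDdef, ← iteratedDerivWithin_succ, show 2 * k - 1 + 1 = 2 * k by omega]
    rwa [hval] at hda
  have hDcont : ContinuousOn D S :=
    he.continuousOn_iteratedDerivWithin (by exact_mod_cast (by omega : 2 * k - 1 ≤ 2 * k)) hu
  have hξIoo : ξ ∈ Ioo lo hi := ⟨hξmem.1, hξS.2.lt_of_ne (by
    intro hc
    have := hξmem.2
    simp only [hhidef] at *
    nlinarith)⟩
  have hξ'Ioo : ξ' ∈ Ioo lo hi := ⟨lt_of_le_of_lt (le_of_eq rfl) (lt_of_le_of_lt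
    (le_refl lo) (lt_of_lt_of_le (lt_of_le_of_lt (le_refl lo) (by
      have := hξ'mem.1
      simp only [hlodef] at *
      nlinarith)) le_rfl)), hξ'mem.2⟩
  -- sign bookkeeping
  have hs1 : (-1 : ℝ) ^ k = -((-1 : ℝ) ^ (k - 1)) := by
    conv_lhs => rw [show k = (k - 1) + 1 by omega]
    rw [pow_succ]; ring
  have hs2 : (-1 : ℝ) ^ (k + 1) = (-1 : ℝ) ^ (k - 1) := by
    rw [show k + 1 = (k - 1) + 2 by omega, pow_add]
    norm_num
  rw [hs1] at hEq2
  -- mean value theorem between ξ and ξ'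
  have hMVT : ∃ c : ℝ, (ξ ≠ ξ' → c ∈ Ioo (min ξ ξ') (max ξ ξ')) ∧ c ∈ S ∧
      D ξ' - D ξ = D₂ c * (ξ' - ξ) := by
    rcases lt_trichotomy ξ ξ' with hc | hc | hc
    · obtain ⟨c, hcmem, hcval⟩ := exists_hasDerivAt_eq_slope D D₂ hc
        (hDcont.mono (Icc_subset_Icc hξS.1 hξ'S.2))
        (fun x hx => hDderiv x ⟨lt_of_le_of_lt hξIoo.1.le hx.1, lt_of_lt_of_le hx.2 hξ'Ioo.2.le⟩)
      refine ⟨c, fun _ => by rwa [min_eq_left hc.le, max_eq_right hc.le], ?_, ?_⟩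
      · exact ⟨hξS.1.trans hcmem.1.le, hcmem.2.le.trans hξ'S.2⟩
      · rw [hcval, div_mul_cancel₀ _ (sub_ne_zero.mpr hc.ne')]
    · exact ⟨ξ, fun hne => absurd hc hne, hξS, by rw [hc]; ring⟩
    · obtain ⟨c, hcmem, hcval⟩ := exists_hasDerivAt_eq_slope D D₂ hc
        (hDcont.mono (Icc_subset_Icc hξ'S.1 hξS.2))
        (fun x hx => hDderiv x ⟨lt_of_le_of_lt hξ'Ioo.1.le hx.1, lt_of_lt_of_le hx.2 hξIoo.2.le⟩)
      refine ⟨c, fun _ => by rwa [min_eq_right hc.le, max_eq_left hc.le], ?_, ?_⟩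
      · exact ⟨hξ'S.1.trans hcmem.1.le, hcmem.2.le.trans hξS.2⟩
      · rw [hcval, div_mul_eq_mul_div, eq_div_iff (sub_ne_zero.mpr hc.ne')]; ring
  obtain ⟨c, hcmem, hcS, hMVTeq⟩ := hMVT
  refine ⟨ξ, hξmem, ξ', hξ'mem, c, hcmem, ?_, ?_, ?_⟩
  · rw [hs1]
    linear_combination hEq2 - hEq1
  · rw [hs2]
    linear_combination (-1 : ℝ) * hEq1 - hEq2
      + ((-1 : ℝ) ^ (k - 1) * h ^ (2 * k - 1)
          * ((k.factorial : ℝ) * ((k - 1).factorial : ℝ) / ((2 * k).factorial : ℝ))) * hMVTeq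
  · -- the bound
    have hiieq : (Polynomial.derivative Q₁).eval (a + h) + (Polynomial.derivative Q₂).eval (a + h)
        - 2 * e (a + h)
        = (-1 : ℝ) ^ (k - 1) * h ^ (2 * k - 1)
            * ((k.factorial : ℝ) * ((k - 1).factorial : ℝ) / ((2 * k).factorial : ℝ))
            * D₂ c * (ξ' - ξ) := by
      linear_combination (-1 : ℝ) * hEq1 - hEq2
        + ((-1 : ℝ) ^ (k - 1) * h ^ (2 * k - 1)
            * ((k.factorial : ℝ) * ((k - 1).factorial : ℝ) / ((2 * k).factorial : ℝ))) * hMVTeq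
    set A : ℝ := (k.factorial : ℝ) * ((k - 1).factorial : ℝ) / ((2 * k).factorial : ℝ) with hAdef
    have hA0 : 0 ≤ A := by positivity
    set M : ℝ := sSup ((fun x => |D₂ x|) '' S) with hMdef
    have hbdd : BddAbove ((fun x => |D₂ x|) '' S) :=
      (isCompact_Icc.image_of_continuousOn
        ((he.continuousOn_iteratedDerivWithin le_rfl hu).abs)).bddAbove
    have hDM : |D₂ c| ≤ M := le_csSup hbdd (Set.mem_image_of_mem _ hcS)
    have hM0 : 0 ≤ M := (abs_nonneg _).trans hDM
    have hdist : |ξ' - ξ| ≤ 2 * (k : ℝ) * h := by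
      rw [abs_le]
      constructor
      · have h1 := hξS.2; have h2 := hξ'S.1
        simp only [hlodef, hhidef] at h1 h2
        nlinarith
      · have h1 := hξS.1; have h2 := hξ'S.2
        simp only [hlodef, hhidef] at h1 h2
        nlinarith
    have habs : |(Polynomial.derivative Q₁).eval (a + h)
        + (Polynomial.derivative Q₂).eval (a + h) - 2 * e (a + h)|
        = h ^ (2 * k - 1) * A * (|D₂ c| * |ξ' - ξ|) := by
      rw [hiieq, abs_mul, abs_mul, abs_mul, abs_mul, abs_pow, abs_neg, abs_one, one_pow,
        one_mul, abs_of_nonneg (by positivity : (0:ℝ) ≤ h ^ (2 * k - 1)),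
        abs_of_nonneg hA0]
      ring
    rw [habs]
    have hstep : |D₂ c| * |ξ' - ξ| ≤ M * (2 * (k : ℝ) * h) :=
      mul_le_mul hDM hdist (abs_nonneg _) hM0
    calc h ^ (2 * k - 1) * A * (|D₂ c| * |ξ' - ξ|)
        ≤ h ^ (2 * k - 1) * A * (M * (2 * (k : ℝ) * h)) := by
          exact mul_le_mul_of_nonneg_left hstep (mul_nonneg (pow_nonneg hh.le _) hA0)
      _ = 2 * (k : ℝ) * (h ^ (2 * k - 1) * h) * A * M := by ring
      _ = 2 * (k : ℝ) * h ^ (2 * k) * A * M := by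
          rw [← pow_succ, show 2 * k - 1 + 1 = 2 * k by omega]
end

section
/- Let α : ℝ × [t₀, t₁] → ℝ be continuously differentiable and let e : ℝ × [t₀, t₁] → ℝ be continuously differentiable and satisfy the linear conservation law ∂e/∂t(x, t) + ∂(α·e)/∂x(x, t) = 0 for all (x, t) ∈ ℝ × [t₀, t₁]. Let x_a ≤ x_b be real numbers and let ξ_a, ξ_b : [t₀, t₁] → ℝ be continuously differentiable characteristic curves satisfying ξ_a′(t) = α(ξ_a(t), t), ξ_b′(t) = α(ξ_b(t), t), with arrival conditions ξ_a(t₁) = x_a and ξ_b(t₁) = x_b. Then ∫_{x_a}^{x_b} e(x, t₁) dx = ∫_{ξ_a(t₀)}^{ξ_b(t₀)} e(x, t₀) dx. -/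
open Set intervalIntegral

private lemma slice_continuous {β : Type*} [TopologicalSpace β] {t₀ t₁ : ℝ} {g : ℝ × ℝ → β}
    (hg : ContinuousOn g (Set.univ ×ˢ Set.Icc t₀ t₁)) {t : ℝ} (htm : t ∈ Set.Icc t₀ t₁) :
    Continuous fun y : ℝ => g (y, t) := by
  rw [← continuousOn_univ]
  exact hg.comp (Continuous.continuousOn (continuous_id.prodMk continuous_const))
    fun y _ => ⟨trivial, htm⟩

/-- Exact local conservation for the linear conservation law: the integral of
the solution over a space-time finite-volume cell bounded by characteristic
curves is preserved. -/
theorem semiLagrangian_local_conservation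
    (t₀ t₁ : ℝ) (ht : t₀ ≤ t₁)
    (α : ℝ × ℝ → ℝ) (hα : ContDiffOn ℝ 1 α (univ ×ˢ Icc t₀ t₁))
    (e : ℝ × ℝ → ℝ) (he : ContDiffOn ℝ 1 e (univ ×ˢ Icc t₀ t₁))
    (hpde : ∀ x : ℝ, ∀ t ∈ Icc t₀ t₁,
      deriv (fun s => e (x, s)) t + deriv (fun y => α (y, t) * e (y, t)) x = 0)
    (xa xb : ℝ) (hx : xa ≤ xb)
    (ξa ξb : ℝ → ℝ)
    (hξa : ∀ t ∈ Icc t₀ t₁, HasDerivWithinAt ξa (α (ξa t, t)) (Icc t₀ t₁) t)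
    (hξb : ∀ t ∈ Icc t₀ t₁, HasDerivWithinAt ξb (α (ξb t, t)) (Icc t₀ t₁) t)
    (hξat : ξa t₁ = xa) (hξbt : ξb t₁ = xb) :
    (∫ x in xa..xb, e (x, t₁)) = ∫ x in (ξa t₀)..(ξb t₀), e (x, t₀) := by
  rcases eq_or_lt_of_le ht with rfl | hlt
  · rw [← hξat, ← hξbt]
  set S : Set (ℝ × ℝ) := univ ×ˢ Icc t₀ t₁ with hSdef
  have hSconv : Convex ℝ S := convex_univ.prod (convex_Icc _ _)
  have hSint : interior S = univ ×ˢ Ioo t₀ t₁ := by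
    rw [hSdef, interior_prod_eq, interior_univ, interior_Icc]
  have hSuniq : UniqueDiffOn ℝ S := by
    refine uniqueDiffOn_convex hSconv ?_
    rw [hSint]
    exact ⟨(0, (t₀ + t₁) / 2), trivial, by constructor <;> linarith⟩
  have ht₀ : t₀ ∈ Icc t₀ t₁ := ⟨le_rfl, ht⟩
  have ht₁ : t₁ ∈ Icc t₀ t₁ := ⟨ht, le_rfl⟩
  set E' : ℝ × ℝ → ℝ × ℝ →L[ℝ] ℝ := fderivWithin ℝ e S with hE'def
  set A' : ℝ × ℝ → ℝ × ℝ →L[ℝ] ℝ := fderivWithin ℝ α S with hA'def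
  have hE'cont : ContinuousOn E' S := he.continuousOn_fderivWithin hSuniq le_rfl
  have hA'cont : ContinuousOn A' S := hα.continuousOn_fderivWithin hSuniq le_rfl
  have hecont : ContinuousOn e S := he.continuousOn
  have hαcont : ContinuousOn α S := hα.continuousOn
  have hediff : ∀ p ∈ S, HasFDerivWithinAt e (E' p) S p :=
    fun p hp => ((he.differentiableOn one_ne_zero) p hp).hasFDerivWithinAt
  have hαdiff : ∀ p ∈ S, HasFDerivWithinAt α (A' p) S p :=
    fun p hp => ((hα.differentiableOn one_ne_zero) p hp).hasFDerivWithinAt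
  have heat : ∀ p ∈ interior S, HasFDerivAt e (E' p) p :=
    fun p hp => (hediff p (interior_subset hp)).hasFDerivAt (mem_interior_iff_mem_nhds.mp hp)
  have hαat : ∀ p ∈ interior S, HasFDerivAt α (A' p) p :=
    fun p hp => (hαdiff p (interior_subset hp)).hasFDerivAt (mem_interior_iff_mem_nhds.mp hp)
  have hex : ∀ t ∈ Icc t₀ t₁, Continuous fun x : ℝ => e (x, t) :=
    fun t htm => slice_continuous hecont htm
  -- continuity of the characteristics
  have hca : ContinuousOn ξa (Icc t₀ t₁) := fun t htm => (hξa t htm).continuousWithinAt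
  have hcb : ContinuousOn ξb (Icc t₀ t₁) := fun t htm => (hξb t htm).continuousWithinAt
  -- a bound on the characteristics
  obtain ⟨Ma, hMa⟩ := isCompact_Icc.exists_bound_of_continuousOn hca
  obtain ⟨Mb, hMb⟩ := isCompact_Icc.exists_bound_of_continuousOn hcb
  set M : ℝ := max Ma Mb with hMdef
  have hMa' : ∀ t ∈ Icc t₀ t₁, |ξa t| ≤ M := fun t htm => le_trans (hMa t htm) (le_max_left _ _)
  have hMb' : ∀ t ∈ Icc t₀ t₁, |ξb t| ≤ M := fun t htm => le_trans (hMb t htm) (le_max_right _ _)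
  have hM0 : 0 ≤ M := le_trans (abs_nonneg _) (hMa' t₀ ht₀)
  -- the compact convex box
  set K : Set (ℝ × ℝ) := Icc (-M) M ×ˢ Icc t₀ t₁ with hKdef
  have hKS : K ⊆ S := prod_mono (subset_univ _) Subset.rfl
  have hKconv : Convex ℝ K := (convex_Icc _ _).prod (convex_Icc _ _)
  have hKcomp : IsCompact K := isCompact_Icc.prod isCompact_Icc
  have hmemK : ∀ {x t : ℝ}, |x| ≤ M → t ∈ Icc t₀ t₁ → (x, t) ∈ K :=
    fun hx htm => ⟨mem_Icc.mpr (abs_le.mp hx), htm⟩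
  have habsI : ∀ {u v x : ℝ}, |u| ≤ M → |v| ≤ M → x ∈ Set.uIoc u v → |x| ≤ M := by
    intro u v x hu hv hxm
    rw [abs_le] at hu hv ⊢
    rcases Set.mem_uIoc.mp hxm with ⟨h1, h2⟩ | ⟨h1, h2⟩ <;> constructor <;> linarith
  -- bounds for e, α, E' on the box
  obtain ⟨Ce, hCe⟩ := hKcomp.exists_bound_of_continuousOn (hE'cont.mono hKS)
  obtain ⟨Cα₀, hCα₀⟩ := hKcomp.exists_bound_of_continuousOn (hαcont.mono hKS)
  obtain ⟨Me₀, hMe₀⟩ := hKcomp.exists_bound_of_continuousOn (hecont.mono hKS)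
  set C : ℝ := max Ce 0 with hCdef
  set Cα : ℝ := max Cα₀ 0 with hCαdef
  set Me : ℝ := max Me₀ 0 with hMedef
  have hC : ∀ p ∈ K, ‖E' p‖ ≤ C := fun p hp => le_trans (hCe p hp) (le_max_left _ _)
  have hCα : ∀ p ∈ K, ‖α p‖ ≤ Cα := fun p hp => le_trans (hCα₀ p hp) (le_max_left _ _)
  have hMe : ∀ p ∈ K, ‖e p‖ ≤ Me := fun p hp => le_trans (hMe₀ p hp) (le_max_left _ _)
  have hC0 : 0 ≤ C := le_max_right _ _
  have hCα0 : 0 ≤ Cα := le_max_right _ _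
  have hMe0 : 0 ≤ Me := le_max_right _ _
  -- Lipschitz estimate for e on the box
  have hLipE : ∀ p ∈ K, ∀ q ∈ K, ‖e q - e p‖ ≤ C * ‖q - p‖ :=
    fun p hp q hq => Convex.norm_image_sub_le_of_norm_hasFDerivWithin_le
      (fun r hr => (hediff r (hKS hr)).mono hKS) (fun r hr => hC r hr) hKconv hp hq
  have hnsnd : ∀ x t s : ℝ, ‖((x, t) : ℝ × ℝ) - (x, s)‖ = |t - s| := by
    intro x t s
    rw [show ((x, t) : ℝ × ℝ) - (x, s) = (0, t - s) by simp, Prod.norm_def]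
    simp [Real.norm_eq_abs]
  have hLt : ∀ {x : ℝ}, |x| ≤ M → ∀ t ∈ Icc t₀ t₁, ∀ s ∈ Icc t₀ t₁,
      ‖e (x, t) - e (x, s)‖ ≤ C * |t - s| := by
    intro x hxM t htm s hsm
    have := hLipE (x, s) (hmemK hxM hsm) (x, t) (hmemK hxM htm)
    rwa [hnsnd] at this
  -- Lipschitz estimates for the characteristics
  have hLipa : ∀ s ∈ Icc t₀ t₁, ∀ t ∈ Icc t₀ t₁, ‖ξa t - ξa s‖ ≤ Cα * ‖t - s‖ :=
    fun s hs t htm => Convex.norm_image_sub_le_of_norm_hasDerivWithin_le hξa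
      (fun u hu => hCα _ (hmemK (hMa' u hu) hu)) (convex_Icc _ _) hs htm
  have hLipb : ∀ s ∈ Icc t₀ t₁, ∀ t ∈ Icc t₀ t₁, ‖ξb t - ξb s‖ ≤ Cα * ‖t - s‖ :=
    fun s hs t htm => Convex.norm_image_sub_le_of_norm_hasDerivWithin_le hξb
      (fun u hu => hCα _ (hmemK (hMb' u hu) hu)) (convex_Icc _ _) hs htm
  -- the function whose constancy we prove
  set F : ℝ → ℝ := fun t => ∫ x in ξa t..ξb t, e (x, t) with hFdef
  -- Lipschitz bound for F on [t₀, t₁]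
  set L : ℝ := Me * Cα + C * (2 * M) + Me * Cα with hLdef
  have hkey : ∀ s ∈ Icc t₀ t₁, ∀ t ∈ Icc t₀ t₁, ‖F t - F s‖ ≤ L * |t - s| := by
    intro s hs t htm
    have i_t : ∀ u v : ℝ, IntervalIntegrable (fun x => e (x, t)) MeasureTheory.volume u v :=
      fun u v => (hex t htm).intervalIntegrable u v
    have i_s : ∀ u v : ℝ, IntervalIntegrable (fun x => e (x, s)) MeasureTheory.volume u v :=
      fun u v => (hex s hs).intervalIntegrable u v
    have hsplit : F t - F s = (∫ x in ξa t..ξa s, e (x, t))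
        + (∫ x in ξa s..ξb s, (e (x, t) - e (x, s))) + ∫ x in ξb s..ξb t, e (x, t) := by
      have a1 : (∫ x in ξa t..ξa s, e (x, t)) + (∫ x in ξa s..ξb s, e (x, t))
          = ∫ x in ξa t..ξb s, e (x, t) :=
        integral_add_adjacent_intervals (i_t _ _) (i_t _ _)
      have a2 : (∫ x in ξa t..ξb s, e (x, t)) + (∫ x in ξb s..ξb t, e (x, t))
          = ∫ x in ξa t..ξb t, e (x, t) :=
        integral_add_adjacent_intervals (i_t _ _) (i_t _ _)
      have a3 : (∫ x in ξa s..ξb s, (e (x, t) - e (x, s)))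
          = (∫ x in ξa s..ξb s, e (x, t)) - ∫ x in ξa s..ξb s, e (x, s) :=
        integral_sub (i_t _ _) (i_s _ _)
      simp only [hFdef]
      linarith
    have b1 : ‖∫ x in ξa t..ξa s, e (x, t)‖ ≤ Me * |ξa s - ξa t| :=
      intervalIntegral.norm_integral_le_of_norm_le_const
        (fun x hxm => hMe _ (hmemK (habsI (hMa' t htm) (hMa' s hs) hxm) htm))
    have b2 : ‖∫ x in ξa s..ξb s, (e (x, t) - e (x, s))‖ ≤ (C * |t - s|) * |ξb s - ξa s| :=
      intervalIntegral.norm_integral_le_of_norm_le_const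
        (fun x hxm => hLt (habsI (hMa' s hs) (hMb' s hs) hxm) t htm s hs)
    have b3 : ‖∫ x in ξb s..ξb t, e (x, t)‖ ≤ Me * |ξb t - ξb s| :=
      intervalIntegral.norm_integral_le_of_norm_le_const
        (fun x hxm => hMe _ (hmemK (habsI (hMb' s hs) (hMb' t htm) hxm) htm))
    have la := hLipa s hs t htm
    have lb := hLipb s hs t htm
    rw [Real.norm_eq_abs, Real.norm_eq_abs] at la lb
    have lab : |ξb s - ξa s| ≤ 2 * M := by
      have h1 := abs_le.mp (hMa' s hs)
      have h2 := abs_le.mp (hMb' s hs)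
      rw [abs_le]; constructor <;> linarith
    have habs1 : |ξa s - ξa t| ≤ Cα * |t - s| := by rwa [abs_sub_comm] at la
    have habs3 : |ξb t - ξb s| ≤ Cα * |t - s| := lb
    calc ‖F t - F s‖ ≤ ‖(∫ x in ξa t..ξa s, e (x, t))
            + (∫ x in ξa s..ξb s, (e (x, t) - e (x, s)))‖ + ‖∫ x in ξb s..ξb t, e (x, t)‖ := by
          rw [hsplit]; exact norm_add_le _ _
      _ ≤ ‖∫ x in ξa t..ξa s, e (x, t)‖ + ‖∫ x in ξa s..ξb s, (e (x, t) - e (x, s))‖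
            + ‖∫ x in ξb s..ξb t, e (x, t)‖ := by
          have := norm_add_le (∫ x in ξa t..ξa s, e (x, t))
            (∫ x in ξa s..ξb s, (e (x, t) - e (x, s)))
          linarith
      _ ≤ Me * (Cα * |t - s|) + (C * |t - s|) * (2 * M) + Me * (Cα * |t - s|) := by
          have e1 : ‖∫ x in ξa t..ξa s, e (x, t)‖ ≤ Me * (Cα * |t - s|) :=
            le_trans b1 (mul_le_mul_of_nonneg_left habs1 hMe0)
          have e2 : ‖∫ x in ξa s..ξb s, (e (x, t) - e (x, s))‖ ≤ (C * |t - s|) * (2 * M) :=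
            le_trans b2 (mul_le_mul_of_nonneg_left lab
              (mul_nonneg hC0 (abs_nonneg _)))
          have e3 : ‖∫ x in ξb s..ξb t, e (x, t)‖ ≤ Me * (Cα * |t - s|) :=
            le_trans b3 (mul_le_mul_of_nonneg_left habs3 hMe0)
          linarith
      _ = L * |t - s| := by rw [hLdef]; ring
  have hFcont : ContinuousOn F (Icc t₀ t₁) := by
    have : LipschitzOnWith L.toNNReal F (Icc t₀ t₁) := by
      apply LipschitzOnWith.of_dist_le_mul
      intro x hxm y hy
      rw [Real.dist_eq, Real.dist_eq]
      calc dist (F x) (F y) = ‖F x - F y‖ := by rw [dist_eq_norm]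
        _ ≤ L * |x - y| := hkey y hy x hxm
        _ ≤ L.toNNReal * |x - y| := by
            apply mul_le_mul_of_nonneg_right _ (abs_nonneg _)
            rw [Real.coe_toNNReal']
            exact le_max_left _ _
    exact this.continuousOn
  -- interior derivative computations
  have hDet : ∀ (x : ℝ), ∀ t ∈ Ioo t₀ t₁,
      HasDerivAt (fun s => e (x, s)) (E' (x, t) ((0 : ℝ), (1 : ℝ))) t := by
    intro x t htm
    have hp : (x, t) ∈ interior S := by rw [hSint]; exact ⟨trivial, htm⟩
    have hcurve : HasDerivAt (fun s : ℝ => ((x, s) : ℝ × ℝ)) ((0 : ℝ), (1 : ℝ)) t :=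
      (hasDerivAt_const t x).prodMk (hasDerivAt_id t)
    simpa [Function.comp_def] using (heat _ hp).comp_hasDerivAt t hcurve
  have hDex : ∀ (y : ℝ), ∀ t ∈ Ioo t₀ t₁,
      HasDerivAt (fun z => e (z, t)) (E' (y, t) ((1 : ℝ), (0 : ℝ))) y := by
    intro y t htm
    have hp : (y, t) ∈ interior S := by rw [hSint]; exact ⟨trivial, htm⟩
    have hcurve : HasDerivAt (fun z : ℝ => ((z, t) : ℝ × ℝ)) ((1 : ℝ), (0 : ℝ)) y :=
      (hasDerivAt_id y).prodMk (hasDerivAt_const y t)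
    simpa [Function.comp_def] using (heat _ hp).comp_hasDerivAt y hcurve
  have hDax : ∀ (y : ℝ), ∀ t ∈ Ioo t₀ t₁,
      HasDerivAt (fun z => α (z, t)) (A' (y, t) ((1 : ℝ), (0 : ℝ))) y := by
    intro y t htm
    have hp : (y, t) ∈ interior S := by rw [hSint]; exact ⟨trivial, htm⟩
    have hcurve : HasDerivAt (fun z : ℝ => ((z, t) : ℝ × ℝ)) ((1 : ℝ), (0 : ℝ)) y :=
      (hasDerivAt_id y).prodMk (hasDerivAt_const y t)
    simpa [Function.comp_def] using (hαat _ hp).comp_hasDerivAt y hcurve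
  -- the derivative of F vanishes on the interior
  have hFderiv : ∀ τ ∈ Ioo t₀ t₁, HasDerivAt F 0 τ := by
    intro τ hτ
    have hτI : τ ∈ Icc t₀ t₁ := Ioo_subset_Icc_self hτ
    obtain ⟨ε, εpos, hball⟩ := Metric.isOpen_iff.mp isOpen_Ioo τ hτ
    have hball' : Metric.ball τ ε ⊆ Icc t₀ t₁ := hball.trans Ioo_subset_Icc_self
    set a : ℝ := ξa τ with hadef
    set b : ℝ := ξb τ with hbdef
    have haM : |a| ≤ M := hMa' τ hτI
    have hbM : |b| ≤ M := hMb' τ hτI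
    -- product rule for the flux
    have hq : ∀ y : ℝ, HasDerivAt (fun z => α (z, τ) * e (z, τ))
        (A' (y, τ) ((1 : ℝ), (0 : ℝ)) * e (y, τ) + α (y, τ) * E' (y, τ) ((1 : ℝ), (0 : ℝ))) y :=
      fun y => (hDax y τ hτ).mul (hDex y τ hτ)
    have hq'cont : Continuous fun y : ℝ =>
        A' (y, τ) ((1 : ℝ), (0 : ℝ)) * e (y, τ) + α (y, τ) * E' (y, τ) ((1 : ℝ), (0 : ℝ)) := by
      have c1 : Continuous fun y : ℝ => A' (y, τ) := slice_continuous hA'cont hτI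
      have c2 : Continuous fun y : ℝ => E' (y, τ) := slice_continuous hE'cont hτI
      have c3 : Continuous fun y : ℝ => e (y, τ) := slice_continuous hecont hτI
      have c4 : Continuous fun y : ℝ => α (y, τ) := slice_continuous hαcont hτI
      exact ((c1.clm_apply continuous_const).mul c3).add (c4.mul (c2.clm_apply continuous_const))
    -- the PDE rewritten with honest derivatives
    have hpde' : ∀ x : ℝ, E' (x, τ) ((0 : ℝ), (1 : ℝ))
        = -(A' (x, τ) ((1 : ℝ), (0 : ℝ)) * e (x, τ) + α (x, τ) * E' (x, τ) ((1 : ℝ), (0 : ℝ))) := by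
      intro x
      have h1 := (hDet x τ hτ).deriv
      have h2 := (hq x).deriv
      have h3 := hpde x τ hτI
      rw [h1, h2] at h3
      linarith
    -- FTC for the flux
    have hD : (∫ x in a..b, E' (x, τ) ((0 : ℝ), (1 : ℝ)))
        = α (a, τ) * e (a, τ) - α (b, τ) * e (b, τ) := by
      rw [intervalIntegral.integral_congr (g := fun x =>
        -(A' (x, τ) ((1 : ℝ), (0 : ℝ)) * e (x, τ) + α (x, τ) * E' (x, τ) ((1 : ℝ), (0 : ℝ))))
        (fun x _ => hpde' x)]
      rw [intervalIntegral.integral_neg]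
      rw [intervalIntegral.integral_eq_sub_of_hasDerivAt (fun y _ => hq y)
        (hq'cont.intervalIntegrable a b)]
      ring
    -- derivative of the fixed-endpoint integral in time (Leibniz)
    have hg2 : HasDerivAt (fun t => ∫ x in a..b, e (x, t))
        (∫ x in a..b, E' (x, τ) ((0 : ℝ), (1 : ℝ))) τ := by
      have key := intervalIntegral.hasDerivAt_integral_of_dominated_loc_of_deriv_le
        (F := fun t x => e (x, t)) (F' := fun t x => E' (x, t) ((0 : ℝ), (1 : ℝ)))
        (x₀ := τ) (a := a) (b := b) (bound := fun _ => C) (μ := MeasureTheory.volume) (Metric.ball_mem_nhds τ εpos)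
        (Filter.eventually_of_mem (Metric.ball_mem_nhds τ εpos)
          (fun t htb => ((hex t (hball' htb)).aestronglyMeasurable)))
        ((hex τ hτI).intervalIntegrable a b)
        (((slice_continuous hE'cont hτI).clm_apply continuous_const).aestronglyMeasurable)
        (Filter.Eventually.of_forall ?_)
        intervalIntegrable_const
        (Filter.Eventually.of_forall ?_)
      · exact key.2
      · intro x hxm t htb
        have hxM : |x| ≤ M := habsI haM hbM hxm
        have hmem : (x, t) ∈ K := hmemK hxM (hball' htb)
        calc ‖E' (x, t) ((0 : ℝ), (1 : ℝ))‖
            ≤ ‖E' (x, t)‖ * ‖((0 : ℝ), (1 : ℝ))‖ := (E' (x, t)).le_opNorm _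
          _ = ‖E' (x, t)‖ := by
              rw [Prod.norm_def]
              simp
          _ ≤ C := hC _ hmem
      · intro x _ t htb
        exact hDet x t (hball htb)
    -- derivative of the moving-endpoint integral at frozen time
    set Ψ : ℝ → ℝ := fun y => ∫ x in (0 : ℝ)..y, e (x, τ) with hΨdef
    have hΨ : ∀ y : ℝ, HasDerivAt Ψ (e (y, τ)) y := by
      intro y
      exact intervalIntegral.integral_hasDerivAt_right
        ((hex τ hτI).intervalIntegrable 0 y)
        ((hex τ hτI).stronglyMeasurableAtFilter _ _)
        (hex τ hτI).continuousAt
    have hξaτ : HasDerivAt ξa (α (a, τ)) τ :=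
      (hξa τ hτI).hasDerivAt (Icc_mem_nhds hτ.1 hτ.2)
    have hξbτ : HasDerivAt ξb (α (b, τ)) τ :=
      (hξb τ hτI).hasDerivAt (Icc_mem_nhds hτ.1 hτ.2)
    have hg1 : HasDerivAt (fun t => Ψ (ξb t) - Ψ (ξa t))
        (e (b, τ) * α (b, τ) - e (a, τ) * α (a, τ)) τ := by
      have c1 : HasDerivAt (fun t => Ψ (ξb t)) (e (b, τ) * α (b, τ)) τ := by
        simpa [Function.comp_def] using (hΨ b).comp τ hξbτ
      have c2 : HasDerivAt (fun t => Ψ (ξa t)) (e (a, τ) * α (a, τ)) τ := by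
        simpa [Function.comp_def] using (hΨ a).comp τ hξaτ
      exact c1.sub c2
    set C0 : ℝ := ∫ x in a..b, e (x, τ) with hC0def
    set G : ℝ → ℝ := fun t => Ψ (ξb t) - Ψ (ξa t) + (∫ x in a..b, e (x, t)) - C0 with hGdef
    have hG : HasDerivAt G 0 τ := by
      have h := (hg1.add hg2).sub_const C0
      have : e (b, τ) * α (b, τ) - e (a, τ) * α (a, τ)
          + (∫ x in a..b, E' (x, τ) ((0 : ℝ), (1 : ℝ))) = 0 := by
        rw [hD]; ring
      rw [hGdef]
      simpa [this] using h
    -- the remainder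
    set R : ℝ → ℝ := fun t => F t - G t with hRdef
    have hRτ : R τ = 0 := by
      have i_τ : ∀ u v : ℝ, IntervalIntegrable (fun x => e (x, τ)) MeasureTheory.volume u v :=
        fun u v => (hex τ hτI).intervalIntegrable u v
      have hsub : Ψ b - Ψ a = ∫ x in a..b, e (x, τ) := by
        rw [hΨdef]
        exact intervalIntegral.integral_interval_sub_left (i_τ 0 b) (i_τ 0 a)
      simp only [hRdef, hGdef, hFdef, hC0def]
      rw [← hadef, ← hbdef]
      linarith
    have hform : ∀ t ∈ Icc t₀ t₁, R t = (∫ x in ξa t..a, (e (x, t) - e (x, τ)))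
        + ∫ x in b..ξb t, (e (x, t) - e (x, τ)) := by
      intro t htm
      have i_t : ∀ u v : ℝ, IntervalIntegrable (fun x => e (x, t)) MeasureTheory.volume u v :=
        fun u v => (hex t htm).intervalIntegrable u v
      have i_τ : ∀ u v : ℝ, IntervalIntegrable (fun x => e (x, τ)) MeasureTheory.volume u v :=
        fun u v => (hex τ hτI).intervalIntegrable u v
      have s1 : ∀ u v : ℝ, (∫ x in u..v, e (x, t))
          = (∫ x in (0 : ℝ)..v, e (x, t)) - ∫ x in (0 : ℝ)..u, e (x, t) :=
        fun u v => (intervalIntegral.integral_interval_sub_left (i_t 0 v) (i_t 0 u)).symm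
      have s2 : ∀ u v : ℝ, (∫ x in u..v, e (x, τ))
          = (∫ x in (0 : ℝ)..v, e (x, τ)) - ∫ x in (0 : ℝ)..u, e (x, τ) :=
        fun u v => (intervalIntegral.integral_interval_sub_left (i_τ 0 v) (i_τ 0 u)).symm
      have d1 : (∫ x in ξa t..a, (e (x, t) - e (x, τ)))
          = (∫ x in ξa t..a, e (x, t)) - ∫ x in ξa t..a, e (x, τ) :=
        integral_sub (i_t _ _) (i_τ _ _)
      have d2 : (∫ x in b..ξb t, (e (x, t) - e (x, τ)))
          = (∫ x in b..ξb t, e (x, t)) - ∫ x in b..ξb t, e (x, τ) :=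
        integral_sub (i_t _ _) (i_τ _ _)
      simp only [hRdef, hGdef, hFdef, hΨdef, hC0def]
      rw [d1, d2, s1 (ξa t) (ξb t), s1 a b, s1 (ξa t) a, s1 b (ξb t),
        s2 (ξa t) a, s2 b (ξb t), s2 a b]
      ring
    have hRb : ∀ t ∈ Icc t₀ t₁, ‖R t‖ ≤ 2 * C * Cα * (|t - τ| * |t - τ|) := by
      intro t htm
      have c1 : ‖∫ x in ξa t..a, (e (x, t) - e (x, τ))‖ ≤ (C * |t - τ|) * |a - ξa t| :=
        intervalIntegral.norm_integral_le_of_norm_le_const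
          (fun x hxm => hLt (habsI (hMa' t htm) haM hxm) t htm τ hτI)
      have c2 : ‖∫ x in b..ξb t, (e (x, t) - e (x, τ))‖ ≤ (C * |t - τ|) * |ξb t - b| :=
        intervalIntegral.norm_integral_le_of_norm_le_const
          (fun x hxm => hLt (habsI hbM (hMb' t htm) hxm) t htm τ hτI)
      have la : |a - ξa t| ≤ Cα * |t - τ| := by
        have := hLipa t htm τ hτI
        rw [Real.norm_eq_abs, Real.norm_eq_abs] at this
        rwa [abs_sub_comm τ t] at this
      have lb : |ξb t - b| ≤ Cα * |t - τ| := by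
        have := hLipb τ hτI t htm
        rwa [Real.norm_eq_abs, Real.norm_eq_abs] at this
      rw [hform t htm]
      have hCt : 0 ≤ C * |t - τ| := mul_nonneg hC0 (abs_nonneg _)
      calc ‖(∫ x in ξa t..a, (e (x, t) - e (x, τ))) + ∫ x in b..ξb t, (e (x, t) - e (x, τ))‖
          ≤ (C * |t - τ|) * |a - ξa t| + (C * |t - τ|) * |ξb t - b| :=
            le_trans (norm_add_le _ _) (add_le_add c1 c2)
        _ ≤ (C * |t - τ|) * (Cα * |t - τ|) + (C * |t - τ|) * (Cα * |t - τ|) :=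
            add_le_add (mul_le_mul_of_nonneg_left la hCt) (mul_le_mul_of_nonneg_left lb hCt)
        _ = 2 * C * Cα * (|t - τ| * |t - τ|) := by ring
    have hR : HasDerivAt R 0 τ := by
      rw [hasDerivAt_iff_isLittleO]
      simp only [hRτ, smul_zero, sub_zero]
      have big : (fun t => R t) =O[nhds τ] fun t => (t - τ) * (t - τ) := by
        rw [Asymptotics.isBigO_iff]
        refine ⟨2 * C * Cα, ?_⟩
        filter_upwards [Icc_mem_nhds hτ.1 hτ.2] with t htm
        rw [Real.norm_eq_abs ((t - τ) * (t - τ)), abs_mul]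
        exact hRb t htm
      have small : (fun t : ℝ => (t - τ) * (t - τ)) =o[nhds τ] fun t => t - τ := by
        have h1 : (fun t : ℝ => t - τ) =o[nhds τ] (fun _ => (1 : ℝ)) := by
          rw [Asymptotics.isLittleO_one_iff]
          have : Filter.Tendsto (fun t : ℝ => t - τ) (nhds τ) (nhds (τ - τ)) :=
            (continuous_id.sub continuous_const).tendsto τ
          simpa using this
        simpa using (Asymptotics.isBigO_refl (fun t : ℝ => t - τ) (nhds τ)).mul_isLittleO h1
      exact big.trans_isLittleO small
    have hsum : HasDerivAt (fun t => G t + R t) (0 + 0) τ := hG.add hR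
    have heq : (fun t => G t + R t) = F := funext fun t => by
      simp only [hRdef]; ring
    rw [heq] at hsum
    simpa using hsum
  -- conclude by monotonicity in both directions
  have hFd : DifferentiableOn ℝ F (interior (Icc t₀ t₁)) := by
    rw [interior_Icc]
    exact fun t htm => (hFderiv t htm).differentiableAt.differentiableWithinAt
  have h0 : ∀ t ∈ interior (Icc t₀ t₁), deriv F t = 0 := by
    rw [interior_Icc]
    exact fun t htm => (hFderiv t htm).deriv
  have hmono : MonotoneOn F (Icc t₀ t₁) :=
    monotoneOn_of_deriv_nonneg (convex_Icc _ _) hFcont hFd (fun t htm => (h0 t htm).ge)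
  have hanti : AntitoneOn F (Icc t₀ t₁) :=
    antitoneOn_of_deriv_nonpos (convex_Icc _ _) hFcont hFd (fun t htm => (h0 t htm).le)
  have : F t₁ = F t₀ := le_antisymm (hanti ht₀ ht₁ ht) (hmono ht₀ ht₁ ht)
  rw [← hξat, ← hξbt]
  exact this
end
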